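/- arXiv:2503.07132 — 13 statements merged into one kernel-verified Lean document; each statement's English description precedes it below -/
import Mathlib

section
/- For all non-negative integers n, q, t, s, p with n ≥ s and q ≥ 1, and every sequence x ∈ A_q^n, the size of the t-insertion s-deletion p-substitution ball satisfies |B_{t,s,p}(x)| ≥ Σ_{i=0}^{t+p} C(n+t-s, i) (q-1)^i. -/
/-- The subsequence of `x` indexed by the finite set `S` of size `m`,
entries taken in increasing index order. -/
def subseqOf {q n m : ℕ} (x : Fin n → Fin q) (S : Finset (Fin n)) (h : S.card = m) :
    Fin m → Fin q :=
  fun i => x ((S.orderIsoOfFin h i : Fin n))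

/-- The insertion/deletion/substitution ball of `x ∈ A_q^n`: all sequences `z` of
length `m` such that some subsequence of `x` of length `n - s` is within Hamming
distance `p` of some subsequence of `z` of the same length.  For the `t`-insertion
`s`-deletion `p`-substitution ball `B_{t,s,p}(x)`, take `m = n + t - s`. -/
def idsBall (q s p : ℕ) {n m : ℕ} (x : Fin n → Fin q) : Set (Fin m → Fin q) :=
  { z | ∃ (S1 : Finset (Fin n)) (S2 : Finset (Fin m))
      (h1 : S1.card = n - s) (h2 : S2.card = n - s),
      hammingDist (subseqOf x S1 h1) (subseqOf z S2 h2) ≤ p }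


section IdsBallAux

open Finset


lemma card_support_fiber {m q : ℕ} [NeZero q] (T : Finset (Fin m)) :
    ((univ : Finset (Fin m → Fin q)).filter
      (fun w => univ.filter (fun l => w l ≠ 0) = T)).card = (q - 1) ^ T.card := by
  have : ((univ : Finset (Fin m → Fin q)).filter
      (fun w => univ.filter (fun l => w l ≠ 0) = T)) =
      Fintype.piFinset (fun j => if j ∈ T then univ.filter (fun v : Fin q => v ≠ 0) else {0}) := by
    ext w
    simp only [mem_filter, mem_univ, true_and, Fintype.mem_piFinset]
    constructor
    · intro h j
      by_cases hj : j ∈ T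
      · simp only [hj, if_true, mem_filter, mem_univ, true_and]
        intro h0
        rw [← h] at hj
        simp [h0] at hj
      · simp only [hj, if_false, mem_singleton]
        by_contra h0
        exact hj (h ▸ (by simp [h0]))
    · intro h
      ext j
      simp only [mem_filter, mem_univ, true_and]
      have := h j
      by_cases hj : j ∈ T <;> simp only [hj, if_true, if_false] at this <;>
        simp_all [Finset.mem_singleton]
  rw [this, Fintype.card_piFinset]
  have : ∀ j : Fin m, (if j ∈ T then univ.filter (fun v : Fin q => v ≠ 0) else {0}).card
      = if j ∈ T then q - 1 else 1 := by
    intro j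
    by_cases hj : j ∈ T <;> simp [hj, Finset.filter_ne', Finset.card_erase_of_mem]
  simp_rw [this]
  rw [Finset.prod_ite_mem, Finset.univ_inter, Finset.prod_const]

lemma card_hamming_ball (m q r : ℕ) [NeZero q] :
    ((univ : Finset (Fin m → Fin q)).filter
      (fun w => (univ.filter (fun l => w l ≠ 0)).card ≤ r)).card
      = ∑ i ∈ Finset.range (r + 1), m.choose i * (q - 1) ^ i := by
  rw [Finset.card_eq_sum_card_fiberwise
    (f := fun w : Fin m → Fin q => (univ.filter (fun l => w l ≠ 0)).card)
    (t := Finset.range (r + 1))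
    (fun w hw => by simp only [mem_coe, mem_filter] at hw; simp [Nat.lt_succ_iff, hw.2])]
  refine Finset.sum_congr rfl (fun i hi => ?_)
  rw [Finset.filter_filter]
  have h1 : ((univ : Finset (Fin m → Fin q)).filter
      (fun w => (univ.filter (fun l => w l ≠ 0)).card ≤ r ∧
        (univ.filter (fun l => w l ≠ 0)).card = i)) =
      (univ : Finset (Fin m → Fin q)).filter
      (fun w => (univ.filter (fun l => w l ≠ 0)).card = i) := by
    apply Finset.filter_congr
    intro w _
    simp only [Finset.mem_range, Nat.lt_succ_iff] at hi
    constructor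
    · exact fun h => h.2
    · exact fun h => ⟨h ▸ hi, h⟩
  rw [h1]
  rw [Finset.card_eq_sum_card_fiberwise
    (f := fun w : Fin m → Fin q => univ.filter (fun l => w l ≠ 0))
    (t := Finset.univ.powersetCard i)
    (fun w hw => by
      simp only [mem_coe, mem_filter] at hw
      simp [Finset.mem_powersetCard, hw.2])]
  have h2 : ∀ T ∈ Finset.univ.powersetCard i,
      (((univ : Finset (Fin m → Fin q)).filter
        (fun w => (univ.filter (fun l => w l ≠ 0)).card = i)).filter
        (fun w => univ.filter (fun l => w l ≠ 0) = T)).card = (q-1)^i := by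
    intro T hT
    simp only [Finset.mem_powersetCard] at hT
    rw [Finset.filter_filter]
    have : ((univ : Finset (Fin m → Fin q)).filter
        (fun w => (univ.filter (fun l => w l ≠ 0)).card = i ∧
          univ.filter (fun l => w l ≠ 0) = T)) =
        ((univ : Finset (Fin m → Fin q)).filter
        (fun w => univ.filter (fun l => w l ≠ 0) = T)) := by
      apply Finset.filter_congr
      intro w _
      exact ⟨fun h => h.2, fun h => ⟨h ▸ hT.2, h⟩⟩
    rw [this, card_support_fiber, hT.2]
  rw [Finset.sum_congr rfl h2, Finset.sum_const, Finset.card_powersetCard, Finset.card_univ,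
    Fintype.card_fin, smul_eq_mul]


variable {m q : ℕ} [NeZero q]

def nltCount (w : Fin m → Fin q) (i : Fin m) : ℕ :=
  (univ.filter (fun l => l < i ∧ w l ≠ 0)).card

def advP (t : ℕ) (w : Fin m → Fin q) (i : Fin m) : Prop :=
  w i = 0 ∨ t ≤ nltCount w i

instance (t : ℕ) (w : Fin m → Fin q) : DecidablePred (advP t w) := fun _ => by
  unfold advP; infer_instance

def ptr (t : ℕ) (w : Fin m → Fin q) (i : Fin m) : ℕ :=
  (univ.filter (fun l => l < i ∧ advP t w l)).card

def phi (t : ℕ) (x'' : ℕ → Fin q) (w : Fin m → Fin q) : Fin m → Fin q :=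
  fun i => x'' (ptr t w i) + w i

def base (n : ℕ) (q : ℕ) [NeZero q] (x : Fin n → Fin q) : ℕ → Fin q :=
  fun j => if h : j < n then x ⟨j, h⟩ else 0

lemma nltCount_lt_nltCount {w : Fin m → Fin q} {l l' : Fin m}
    (hll : l < l') (hl : w l ≠ 0) : nltCount w l < nltCount w l' := by
  apply Finset.card_lt_card
  rw [Finset.ssubset_iff_of_subset]
  · exact ⟨l, by simp [hll, hl], by simp⟩
  · intro a ha
    simp only [mem_filter] at ha ⊢
    exact ⟨ha.1, lt_trans ha.2.1 hll, ha.2.2⟩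

lemma nltCount_injOn {w : Fin m → Fin q} {S : Finset (Fin m)}
    (hS : ∀ l ∈ S, w l ≠ 0) : Set.InjOn (nltCount w) S := by
  intro a ha b hb hab
  by_contra hne
  rcases lt_or_gt_of_ne hne with h | h
  · exact absurd hab (Nat.ne_of_lt (nltCount_lt_nltCount h (hS a ha)))
  · exact absurd hab.symm (Nat.ne_of_lt (nltCount_lt_nltCount h (hS b hb)))

lemma phi_mem_idsBall (n q t s p : ℕ) [NeZero q] (hsn : s ≤ n)
    (x : Fin n → Fin q) (w : Fin (n + t - s) → Fin q)
    (hw : (univ.filter (fun l => w l ≠ 0)).card ≤ t + p) :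
    phi t (base n q x) w ∈ idsBall q s p x := by
  have hkn : n - s ≤ n := Nat.sub_le n s
  -- S1 : the first n - s coordinates of Fin n
  set S1 : Finset (Fin n) := Finset.image (Fin.castLE hkn) univ with hS1
  have h1 : S1.card = n - s := by
    rw [hS1, Finset.card_image_of_injective _ (Fin.castLE_injective hkn), card_univ,
      Fintype.card_fin]
  have hS1e : ∀ j : Fin (n - s), S1.orderEmbOfFin h1 j = Fin.castLE hkn j := by
    intro j
    rw [← Finset.orderEmbOfFin_unique h1 (fun i => Finset.mem_image_of_mem _ (mem_univ i))
      (Fin.strictMono_castLE hkn)]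
  -- the advance set
  set A : Finset (Fin (n + t - s)) := univ.filter (advP t w) with hA
  have hcardA : A.card + (univ.filter (fun l => ¬ advP t w l)).card = n + t - s := by
    rw [hA, Finset.card_filter_add_card_filter_not, card_univ, Fintype.card_fin]
  have hnonadv : (univ.filter (fun l => ¬ advP t w l)).card ≤ t := by
    have hcc : (univ.filter (fun l => ¬ advP t w l)).card ≤ (Finset.range t).card := by
      apply Finset.card_le_card_of_injOn (nltCount w)
      · intro l hl
        simp only [mem_coe, mem_filter, advP, not_or, not_le] at hl
        simp [hl.2.2]
      · apply nltCount_injOn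
        intro l hl
        simp only [mem_filter, advP, not_or] at hl
        exact hl.2.1
    simpa using hcc
  -- the substitution set
  set subs : Finset (Fin (n + t - s)) := univ.filter (fun l => w l ≠ 0 ∧ t ≤ nltCount w l) with hsubs
  have hsubsp : subs.card ≤ p := by
    have hcb : ∀ l : Fin (n + t - s), w l ≠ 0 →
        nltCount w l < (univ.filter (fun l => w l ≠ 0)).card := by
      intro l hl
      apply Finset.card_lt_card
      rw [Finset.ssubset_iff_of_subset]
      · exact ⟨l, by simp [hl], by simp⟩
      · intro a ha
        simp only [mem_filter] at ha ⊢
        exact ⟨ha.1, ha.2.2⟩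
    calc subs.card ≤ (Finset.Ico t (univ.filter (fun l => w l ≠ 0)).card).card := by
          apply Finset.card_le_card_of_injOn (nltCount w)
          · intro l hl
            simp only [hsubs, mem_coe, mem_filter] at hl
            simp only [mem_coe, Finset.mem_Ico]
            exact ⟨hl.2.2, hcb l hl.2.1⟩
          · apply nltCount_injOn
            intro l hl
            simp only [hsubs, mem_filter] at hl
            exact hl.2.1
      _ ≤ p := by rw [Nat.card_Ico]; omega
  have hk' : n - s ≤ A.card := by omega
  -- S2 : the first n - s advance positions
  set f : Fin (n - s) → Fin (n + t - s) := fun j => A.orderEmbOfFin rfl (Fin.castLE hk' j) with hf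
  have hfmono : StrictMono f :=
    (A.orderEmbOfFin rfl).strictMono.comp (Fin.strictMono_castLE hk')
  set S2 : Finset (Fin (n + t - s)) := Finset.image f univ with hS2
  have h2 : S2.card = n - s := by
    rw [hS2, Finset.card_image_of_injective _ hfmono.injective, card_univ, Fintype.card_fin]
  have hS2e : ∀ j : Fin (n - s), S2.orderEmbOfFin h2 j = f j := by
    intro j
    rw [← Finset.orderEmbOfFin_unique h2 (fun i => Finset.mem_image_of_mem _ (mem_univ i))
      hfmono]
  have hfA : ∀ j, f j ∈ A := fun j => Finset.orderEmbOfFin_mem A rfl _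
  -- pointer value at the j-th advance position
  have hptr : ∀ j : Fin (n - s), ptr t w (f j) = j := by
    intro j
    have e1 : univ.filter (fun l => l < f j ∧ advP t w l) = A.filter (fun l => l < f j) := by
      ext a
      simp only [hA, mem_filter, mem_univ, true_and]
      tauto
    have e2 : A.filter (fun l => l < f j) =
        Finset.image (A.orderEmbOfFin rfl) (univ.filter (fun a => a < Fin.castLE hk' j)) := by
      ext l
      simp only [mem_filter, Finset.mem_image, mem_univ, true_and]
      constructor
      · rintro ⟨hlA, hlt⟩
        refine ⟨(A.orderIsoOfFin rfl).symm ⟨l, hlA⟩, ?_, ?_⟩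
        · rw [← (A.orderEmbOfFin rfl).lt_iff_lt]
          have : A.orderEmbOfFin rfl ((A.orderIsoOfFin rfl).symm ⟨l, hlA⟩) = l := by
            rw [← Finset.coe_orderIsoOfFin_apply]
            simp
          rw [this]
          exact hlt
        · rw [← Finset.coe_orderIsoOfFin_apply]
          simp
      · rintro ⟨a, ha, rfl⟩
        exact ⟨Finset.orderEmbOfFin_mem A rfl a, (A.orderEmbOfFin rfl).strictMono ha⟩
    have e3 : (univ.filter (fun a : Fin A.card => a < Fin.castLE hk' j)).card = j := by
      have : univ.filter (fun a : Fin A.card => a < Fin.castLE hk' j) =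
          Finset.Iio (Fin.castLE hk' j) := by
        ext a; simp
      rw [this, Fin.card_Iio]
      simp
    rw [ptr, e1, e2, Finset.card_image_of_injective _ (A.orderEmbOfFin rfl).injective, e3]
  -- assemble
  refine ⟨S1, S2, h1, h2, ?_⟩
  have hsub : univ.filter (fun j : Fin (n - s) =>
      subseqOf x S1 h1 j ≠ subseqOf (phi t (base n q x) w) S2 h2 j) ⊆
      univ.filter (fun j => f j ∈ subs) := by
    intro j hj
    simp only [mem_filter, mem_univ, true_and] at hj ⊢
    have hx1 : subseqOf x S1 h1 j = base n q x j := by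
      rw [subseqOf, Finset.coe_orderIsoOfFin_apply, hS1e, base]
      have hjn : (j : ℕ) < n := lt_of_lt_of_le j.2 hkn
      rw [dif_pos hjn]
      congr 1
    have hx2 : subseqOf (phi t (base n q x) w) S2 h2 j = base n q x j + w (f j) := by
      rw [subseqOf, Finset.coe_orderIsoOfFin_apply, hS2e, phi, hptr]
    rw [hx1, hx2] at hj
    have hwj : w (f j) ≠ 0 := by
      intro h0
      rw [h0, add_zero] at hj
      exact hj rfl
    have := hfA j
    simp only [hA, mem_filter, mem_univ, true_and, advP] at this
    simp only [hsubs, mem_filter, mem_univ, true_and]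
    rcases this with h | h
    · exact absurd h hwj
    · exact ⟨hwj, h⟩
  calc hammingDist (subseqOf x S1 h1) (subseqOf (phi t (base n q x) w) S2 h2)
      ≤ (univ.filter (fun j : Fin (n - s) => f j ∈ subs)).card :=
        Finset.card_le_card hsub
    _ ≤ subs.card := by
        apply Finset.card_le_card_of_injOn f
        · intro j hj; simpa using hj
        · exact fun a _ b _ hab => hfmono.injective hab
    _ ≤ p := hsubsp

lemma nltCount_congr {m q : ℕ} [NeZero q] {w w' : Fin m → Fin q} {i : Fin m}
    (h : ∀ l, l < i → w l = w' l) {l : Fin m} (hl : l ≤ i) :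
    nltCount w l = nltCount w' l := by
  unfold nltCount
  congr 1
  apply Finset.filter_congr
  intro a _
  constructor <;> rintro ⟨h1, h2⟩ <;> refine ⟨h1, ?_⟩
  · rw [← h a (lt_of_lt_of_le h1 hl)]; exact h2
  · rw [h a (lt_of_lt_of_le h1 hl)]; exact h2

lemma ptr_congr {m q t : ℕ} [NeZero q] {w w' : Fin m → Fin q} {i : Fin m}
    (h : ∀ l, l < i → w l = w' l) : ptr t w i = ptr t w' i := by
  unfold ptr
  congr 1
  apply Finset.filter_congr
  intro a _
  have key : ∀ l : Fin m, l < i → (advP t w l ↔ advP t w' l) := by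
    intro l hl
    unfold advP
    rw [h l hl, nltCount_congr h (le_of_lt hl)]
  constructor <;> rintro ⟨h1, h2⟩ <;> refine ⟨h1, ?_⟩
  · exact (key a h1).mp h2
  · exact (key a h1).mpr h2

lemma phi_inj {m q : ℕ} [NeZero q] (t : ℕ) (x'' : ℕ → Fin q) :
    Function.Injective (phi (m := m) t x'') := by
  intro w w' h
  by_contra hne
  have hd : (Finset.univ.filter (fun l => w l ≠ w' l)).Nonempty := by
    rcases Function.ne_iff.mp hne with ⟨i, hi⟩
    exact ⟨i, by simp [hi]⟩
  set i := (Finset.univ.filter (fun l => w l ≠ w' l)).min' hd with hidef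
  have hi : w i ≠ w' i := by
    have := Finset.min'_mem _ hd
    rw [← hidef] at this
    simpa using this
  have hlt : ∀ l, l < i → w l = w' l := by
    intro l hl
    by_contra hne'
    exact absurd (Finset.min'_le _ l (by simp [hne'])) (not_le.mpr hl)
  have hp : ptr t w i = ptr t w' i := ptr_congr hlt
  have := congrFun h i
  unfold phi at this
  rw [hp] at this
  exact hi (add_left_cancel this)

end IdsBallAux

/-- lower bound on the size of the
`t`-insertion `s`-deletion `p`-substitution ball. -/
theorem min_size_idsBall (n q t s p : ℕ) (hsn : s ≤ n) (hq : 1 ≤ q)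
    (x : Fin n → Fin q) :
    (idsBall q s p x : Set (Fin (n + t - s) → Fin q)).ncard ≥
      ∑ i ∈ Finset.range (t + p + 1), (n + t - s).choose i * (q - 1) ^ i := by
  haveI : NeZero q := ⟨by omega⟩
  classical
  set D := (Finset.univ : Finset (Fin (n + t - s) → Fin q)).filter
    (fun w => (Finset.univ.filter (fun l => w l ≠ 0)).card ≤ t + p) with hD
  have hcount : D.card = ∑ i ∈ Finset.range (t + p + 1), (n + t - s).choose i * (q - 1) ^ i :=
    card_hamming_ball (n + t - s) q (t + p)
  have himg : (D.image (phi t (base n q x))).card = D.card :=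
    Finset.card_image_of_injective _ (phi_inj t _)
  have hsubset : ↑(D.image (phi t (base n q x))) ⊆
      (idsBall q s p x : Set (Fin (n + t - s) → Fin q)) := by
    intro z hz
    rw [Finset.mem_coe, Finset.mem_image] at hz
    rcases hz with ⟨w, hwD, rfl⟩
    rw [hD, Finset.mem_filter] at hwD
    exact phi_mem_idsBall n q t s p hsn x w hwD.2
  have hle := Set.ncard_le_ncard hsubset (Set.toFinite _)
  rw [Set.ncard_coe_finset, himg, hcount] at hle
  exact hle
end

section
/- For all non-negative integers n, q, t, s, p with n ≥ s and q ≥ 1, the all-zero sequence 0^n ∈ A_q^n satisfies |B_{t,s,p}(0^n)| = Σ_{i=0}^{t+p} C(n+t-s, i) (q-1)^i. -/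
open Finset

variable {q m : ℕ}

lemma dist_subseq (hq : 1 ≤ q) {k : ℕ} (z : Fin m → Fin q) (S : Finset (Fin m))
    (h : S.card = k) :
    hammingDist (fun _ : Fin k => (⟨0, hq⟩ : Fin q)) (subseqOf z S h) =
      (S.filter fun j => z j ≠ ⟨0, hq⟩).card := by
  unfold hammingDist subseqOf
  apply Finset.card_bij (fun i _ => (S.orderIsoOfFin h i : Fin m))
  · intro i hi
    simp only [mem_filter, mem_univ, true_and] at hi ⊢
    exact ⟨(S.orderIsoOfFin h i).2, fun he => hi he.symm⟩
  · intro a ha b hb hab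
    exact (S.orderIsoOfFin h).injective (Subtype.ext hab)
  · intro b hb
    simp only [mem_filter] at hb
    refine ⟨(S.orderIsoOfFin h).symm ⟨b, hb.1⟩, ?_, by simp⟩
    simp only [mem_filter, mem_univ, true_and, ne_eq]
    simpa [eq_comm] using hb.2


def suppEquiv (hq : 1 ≤ q) (S : Finset (Fin m)) :
    {z : Fin m → Fin q // ∀ j, z j ≠ ⟨0, hq⟩ ↔ j ∈ S} ≃
      (↥S → {a : Fin q // a ≠ ⟨0, hq⟩}) where
  toFun z := fun j => ⟨z.1 j, (z.2 j).mpr j.2⟩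
  invFun f := ⟨fun j => if h : j ∈ S then (f ⟨j, h⟩).1 else ⟨0, hq⟩, by
    intro j
    by_cases h : j ∈ S
    · simpa [h] using (f ⟨j, h⟩).2
    · simp [h]⟩
  left_inv z := by
    ext j
    by_cases h : j ∈ S
    · simp [h]
    · have h0 : z.1 j = ⟨0, hq⟩ := not_not.mp (fun hn => h ((z.2 j).mp hn))
      simp [h, h0]
  right_inv f := by
    ext j
    simp [j.2]

lemma card_supp_eq (hq : 1 ≤ q) (S : Finset (Fin m)) :
    (univ.filter fun z : Fin m → Fin q =>
      (univ.filter fun j => z j ≠ ⟨0, hq⟩) = S).card = (q - 1) ^ S.card := by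
  have h1 : Fintype.card {a : Fin q // a ≠ (⟨0, hq⟩ : Fin q)} = q - 1 := by
    simp [Fintype.card_subtype_compl]
  have : (univ.filter fun z : Fin m → Fin q =>
      (univ.filter fun j => z j ≠ ⟨0, hq⟩) = S) =
      univ.filter fun z : Fin m → Fin q => ∀ j, z j ≠ ⟨0, hq⟩ ↔ j ∈ S := by
    apply filter_congr
    intro z _
    constructor
    · intro h j
      rw [← h]; simp
    · intro h
      ext j
      simp [h j]
  rw [this, ← Fintype.card_subtype, Fintype.card_congr (suppEquiv hq S),
    Fintype.card_fun, h1, Fintype.card_coe]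

lemma card_wt_eq (hq : 1 ≤ q) (i : ℕ) :
    (univ.filter fun z : Fin m → Fin q =>
      (univ.filter fun j => z j ≠ ⟨0, hq⟩).card = i).card = m.choose i * (q - 1) ^ i := by
  rw [Finset.card_eq_sum_card_fiberwise (f := fun z : Fin m → Fin q =>
      univ.filter fun j => z j ≠ ⟨0, hq⟩) (t := powersetCard i univ)
      (fun z hz => by simp only [Finset.mem_coe, mem_filter, mem_univ, true_and] at hz
                      simp [mem_powersetCard_univ, hz])]
  have : ∀ S ∈ powersetCard i (univ : Finset (Fin m)),
      ((univ.filter fun z : Fin m → Fin q =>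
        (univ.filter fun j => z j ≠ ⟨0, hq⟩).card = i).filter
        (fun z => (univ.filter fun j => z j ≠ ⟨0, hq⟩) = S)).card = (q - 1) ^ i := by
    intro S hS
    rw [mem_powersetCard_univ] at hS
    rw [filter_filter]
    have : (univ.filter fun z : Fin m → Fin q =>
        (univ.filter fun j => z j ≠ ⟨0, hq⟩).card = i ∧
        (univ.filter fun j => z j ≠ ⟨0, hq⟩) = S) =
        univ.filter fun z : Fin m → Fin q =>
          (univ.filter fun j => z j ≠ ⟨0, hq⟩) = S := by
      apply filter_congr
      intro z _
      simp only [and_iff_right_iff_imp]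
      intro h; rw [h, hS]
    rw [this, card_supp_eq hq S, hS]
  rw [Finset.sum_congr rfl this, Finset.sum_const, card_powersetCard, card_univ,
    Fintype.card_fin, smul_eq_mul]

lemma card_wt_le (hq : 1 ≤ q) (r : ℕ) :
    (univ.filter fun z : Fin m → Fin q =>
      (univ.filter fun j => z j ≠ ⟨0, hq⟩).card ≤ r).card =
      ∑ i ∈ Finset.range (r + 1), m.choose i * (q - 1) ^ i := by
  rw [Finset.card_eq_sum_card_fiberwise (f := fun z : Fin m → Fin q =>
      (univ.filter fun j => z j ≠ ⟨0, hq⟩).card) (t := Finset.range (r + 1))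
      (fun z hz => by simp only [Finset.mem_coe, mem_filter, mem_univ, true_and] at hz
                      simp [Nat.lt_succ_iff, hz])]
  refine Finset.sum_congr rfl fun i hi => ?_
  rw [mem_range, Nat.lt_succ_iff] at hi
  rw [filter_filter]
  have : (univ.filter fun z : Fin m → Fin q =>
      (univ.filter fun j => z j ≠ ⟨0, hq⟩).card ≤ r ∧
      (univ.filter fun j => z j ≠ ⟨0, hq⟩).card = i) =
      univ.filter fun z : Fin m → Fin q =>
        (univ.filter fun j => z j ≠ ⟨0, hq⟩).card = i := by
    apply filter_congr
    intro z _
    simp only [and_iff_right_iff_imp]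
    intro h; omega
  rw [this, card_wt_eq hq i]

/-- size of the ball of the all-zero sequence. -/
theorem idsBall_zero_size (n q t s p : ℕ) (hsn : s ≤ n) (hq : 1 ≤ q) :
    (idsBall q s p (fun _ : Fin n => (⟨0, hq⟩ : Fin q)) :
        Set (Fin (n + t - s) → Fin q)).ncard =
      ∑ i ∈ Finset.range (t + p + 1), (n + t - s).choose i * (q - 1) ^ i := by
  set m := n + t - s with hm
  have hball : (idsBall q s p (fun _ : Fin n => (⟨0, hq⟩ : Fin q)) :
      Set (Fin m → Fin q)) =
      ↑(univ.filter fun z : Fin m → Fin q =>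
        (univ.filter fun j => z j ≠ ⟨0, hq⟩).card ≤ t + p) := by
    ext z
    simp only [idsBall, Set.mem_setOf_eq, Finset.coe_filter, mem_univ, true_and,
      Set.mem_setOf_eq]
    constructor
    · rintro ⟨S1, S2, h1, h2, hd⟩
      have hx : subseqOf (fun _ : Fin n => (⟨0, hq⟩ : Fin q)) S1 h1 =
          fun _ : Fin (n - s) => (⟨0, hq⟩ : Fin q) := rfl
      rw [hx, dist_subseq hq z S2 h2] at hd
      -- weight outside S2 is at most t
      have hout : ((univ \ S2).filter fun j => z j ≠ ⟨0, hq⟩).card ≤ t := by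
        calc ((univ \ S2).filter fun j => z j ≠ ⟨0, hq⟩).card ≤ (univ \ S2).card :=
              card_filter_le _ _
          _ = m - (n - s) := by rw [card_sdiff_of_subset (subset_univ _), card_univ,
              Fintype.card_fin, h2]
          _ ≤ t := by omega
      have hsplit : (univ.filter fun j => z j ≠ ⟨0, hq⟩).card =
          (S2.filter fun j => z j ≠ ⟨0, hq⟩).card +
          ((univ \ S2).filter fun j => z j ≠ ⟨0, hq⟩).card := by
        rw [← card_union_of_disjoint, ← filter_union, union_sdiff_of_subset (subset_univ _)]
        exact disjoint_filter_filter (disjoint_sdiff)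
      omega
    · intro hz
      obtain ⟨S1, _, h1⟩ := Finset.exists_subset_card_eq
        (show n - s ≤ (univ : Finset (Fin n)).card by
          rw [card_univ, Fintype.card_fin]; omega)
      set N := univ.filter fun j => z j ≠ (⟨0, hq⟩ : Fin q) with hN
      obtain ⟨T, hTN, hT⟩ := Finset.exists_subset_card_eq
        (show min N.card t ≤ N.card from min_le_left _ _)
      obtain ⟨S2, hS2T, h2⟩ := Finset.exists_subset_card_eq
        (show n - s ≤ (univ \ T).card by
          rw [card_sdiff_of_subset (subset_univ _), card_univ, Fintype.card_fin, hT]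
          omega)
      refine ⟨S1, S2, h1, h2, ?_⟩
      have hx : subseqOf (fun _ : Fin n => (⟨0, hq⟩ : Fin q)) S1 h1 =
          fun _ : Fin (n - s) => (⟨0, hq⟩ : Fin q) := rfl
      rw [hx, dist_subseq hq z S2 h2]
      calc (S2.filter fun j => z j ≠ ⟨0, hq⟩).card ≤ (N \ T).card := by
            apply card_le_card
            intro j hj
            rw [mem_filter] at hj
            rw [mem_sdiff]
            exact ⟨mem_filter.mpr ⟨mem_univ _, hj.2⟩,
              fun hjT => (mem_sdiff.mp (hS2T hj.1)).2 hjT⟩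
        _ = N.card - min N.card t := by rw [card_sdiff_of_subset hTN, hT]
        _ ≤ p := by omega
  rw [hball, Set.ncard_coe_finset, card_wt_le hq (t + p)]
end

section
/- For all non-negative integers n, q, t, s, p with n ≥ s, q ≥ 1, and p < n - s, the ball B_{t,s,p}(0^n) equals the set of all sequences y ∈ A_q^{n+t-s} whose number of nonzero entries is at most t + p. -/
lemma hd_aux {q m k : ℕ} (c : Fin q) (z : Fin m → Fin q) (S : Finset (Fin m))
    (h : S.card = k) :
    hammingDist (fun _ : Fin k => c) (subseqOf z S h) =
      (S.filter (fun j => z j ≠ c)).card := by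
  classical
  rw [hammingDist]
  refine Finset.card_bij (fun a _ => ((S.orderIsoOfFin h a : Fin m))) ?_ ?_ ?_
  · intro a ha
    simp only [Finset.mem_filter, Finset.mem_univ, true_and, subseqOf] at ha ⊢
    exact ⟨(S.orderIsoOfFin h a).2, Ne.symm (Finset.mem_filter.mp ha).2⟩
  · intro a _ b _ hab
    exact (S.orderIsoOfFin h).injective (Subtype.ext hab)
  · intro b hb
    simp only [Finset.mem_filter] at hb
    refine ⟨(S.orderIsoOfFin h).symm ⟨b, hb.1⟩, ?_, ?_⟩
    · simp only [Finset.mem_filter, Finset.mem_univ, true_and, subseqOf,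
        OrderIso.apply_symm_apply]
      refine Finset.mem_filter.mpr ⟨Finset.mem_univ _, fun hc => hb.2 ?_⟩
      simpa [subseqOf] using hc.symm
    · simp [OrderIso.apply_symm_apply]

/-- for `p < n - s`, the ball of the all-zero sequence consists of
the sequences of length `n + t - s` with at most `t + p` nonzero entries. -/
theorem idsBall_zero_eq (n q t s p : ℕ) (hsn : s ≤ n) (hq : 1 ≤ q) (hp : p < n - s) :
    (idsBall q s p (fun _ : Fin n => (⟨0, hq⟩ : Fin q)) :
        Set (Fin (n + t - s) → Fin q)) =
      { y | (Finset.univ.filter (fun i => y i ≠ (⟨0, hq⟩ : Fin q))).card ≤ t + p } := by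
  classical
  set c : Fin q := ⟨0, hq⟩
  have hm : (Fintype.card (Fin (n + t - s))) = n + t - s := Fintype.card_fin _
  ext z
  constructor
  · rintro ⟨S1, S2, h1, h2, hd⟩
    have hdeq : hammingDist (subseqOf (fun _ : Fin n => c) S1 h1) (subseqOf z S2 h2)
        = (S2.filter (fun j => z j ≠ c)).card := hd_aux c z S2 h2
    rw [hdeq] at hd
    have hsplit : (Finset.univ.filter (fun i => z i ≠ c)).card
        ≤ (S2.filter (fun j => z j ≠ c)).card + S2ᶜ.card := by
      have hsub : Finset.univ.filter (fun i => z i ≠ c)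
          ⊆ (S2.filter (fun j => z j ≠ c)) ∪ S2ᶜ := by
        intro a ha
        simp only [Finset.mem_filter, Finset.mem_univ, true_and] at ha
        by_cases haS : a ∈ S2
        · exact Finset.mem_union_left _ (Finset.mem_filter.mpr ⟨haS, ha⟩)
        · exact Finset.mem_union_right _ (Finset.mem_compl.mpr haS)
      exact le_trans (Finset.card_le_card hsub) (Finset.card_union_le _ _)
    have hcompl : S2ᶜ.card = (n + t - s) - (n - s) := by
      rw [Finset.card_compl, h2, hm]
    simp only [Set.mem_setOf_eq]
    omega
  · intro hz
    simp only [Set.mem_setOf_eq] at hz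
    obtain ⟨S1, _, h1⟩ := Finset.exists_subset_card_eq
      (show n - s ≤ (Finset.univ : Finset (Fin n)).card by
        rw [Finset.card_univ, Fintype.card_fin]; omega)
    set Z : Finset (Fin (n + t - s)) := Finset.univ.filter (fun i => z i = c) with hZdef
    have hZcompl : Zᶜ = Finset.univ.filter (fun i => z i ≠ c) := by
      ext a; simp [hZdef]
    have hZcard : Z.card + (Finset.univ.filter (fun i => z i ≠ c)).card = n + t - s := by
      have h' := Finset.card_add_card_compl Z
      rw [hZcompl, hm] at h'
      exact h'
    by_cases hcase : n - s ≤ Z.card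
    · obtain ⟨S2, hS2Z, h2⟩ := Finset.exists_subset_card_eq hcase
      refine ⟨S1, S2, h1, h2, ?_⟩
      have hdeq : hammingDist (subseqOf (fun _ : Fin n => c) S1 h1) (subseqOf z S2 h2)
          = (S2.filter (fun j => z j ≠ c)).card := hd_aux c z S2 h2
      rw [hdeq]
      have : S2.filter (fun j => z j ≠ c) = ∅ := by
        rw [Finset.filter_eq_empty_iff]
        intro a ha
        have := hS2Z ha
        simp only [hZdef, Finset.mem_filter] at this
        simpa using this.2
      simp [this]
    · obtain ⟨S2, hZS2, h2⟩ := Finset.exists_superset_card_eq (le_of_lt (not_le.mp hcase))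
        (by rw [hm]; omega)
      refine ⟨S1, S2, h1, h2, ?_⟩
      have hdeq : hammingDist (subseqOf (fun _ : Fin n => c) S1 h1) (subseqOf z S2 h2)
          = (S2.filter (fun j => z j ≠ c)).card := hd_aux c z S2 h2
      rw [hdeq]
      have hsub : S2.filter (fun j => z j ≠ c) ⊆ S2 \ Z := by
        intro a ha
        simp only [Finset.mem_filter] at ha
        refine Finset.mem_sdiff.mpr ⟨ha.1, ?_⟩
        simp only [hZdef, Finset.mem_filter]
        tauto
      have hcard := Finset.card_le_card hsub
      rw [Finset.card_sdiff_of_subset hZS2, h2] at hcard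
      omega
end

section
/- For all non-negative integers n, q, t with q ≥ 1, and every sequence x ∈ A_q^n, the t-insertion ball satisfies |I_t(x)| = Σ_{i=0}^{t} C(n+t, i) (q-1)^i; in particular this size does not depend on x. -/
/-! ### Auxiliary counting function -/

/-- Target counting function: the number of length-`m` supersequences of a fixed
length-`n` word over an alphabet of size `q`. -/
def insF (q n m : ℕ) : ℕ :=
  if n ≤ m then ∑ i ∈ Finset.range (m - n + 1), m.choose i * (q - 1) ^ i else 0

lemma insF_zero (q m : ℕ) (hq : 1 ≤ q) : insF q 0 m = q ^ m := by
  simp only [insF, Nat.zero_le, if_true, Nat.sub_zero]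
  have h := add_pow (q - 1) 1 m
  simp only [one_pow, mul_one] at h
  rw [Nat.sub_add_cancel hq] at h
  rw [h]
  apply Finset.sum_congr rfl
  intro i _
  simp [mul_comm]

lemma insF_of_lt {q n m : ℕ} (h : m < n) : insF q n m = 0 := by
  simp [insF, Nat.not_le.2 h]

lemma insF_succ_of_le {q n m : ℕ} (h : n ≤ m) :
    insF q (n + 1) m = ∑ i ∈ Finset.range (m - n), m.choose i * (q - 1) ^ i := by
  rcases eq_or_lt_of_le h with rfl | h'
  · simp [insF]
  · have h1 : n + 1 ≤ m := h'
    have h2 : m - (n + 1) + 1 = m - n := by omega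
    simp [insF, h1, h2]

lemma insF_rec (q n m : ℕ) :
    insF q (n + 1) (m + 1) = insF q n m + (q - 1) * insF q (n + 1) m := by
  by_cases h : n ≤ m
  · rw [insF_succ_of_le (by omega : n ≤ m + 1), insF_succ_of_le h,
      show insF q n m = ∑ i ∈ Finset.range (m - n + 1), m.choose i * (q - 1) ^ i by
        simp [insF, h]]
    have h2 : m + 1 - n = m - n + 1 := by omega
    rw [h2, Finset.sum_range_succ' (fun i => (m + 1).choose i * (q - 1) ^ i),
      Finset.sum_range_succ' (fun i => m.choose i * (q - 1) ^ i),
      Finset.mul_sum]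
    simp only [Nat.choose_zero_right, pow_zero, mul_one, Nat.choose_succ_succ]
    rw [Finset.sum_congr rfl (fun i _ => by
      show (m.choose i + m.choose (i+1)) * (q - 1) ^ (i+1) =
        (m.choose (i+1) * (q - 1) ^ (i+1) + (q-1) * (m.choose i * (q - 1) ^ i))
      ring)]
    rw [Finset.sum_add_distrib]
    ring
  · rw [insF_of_lt (by omega), insF_of_lt (by omega), insF_of_lt (by omega)]
    simp

/-- Number of length-`m` sequences containing `l` as a subsequence. -/
def insCnt (q m : ℕ) (l : List (Fin q)) : ℕ :=
  (Finset.univ.filter (fun z : Fin m → Fin q => l.Sublist (List.ofFn z))).card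

lemma insCnt_nil (q m : ℕ) : insCnt q m [] = q ^ m := by
  simp [insCnt, Finset.filter_true_of_mem, List.nil_sublist]

lemma insCnt_cons_zero (q : ℕ) (a : Fin q) (l : List (Fin q)) :
    insCnt q 0 (a :: l) = 0 := by
  simp [insCnt]

lemma insCnt_cons_succ (q m : ℕ) (a : Fin q) (l : List (Fin q)) :
    insCnt q (m + 1) (a :: l) = insCnt q m l + (q - 1) * insCnt q m (a :: l) := by
  classical
  have hcard : ∀ (k : ℕ) (l' : List (Fin q)),
      insCnt q k l' = Fintype.card {z : Fin k → Fin q // l'.Sublist (List.ofFn z)} := by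
    intro k l'
    rw [insCnt, Fintype.card_subtype]
  rw [hcard]
  have e1 : {z : Fin (m+1) → Fin q // (a :: l).Sublist (List.ofFn z)} ≃
      {p : Fin q × (Fin m → Fin q) // (a :: l).Sublist (List.ofFn (Fin.cons p.1 p.2))} :=
    ((Fin.consEquiv fun _ => Fin q).subtypeEquiv (fun p => by rfl)).symm
  have e2 : {p : Fin q × (Fin m → Fin q) // (a :: l).Sublist (List.ofFn (Fin.cons p.1 p.2))} ≃
      Σ b : Fin q, {f : Fin m → Fin q // (a :: l).Sublist (List.ofFn (Fin.cons b f))} :=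
    Equiv.subtypeProdEquivSigmaSubtype (fun b f => (a :: l).Sublist (List.ofFn (Fin.cons b f)))
  rw [Fintype.card_congr (e1.trans e2), Fintype.card_sigma]
  have key : ∀ b : Fin q,
      Fintype.card {f : Fin m → Fin q // (a :: l).Sublist (List.ofFn (Fin.cons b f))} =
      if b = a then insCnt q m l else insCnt q m (a :: l) := by
    intro b
    by_cases hb : b = a
    · subst hb
      rw [if_pos rfl, hcard]
      apply Fintype.card_congr
      apply Equiv.subtypeEquivRight
      intro f
      simp [List.ofFn_succ, List.cons_sublist_cons]
    · rw [if_neg hb, hcard]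
      apply Fintype.card_congr
      apply Equiv.subtypeEquivRight
      intro f
      simp only [List.ofFn_succ, Fin.cons_zero, Fin.cons_succ]
      rw [List.cons_sublist_cons']
      constructor
      · rintro (h | ⟨rfl, -⟩)
        · exact h
        · exact absurd rfl hb
      · exact fun h => Or.inl h
  rw [Finset.sum_congr rfl (fun b _ => key b),
    ← Finset.add_sum_erase _ _ (Finset.mem_univ a), if_pos rfl]
  rw [Finset.sum_congr rfl (fun b hb => if_neg (Finset.ne_of_mem_erase hb)),
    Finset.sum_const, smul_eq_mul, Finset.card_erase_of_mem (Finset.mem_univ a),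
    Finset.card_univ, Fintype.card_fin]

lemma insCnt_eq_insF (q : ℕ) (hq : 1 ≤ q) (l : List (Fin q)) :
    ∀ m, insCnt q m l = insF q l.length m := by
  induction l with
  | nil =>
    intro m
    rw [insCnt_nil, List.length_nil, insF_zero q m hq]
  | cons a l ih =>
    intro m
    induction m with
    | zero =>
      rw [insCnt_cons_zero, insF_of_lt (by simp)]
    | succ m ihm =>
      rw [insCnt_cons_succ, ihm, ih m, List.length_cons, insF_rec]

/-! ### The bridge between `idsBall` and `List.Sublist` -/

lemma subseqOf_apply {q n m : ℕ} (x : Fin n → Fin q) (S : Finset (Fin n)) (h : S.card = m)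
    (i : Fin m) : subseqOf x S h i = x (S.orderEmbOfFin h i) := by
  rw [subseqOf, Finset.coe_orderIsoOfFin_apply]

lemma subseqOf_univ {q n : ℕ} (x : Fin n → Fin q)
    (h : (Finset.univ : Finset (Fin n)).card = n) : subseqOf x Finset.univ h = x := by
  funext i
  rw [subseqOf_apply]
  congr 1
  have := Finset.orderEmbOfFin_unique h (f := fun j : Fin n => j)
    (fun j => Finset.mem_univ j) strictMono_id
  exact (congrFun this i).symm

lemma mem_idsBall_iff {q n m : ℕ} (x : Fin n → Fin q) (z : Fin m → Fin q) :
    z ∈ idsBall q 0 0 x ↔ ∃ f : Fin n ↪o Fin m, ∀ i, z (f i) = x i := by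
  constructor
  · rintro ⟨S1, S2, h1, h2, hd⟩
    rw [Nat.le_zero, hammingDist_eq_zero] at hd
    have hS1 : S1 = Finset.univ := S1.eq_univ_of_card (by simpa using h1)
    subst hS1
    refine ⟨S2.orderEmbOfFin h2, fun i => ?_⟩
    have := congrFun hd i
    rw [subseqOf_univ] at this
    rw [this, subseqOf_apply]
  · rintro ⟨f, hf⟩
    refine ⟨Finset.univ, Finset.univ.map f.toEmbedding, by simp, by simp, ?_⟩
    rw [Nat.le_zero, hammingDist_eq_zero]
    funext i
    rw [subseqOf_univ, subseqOf_apply]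
    have : (fun j : Fin n => f j) = (Finset.univ.map f.toEmbedding).orderEmbOfFin (by simp) :=
      Finset.orderEmbOfFin_unique _ (fun j => by simp) f.strictMono
    exact ((hf i).symm.trans (congrArg z (congrFun this i)))

lemma emb_iff_sublist {q n m : ℕ} (x : Fin n → Fin q) (z : Fin m → Fin q) :
    (∃ f : Fin n ↪o Fin m, ∀ i, z (f i) = x i) ↔ (List.ofFn x).Sublist (List.ofFn z) := by
  rw [List.sublist_iff_exists_fin_orderEmbedding_get_eq]
  have hx : (List.ofFn x).length = n := List.length_ofFn
  have hz : (List.ofFn z).length = m := List.length_ofFn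
  constructor
  · rintro ⟨f, hf⟩
    refine ⟨((Fin.castOrderIso hx).toOrderEmbedding.trans f).trans
      (Fin.castOrderIso hz.symm).toOrderEmbedding, fun ix => ?_⟩
    simp only [RelEmbedding.trans_apply, OrderIso.coe_toOrderEmbedding,
      Fin.castOrderIso_apply, List.get_ofFn]
    rw [← hf (Fin.cast hx ix)]
    congr 1
  · rintro ⟨f, hf⟩
    refine ⟨((Fin.castOrderIso hx.symm).toOrderEmbedding.trans f).trans
      (Fin.castOrderIso hz).toOrderEmbedding, fun i => ?_⟩
    have := hf (Fin.cast hx.symm i)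
    simp only [List.get_ofFn] at this
    simp only [RelEmbedding.trans_apply, OrderIso.coe_toOrderEmbedding,
      Fin.castOrderIso_apply]
    rw [← this]
    congr 1

/-- the size of the `t`-insertion ball `I_t(x) = B_{t,0,0}(x)`
is the same for every `x`. -/
theorem insertion_ball_size (n q t : ℕ) (hq : 1 ≤ q) (x : Fin n → Fin q) :
    (idsBall q 0 0 x : Set (Fin (n + t) → Fin q)).ncard =
      ∑ i ∈ Finset.range (t + 1), (n + t).choose i * (q - 1) ^ i := by
  have hset : (idsBall q 0 0 x : Set (Fin (n + t) → Fin q)) =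
      ↑(Finset.univ.filter (fun z : Fin (n + t) → Fin q =>
        (List.ofFn x).Sublist (List.ofFn z))) := by
    ext z
    simp only [Finset.coe_filter, Finset.mem_univ, true_and, Set.mem_setOf_eq]
    rw [mem_idsBall_iff x z, emb_iff_sublist]
  rw [hset, Set.ncard_coe_finset]
  have h1 : insCnt q (n + t) (List.ofFn x) =
      ∑ i ∈ Finset.range (t + 1), (n + t).choose i * (q - 1) ^ i := by
    rw [insCnt_eq_insF q hq, List.length_ofFn, insF,
      if_pos (Nat.le_add_right n t), Nat.add_sub_cancel_left]
  rw [← h1, insCnt]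
end

section
/- For all non-negative integers n, q, t, p with q ≥ 1, t ≥ 1, t + p < n, and every sequence x ∈ A_q^n with more than one run, the strict inequality |B_{t,t,p}(x)| > Σ_{i=0}^{t+p} C(n, i) (q-1)^i holds. -/
open Finset in
private lemma card_ne_sub {q : ℕ} (a : Fin q) : Fintype.card {c : Fin q // c ≠ a} = q - 1 := by
  have := Fintype.card_subtype_compl (fun c : Fin q => c = a)
  simpa [Fintype.card_subtype_eq] using this

open Finset in
private lemma succ_ne {q : ℕ} (hq : 2 ≤ q) (a : Fin q) :
    a + (⟨1, by omega⟩ : Fin q) ≠ a := by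
  intro h
  have hv : ((a : ℕ) + 1) % q = (a : ℕ) := by
    have := congrArg Fin.val h
    simpa [Fin.add_def] using this
  have h2 : (a : ℕ) + 1 ≤ q := a.2
  rcases lt_or_eq_of_le h2 with h1 | h1
  · rw [Nat.mod_eq_of_lt h1] at hv; omega
  · rw [h1, Nat.mod_self] at hv; omega

open Finset in
private lemma card_eq_on_set {n q : ℕ} (x : Fin n → Fin q) (S : Finset (Fin n)) :
    (univ.filter fun z : Fin n → Fin q => ∀ j, z j ≠ x j ↔ j ∈ S).card
      = (q - 1) ^ S.card := by
  classical
  rw [← Fintype.card_subtype]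
  have e : {z : Fin n → Fin q // ∀ j, z j ≠ x j ↔ j ∈ S} ≃
      (∀ j : S, {c : Fin q // c ≠ x j}) :=
    { toFun := fun z j => ⟨z.1 j, (z.2 j).2 j.2⟩
      invFun := fun f => ⟨fun j => if h : j ∈ S then (f ⟨j, h⟩).1 else x j, by
        intro j
        by_cases h : j ∈ S
        · simpa [h] using (f ⟨j, h⟩).2
        · simp [h]⟩
      left_inv := by
        intro z
        ext j
        by_cases h : j ∈ S
        · simp [h]
        · simp only [h, dif_neg, not_false_iff]
          have := (z.2 j).not
          simp [h] at this
          exact congrArg Fin.val this.symm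
      right_inv := by
        intro f
        funext j
        ext
        simp }
  rw [Fintype.card_congr e, Fintype.card_pi]
  simp [card_ne_sub, Finset.prod_const]

open Finset in
private lemma card_sphere {n q : ℕ} (x : Fin n → Fin q) (i : ℕ) :
    (univ.filter fun z : Fin n → Fin q => hammingDist z x = i).card
      = n.choose i * (q - 1) ^ i := by
  classical
  have key : (univ.filter fun z : Fin n → Fin q => hammingDist z x = i)
      = (Finset.powersetCard i (univ : Finset (Fin n))).biUnion
          (fun S => univ.filter fun z => ∀ j, z j ≠ x j ↔ j ∈ S) := by
    ext z
    simp only [mem_filter, mem_univ, true_and, mem_biUnion, mem_powersetCard]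
    constructor
    · intro hz
      exact ⟨univ.filter fun j => z j ≠ x j, ⟨filter_subset _ _, hz⟩,
        fun j => by simp⟩
    · rintro ⟨S, ⟨-, hcard⟩, hS⟩
      have : (univ.filter fun j => z j ≠ x j) = S := by
        ext j; simp [hS j]
      rw [hammingDist, this]  -- may fail
      exact hcard
  rw [key, card_biUnion]
  · rw [Finset.sum_congr rfl (fun S hS => ?_)]
    · rw [Finset.sum_const, card_powersetCard, card_univ, Fintype.card_fin, smul_eq_mul]
    · rw [card_eq_on_set, (mem_powersetCard.1 hS).2]
  · intro S hS T hT hST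
    simp only [disjoint_left, mem_filter, mem_univ, true_and]
    intro z hzS hzT
    apply hST
    ext j
    rw [← hzS j, ← hzT j]

open Finset in
private lemma card_ball {n q : ℕ} (x : Fin n → Fin q) (r : ℕ) :
    (univ.filter fun z : Fin n → Fin q => hammingDist z x ≤ r).card
      = ∑ i ∈ Finset.range (r + 1), n.choose i * (q - 1) ^ i := by
  classical
  have key : (univ.filter fun z : Fin n → Fin q => hammingDist z x ≤ r)
      = (Finset.range (r + 1)).biUnion
          (fun i => univ.filter fun z => hammingDist z x = i) := by
    ext z
    simp only [mem_filter, mem_univ, true_and, mem_biUnion, mem_range]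
    constructor
    · intro h; exact ⟨hammingDist z x, by omega, rfl⟩
    · rintro ⟨i, hi, rfl⟩; omega
  rw [key, card_biUnion]
  · exact Finset.sum_congr rfl fun i _ => card_sphere x i
  · intro i hi j hj hij
    simp only [disjoint_left, mem_filter, mem_univ, true_and]
    intro z h1 h2
    exact hij (h1 ▸ h2 ▸ rfl)

open Finset in
private lemma hamming_subseq {n q m : ℕ} (x z : Fin n → Fin q) (S : Finset (Fin n))
    (h : S.card = m) :
    hammingDist (subseqOf x S h) (subseqOf z S h)
      = (S.filter fun j => x j ≠ z j).card := by
  classical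
  rw [show hammingDist (subseqOf x S h) (subseqOf z S h)
      = (univ.filter fun i => subseqOf x S h i ≠ subseqOf z S h i).card from rfl]
  apply Finset.card_bij (fun i _ => ((S.orderIsoOfFin h i : Fin n)))
  · intro i hi
    simp only [mem_filter, mem_univ, true_and] at hi ⊢
    exact ⟨(S.orderIsoOfFin h i).2, hi⟩
  · intro i _ j _ hij
    have := Subtype.coe_injective hij
    exact (S.orderIsoOfFin h).injective this
  · intro j hj
    simp only [mem_filter] at hj
    refine ⟨(S.orderIsoOfFin h).symm ⟨j, hj.1⟩, ?_, ?_⟩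
    · simp only [mem_filter, mem_univ, true_and]; simp only [subseqOf]
      rw [OrderIso.apply_symm_apply]
      exact hj.2
    · rw [OrderIso.apply_symm_apply]

open Finset in
private lemma mem_idsBall_of_close {n q t p : ℕ} (htn : t ≤ n) (x z : Fin n → Fin q)
    (hd : hammingDist x z ≤ t + p) : z ∈ idsBall q t p x := by
  classical
  set D : Finset (Fin n) := univ.filter fun j => x j ≠ z j with hD
  have hDcard : D.card ≤ t + p := hd
  obtain ⟨T0, hT0D, hT0card⟩ :=
    Finset.exists_subset_card_eq (min_le_right t D.card)
  obtain ⟨T, hT0T, hTcard⟩ := Finset.exists_superset_card_eq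
    (show T0.card ≤ t by rw [hT0card]; exact min_le_left _ _)
    (by simpa using htn)
  have hc : Tᶜ.card = n - t := by
    rw [Finset.card_compl, hTcard, Fintype.card_fin]
  refine ⟨Tᶜ, Tᶜ, hc, hc, ?_⟩
  rw [hamming_subseq]
  have hsub : (Tᶜ.filter fun j => x j ≠ z j) ⊆ D \ T0 := by
    intro j hj
    simp only [mem_filter, Finset.mem_compl] at hj
    refine Finset.mem_sdiff.2 ⟨?_, fun hjT0 => hj.1 (hT0T hjT0)⟩
    simp [hD, hj.2]
  calc (Tᶜ.filter fun j => x j ≠ z j).card ≤ (D \ T0).card := Finset.card_le_card hsub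
    _ ≤ p := by
        rw [Finset.card_sdiff_of_subset hT0D, hT0card]
        omega

open Finset in
private lemma exists_shift_mismatch {n q t : ℕ} (ht : 1 ≤ t) (htn : t < n)
    (x : Fin n → Fin q) (hx : ∃ i j, x i ≠ x j) :
    ∃ k i0, 1 ≤ k ∧ k ≤ t ∧ i0 + t < n ∧
      ∃ (h1 : i0 + k < n) (h2 : i0 < n), x ⟨i0 + k, h1⟩ ≠ x ⟨i0, h2⟩ := by
  have hn0 : 0 < n := by omega
  have hadj : ∃ i, ∃ h : i + 1 < n, x ⟨i + 1, h⟩ ≠ x ⟨i, by omega⟩ := by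
    by_contra hcon
    push_neg at hcon
    have hall : ∀ m (h : m < n), x ⟨m, h⟩ = x ⟨0, hn0⟩ := by
      intro m
      induction m with
      | zero => intro h; rfl
      | succ m ih =>
        intro h
        have hm : m < n := by omega
        rw [hcon m h]
        exact ih hm
    obtain ⟨i, j, hij⟩ := hx
    apply hij
    rw [show x i = x ⟨(i : ℕ), i.2⟩ from rfl, hall (i : ℕ) i.2,
      show x j = x ⟨(j : ℕ), j.2⟩ from rfl, hall (j : ℕ) j.2]
  obtain ⟨i, hi, hne⟩ := hadj
  by_cases hcase : i < n - t
  · exact ⟨1, i, le_refl 1, ht, by omega, by omega, by omega, hne⟩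
  · set i0 := n - t - 1 with hi0
    have hi0n : i0 < n := by omega
    by_cases hc : x ⟨i, by omega⟩ = x ⟨i0, hi0n⟩
    · refine ⟨i + 1 - i0, i0, by omega, by omega, by omega, by omega, hi0n, ?_⟩
      have he : (⟨i0 + (i + 1 - i0), by omega⟩ : Fin n) = ⟨i + 1, hi⟩ := by
        ext; simp; omega
      rw [he]
      intro h
      exact hne (h.trans hc.symm)
    · refine ⟨i - i0, i0, by omega, by omega, by omega, by omega, hi0n, ?_⟩
      have he : (⟨i0 + (i - i0), by omega⟩ : Fin n) = ⟨i, by omega⟩ := by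
        ext; simp; omega
      rw [he]
      exact hc

open Finset in
private theorem idsBall_extra (n q t p : ℕ) (hq2 : 2 ≤ q) (ht : 1 ≤ t) (htp : t + p < n)
    (x : Fin n → Fin q)
    (k i0 : ℕ) (hk1 : 1 ≤ k) (hkt : k ≤ t) (hi0t : i0 + t < n)
    (h1 : i0 + k < n) (h2 : i0 < n) (hne : x ⟨i0 + k, h1⟩ ≠ x ⟨i0, h2⟩) :
    ∃ z0 : Fin n → Fin q, z0 ∈ idsBall q t p x ∧ t + p + 1 ≤ hammingDist z0 x := by
  classical
  have htn : t < n := by omega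
  set n1 := n - t with hn1
  set one : Fin q := ⟨1, by omega⟩ with hone
  set shift : Fin n → Fin q :=
    fun j => if h : (j : ℕ) + k < n then x ⟨(j : ℕ) + k, h⟩ else x j with hshift
  set A : Finset (Fin n) := univ.filter fun j => (j : ℕ) < n1 ∧ shift j = x j with hA
  set D : Finset (Fin n) := univ.filter fun j => (j : ℕ) < n1 ∧ shift j ≠ x j with hDdef
  obtain ⟨P, hPA, hPcard⟩ := Finset.exists_subset_card_eq (min_le_right p A.card)
  set z0 : Fin n → Fin q :=
    fun j => if (j : ℕ) < n1 ∧ j ∉ P then shift j else x j + one with hz0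
  -- the index maps
  have hgn : ∀ i : Fin n1, (i : ℕ) < n := fun i => by have := i.2; omega
  have hfn : ∀ i : Fin n1, (i : ℕ) + k < n := fun i => by have := i.2; omega
  set g : Fin n1 → Fin n := fun i => ⟨(i : ℕ), hgn i⟩ with hg
  set f : Fin n1 → Fin n := fun i => ⟨(i : ℕ) + k, hfn i⟩ with hf
  have hfmono : StrictMono f := by
    intro a b hab
    simp only [hf, Fin.lt_def] at hab ⊢
    omega
  have hgmono : StrictMono g := by
    intro a b hab
    simp only [hg, Fin.lt_def] at hab ⊢
    exact hab
  set S1 : Finset (Fin n) := univ.image f with hS1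
  set S2 : Finset (Fin n) := univ.image g with hS2
  have hS1card : S1.card = n - t := by
    rw [hS1, Finset.card_image_of_injective _ hfmono.injective, card_univ,
      Fintype.card_fin]
  have hS2card : S2.card = n - t := by
    rw [hS2, Finset.card_image_of_injective _ hgmono.injective, card_univ,
      Fintype.card_fin]
  have hfemb : f = S1.orderEmbOfFin hS1card :=
    Finset.orderEmbOfFin_unique hS1card
      (fun i => Finset.mem_image_of_mem f (mem_univ i)) hfmono
  have hgemb : g = S2.orderEmbOfFin hS2card :=
    Finset.orderEmbOfFin_unique hS2card
      (fun i => Finset.mem_image_of_mem g (mem_univ i)) hgmono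
  have hsub1 : subseqOf x S1 hS1card = fun i => x (f i) := by
    funext i
    rw [subseqOf, Finset.coe_orderIsoOfFin_apply, ← hfemb]
  have hsub2 : subseqOf z0 S2 hS2card = fun i => z0 (g i) := by
    funext i
    rw [subseqOf, Finset.coe_orderIsoOfFin_apply, ← hgemb]
  have hmemS2 : ∀ j : Fin n, j ∈ S2 ↔ (j : ℕ) < n1 := by
    intro j
    constructor
    · intro hj
      obtain ⟨i, -, rfl⟩ := Finset.mem_image.1 hj
      exact i.2
    · intro hj
      exact Finset.mem_image.2 ⟨⟨(j : ℕ), hj⟩, mem_univ _, by ext; rfl⟩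
  refine ⟨z0, ⟨S1, S2, hS1card, hS2card, ?_⟩, ?_⟩
  · -- membership: at most |P| ≤ p mismatches in the aligned copy
    rw [hsub1, hsub2]
    have hdist : hammingDist (fun i => x (f i)) (fun i => z0 (g i))
        = (univ.filter fun i : Fin n1 => x (f i) ≠ z0 (g i)).card := rfl
    rw [hdist]
    have hsubset : (univ.filter fun i : Fin n1 => x (f i) ≠ z0 (g i))
        ⊆ univ.filter fun i : Fin n1 => g i ∈ P := by
      intro i hi
      simp only [mem_filter, mem_univ, true_and] at hi ⊢
      by_contra hgP
      apply hi
      have hcond : ((g i : ℕ) < n1 ∧ g i ∉ P) := ⟨i.2, hgP⟩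
      show x (f i) = z0 (g i)
      rw [hz0]
      simp only
      rw [if_pos hcond, hshift]
      simp only
      rw [dif_pos (show ((g i : Fin n) : ℕ) + k < n from hfn i)]
    calc (univ.filter fun i : Fin n1 => x (f i) ≠ z0 (g i)).card
        ≤ (univ.filter fun i : Fin n1 => g i ∈ P).card := Finset.card_le_card hsubset
      _ ≤ P.card := by
          apply Finset.card_le_card_of_injOn g
          · intro i hi
            simpa using (Finset.mem_filter.1 hi).2
          · intro a _ b _ hab
            exact hgmono.injective hab
      _ ≤ p := by rw [hPcard]; exact min_le_left _ _
  · -- far from x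
    set Tail : Finset (Fin n) := S2ᶜ with hTail
    have hTailcard : Tail.card = t := by
      rw [hTail, Finset.card_compl, hS2card, Fintype.card_fin]
      omega
    have hPD : Disjoint P D := by
      rw [Finset.disjoint_left]
      intro j hjP hjD
      have hjA := hPA hjP
      simp only [hA, mem_filter] at hjA
      simp only [hDdef, mem_filter] at hjD
      exact hjD.2.2 hjA.2.2
    have hPDT : Disjoint (P ∪ D) Tail := by
      rw [Finset.disjoint_left]
      intro j hjPD hjT
      simp only [hTail, Finset.mem_compl, hmemS2 j] at hjT
      rcases Finset.mem_union.1 hjPD with hj | hj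
      · exact hjT (Finset.mem_filter.1 (hPA hj)).2.1
      · exact hjT (Finset.mem_filter.1 hj).2.1
    have hmis : P ∪ D ∪ Tail ⊆ univ.filter fun j => z0 j ≠ x j := by
      intro j hj
      simp only [mem_filter, mem_univ, true_and]
      rcases Finset.mem_union.1 hj with hj | hjT
      · rcases Finset.mem_union.1 hj with hjP | hjD
        · have : ¬ ((j : ℕ) < n1 ∧ j ∉ P) := fun hc => hc.2 hjP
          rw [hz0]; simp only [if_neg this]
          exact succ_ne hq2 (x j)
        · simp only [hDdef, mem_filter] at hjD
          have hjP : j ∉ P := by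
            intro hjP
            have hjA := hPA hjP
            simp only [hA, mem_filter] at hjA
            exact hjD.2.2 hjA.2.2
          rw [hz0]; simp only [if_pos (And.intro hjD.2.1 hjP)]
          exact hjD.2.2
      · simp only [hTail, Finset.mem_compl, hmemS2 j] at hjT
        have : ¬ ((j : ℕ) < n1 ∧ j ∉ P) := fun hc => hjT hc.1
        rw [hz0]; simp only [if_neg this]
        exact succ_ne hq2 (x j)
    have hD1 : 1 ≤ D.card := by
      refine Finset.card_pos.2 ⟨⟨i0, h2⟩, ?_⟩
      simp only [hDdef, mem_filter, mem_univ, true_and]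
      refine ⟨by omega, ?_⟩
      rw [hshift]
      simp only
      rw [dif_pos (show ((⟨i0, h2⟩ : Fin n) : ℕ) + k < n from h1)]
      exact hne
    have hADcard : A.card + D.card = n1 := by
      have hdisj : Disjoint A D := by
        rw [Finset.disjoint_left]
        intro j hjA hjD
        simp only [hA, mem_filter] at hjA
        simp only [hDdef, mem_filter] at hjD
        exact hjD.2.2 hjA.2.2
      rw [← Finset.card_union_of_disjoint hdisj]
      have : A ∪ D = S2 := by
        ext j
        simp only [hA, hDdef, Finset.mem_union, mem_filter, mem_univ, true_and,
          hmemS2 j]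
        by_cases hc : shift j = x j <;> by_cases hl : (j : ℕ) < n1 <;> simp [hc, hl]
      rw [this, hS2card]
    have hbig : t + p + 1 ≤ P.card + D.card + Tail.card := by
      rw [hPcard, hTailcard]
      omega
    calc t + p + 1 ≤ P.card + D.card + Tail.card := hbig
      _ = (P ∪ D ∪ Tail).card := by
          rw [Finset.card_union_of_disjoint hPDT, Finset.card_union_of_disjoint hPD]
      _ ≤ (univ.filter fun j => z0 j ≠ x j).card := Finset.card_le_card hmis
      _ = hammingDist z0 x := rfl

open Finset in
/-- strict inequality for `B_{t,t,p}(x)` when `x` has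
more than one run. -/
theorem idsBall_tt_strict (n q t p : ℕ) (hq : 1 ≤ q) (ht : 1 ≤ t) (htp : t + p < n)
    (x : Fin n → Fin q) (hx : ∃ i j, x i ≠ x j) :
    (idsBall q t p x : Set (Fin n → Fin q)).ncard >
      ∑ i ∈ Finset.range (t + p + 1), n.choose i * (q - 1) ^ i := by
  classical
  obtain ⟨i, j, hij⟩ := hx
  have hq2 : 2 ≤ q := by
    by_contra h
    push_neg at h
    obtain rfl : q = 1 := by omega
    exact hij (Subsingleton.elim _ _)
  have htn : t < n := by omega
  obtain ⟨k, i0, hk1, hkt, hi0t, h1, h2, hne⟩ :=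
    exists_shift_mismatch ht htn x ⟨i, j, hij⟩
  obtain ⟨z0, hz0mem, hz0far⟩ :=
    idsBall_extra n q t p hq2 ht htp x k i0 hk1 hkt hi0t h1 h2 hne
  set Ball : Finset (Fin n → Fin q) :=
    univ.filter fun z => hammingDist z x ≤ t + p with hBall
  have hz0nb : z0 ∉ Ball := by
    simp only [hBall, mem_filter, mem_univ, true_and, not_le]
    omega
  have hsub : (↑(insert z0 Ball) : Set (Fin n → Fin q)) ⊆ idsBall q t p x := by
    intro w hw
    rw [Finset.coe_insert] at hw
    rcases hw with rfl | hw
    · exact hz0mem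
    · have hw' := (Finset.mem_filter.1 hw).2
      exact mem_idsBall_of_close (le_of_lt htn) x w (by rwa [hammingDist_comm])
  have hle := Set.ncard_le_ncard hsub (Set.toFinite _)
  rw [Set.ncard_coe_finset, Finset.card_insert_of_notMem hz0nb] at hle
  have hcount : Ball.card = ∑ i ∈ Finset.range (t + p + 1), n.choose i * (q - 1) ^ i :=
    card_ball x (t + p)
  omega
end

section
/- For all non-negative integers n, q, t, p with n ≥ t and q ≥ 1, and every x ∈ A_q^n, the Hamming ball of radius t + p around x is contained in the t-insertion t-deletion p-substitution ball: B_{0,0,t+p}(x) ⊆ B_{t,t,p}(x). -/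
/-- the Hamming ball of radius `t + p` is contained in
`B_{t,t,p}(x)`. -/
theorem hammingBall_subset_idsBall (n q t p : ℕ) (htn : t ≤ n) (hq : 1 ≤ q)
    (x : Fin n → Fin q) :
    { z : Fin n → Fin q | hammingDist x z ≤ t + p } ⊆
      (idsBall q t p x : Set (Fin n → Fin q)) := by
  intro z hz
  classical
  set D : Finset (Fin n) := Finset.univ.filter (fun i => x i ≠ z i) with hD
  have hDcard : D.card ≤ t + p := hz
  obtain ⟨T, hTcard, hsd⟩ : ∃ T : Finset (Fin n), T.card = t ∧ (D \ T).card ≤ p := by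
    by_cases h : t ≤ D.card
    · obtain ⟨T, hTD, hTc⟩ := Finset.exists_subset_card_eq h
      refine ⟨T, hTc, ?_⟩
      rw [Finset.card_sdiff_of_subset hTD, hTc]
      omega
    · obtain ⟨T, hDT, hTc⟩ := Finset.exists_superset_card_eq (le_of_not_ge h)
        (by simpa using htn)
      refine ⟨T, hTc, ?_⟩
      rw [Finset.sdiff_eq_empty_iff_subset.mpr hDT]
      simp
  have h1 : Tᶜ.card = n - t := by
    rw [Finset.card_compl, hTcard, Fintype.card_fin]
  refine ⟨Tᶜ, Tᶜ, h1, h1, ?_⟩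
  have hle : hammingDist (subseqOf x Tᶜ h1) (subseqOf z Tᶜ h1) ≤ (D \ T).card := by
    rw [hammingDist]
    apply Finset.card_le_card_of_injOn (fun i => (Tᶜ.orderIsoOfFin h1 i : Fin n))
    · intro i hi
      simp only [Finset.mem_coe, Finset.mem_filter, Finset.mem_univ, true_and] at hi
      have hmem : ((Tᶜ.orderIsoOfFin h1 i : Fin n)) ∈ Tᶜ :=
        (Tᶜ.orderIsoOfFin h1 i).2
      simp only [Finset.mem_coe, Finset.mem_sdiff, hD, Finset.mem_filter, Finset.mem_univ, true_and]
      exact ⟨hi, Finset.mem_compl.mp hmem⟩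
    · intro a _ b _ hab
      exact (Tᶜ.orderIsoOfFin h1).injective (Subtype.ext hab)
  exact hle.trans hsd
end

section
/- For all non-negative integers n, q, t, p with q ≥ 1, t ≥ 1, t + p < n, and every sequence x ∈ A_q^n with more than one run, there exists z ∈ B_{t,t,p}(x) whose Hamming distance from x equals t + p + 1; in particular B_{0,0,t+p}(x) is a proper subset of B_{t,t,p}(x). -/
/-- Helper: if there is a map `f` strictly monotone on `S1` such that `z ∘ f`
agrees with `x` on `S1` except possibly on a set `P` of size at most `p`, then
`z` is within subsequence distance `p` of `x` using `S1` and `S1.image f`. -/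
lemma subseq_dist_le_aux {q n m p : ℕ} (x z : Fin n → Fin q)
    (S1 : Finset (Fin n)) (h1 : S1.card = m) (f : Fin n → Fin n)
    (hf : StrictMonoOn f (S1 : Set (Fin n))) (P : Finset (Fin n)) (hP : P.card ≤ p)
    (hmatch : ∀ j ∈ S1, x j ≠ z (f j) → j ∈ P) :
    ∃ (S2 : Finset (Fin n)) (h2 : S2.card = m),
      hammingDist (subseqOf x S1 h1) (subseqOf z S2 h2) ≤ p := by
  classical
  have h2 : (S1.image f).card = m := by
    rw [Finset.card_image_of_injOn hf.injOn, h1]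
  refine ⟨S1.image f, h2, ?_⟩
  · set e1 := S1.orderEmbOfFin h1 with he1
    have hmem : ∀ k, e1 k ∈ S1 := fun k => S1.orderEmbOfFin_mem h1 k
    have hkey : (fun k => f (e1 k)) = (S1.image f).orderEmbOfFin h2 := by
      apply Finset.orderEmbOfFin_unique
      · intro k; exact Finset.mem_image_of_mem f (hmem k)
      · intro a b hab
        exact hf (hmem a) (hmem b) (e1.strictMono hab)
    have hsub1 : subseqOf x S1 h1 = fun k => x (e1 k) := rfl
    have hsub2 : subseqOf z (S1.image f) h2 = fun k => z (f (e1 k)) := by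
      funext k
      have : ((S1.image f).orderEmbOfFin h2) k = f (e1 k) := by rw [← hkey]
      simp only [subseqOf, Finset.coe_orderIsoOfFin_apply, this]
    rw [hsub1, hsub2]
    unfold hammingDist
    calc (Finset.univ.filter fun k => x (e1 k) ≠ z (f (e1 k))).card
        ≤ P.card := by
          apply Finset.card_le_card_of_injOn (fun k => e1 k)
          · intro k hk
            simp only [Finset.mem_coe, Finset.mem_filter] at hk
            exact hmatch (e1 k) (hmem k) hk.2
          · intro a _ b _ hab
            exact e1.injective hab
      _ ≤ p := hP

/-- If `x` is not constant, it has two adjacent entries that differ. -/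
lemma exists_adjacent_ne {n q : ℕ} (x : Fin n → Fin q) (hx : ∃ i j, x i ≠ x j) :
    ∃ k : ℕ, ∃ hk : k + 1 < n, x ⟨k, by omega⟩ ≠ x ⟨k + 1, hk⟩ := by
  by_contra h
  push_neg at h
  obtain ⟨i, j, hij⟩ := hx
  have hn : 0 < n := i.pos
  have hall : ∀ k : ℕ, ∀ hk : k < n, x ⟨k, hk⟩ = x ⟨0, hn⟩ := by
    intro k
    induction k with
    | zero => intro hk; rfl
    | succ m ih =>
      intro hk
      have hm : m + 1 < n := hk
      have := h m hm
      rw [← this]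
      exact ih (by omega)
  have hi : x i = x ⟨0, hn⟩ := by
    have := hall i.val i.isLt
    simpa using this
  have hj : x j = x ⟨0, hn⟩ := by
    have := hall j.val j.isLt
    simpa using this
  exact hij (hi.trans hj.symm)

/-- there is an element of `B_{t,t,p}(x)` at Hamming distance
exactly `t + p + 1` from `x`; in particular the Hamming ball of radius
`t + p` is a proper subset of `B_{t,t,p}(x)`. -/
theorem exists_far_elem_idsBall (n q t p : ℕ) (hq : 1 ≤ q) (ht : 1 ≤ t)
    (htp : t + p < n) (x : Fin n → Fin q) (hx : ∃ i j, x i ≠ x j) :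
    (∃ z ∈ (idsBall q t p x : Set (Fin n → Fin q)),
        hammingDist x z = t + p + 1) ∧
      { z : Fin n → Fin q | hammingDist x z ≤ t + p } ⊂
        (idsBall q t p x : Set (Fin n → Fin q)) := by
  classical
  -- q ≥ 2
  have hq2 : 2 ≤ q := by
    by_contra hlt
    push_neg at hlt
    obtain ⟨i, j, hij⟩ := hx
    interval_cases q
    exact hij (Subsingleton.elim _ _)
  -- "other" value function
  set other : Fin q → Fin q := fun a => if a.val = 0 then ⟨1, hq2⟩ else ⟨0, by omega⟩
    with hother
  have hother_ne : ∀ a, other a ≠ a := by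
    intro a
    intro hc
    simp only [hother] at hc
    by_cases h : a.val = 0
    · rw [if_pos h] at hc; have := congrArg Fin.val hc; simp [h] at this
    · rw [if_neg h] at hc; have := congrArg Fin.val hc; simp at this; omega
  -- adjacent boundary
  obtain ⟨k, hk1, hne⟩ := exists_adjacent_ne x hx
  set i : Fin n := ⟨k, by omega⟩ with hi
  set i' : Fin n := ⟨k + 1, hk1⟩ with hi'
  have hii' : i ≠ i' := by simp [hi, hi', Fin.ext_iff]
  -- choose the corruption sets
  have hcard2 : ({i, i'} : Finset (Fin n)).card = 2 := by
    rw [Finset.card_insert_of_notMem (by simp [hii']), Finset.card_singleton]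
  have hcompl : (Finset.univ \ ({i, i'} : Finset (Fin n))).card = n - 2 := by
    rw [Finset.card_sdiff_of_subset (Finset.subset_univ _), hcard2, Finset.card_univ,
      Fintype.card_fin]
  obtain ⟨C, hCsub, hCcard⟩ :
      ∃ C ⊆ Finset.univ \ ({i, i'} : Finset (Fin n)), C.card = t - 1 + p :=
    Finset.exists_subset_card_eq (by omega)
  obtain ⟨D, hDsub, hDcard⟩ : ∃ D ⊆ C, D.card = t - 1 :=
    Finset.exists_subset_card_eq (by omega)
  set P : Finset (Fin n) := C \ D with hPdef
  have hPcard : P.card = p := by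
    rw [hPdef, Finset.card_sdiff_of_subset hDsub, hCcard, hDcard]; omega
  have hiC : i ∉ C := fun h => by simpa using (hCsub h)
  have hi'C : i' ∉ C := fun h => by simpa [hii'.symm] using (hCsub h)
  have hiD : i ∉ D := fun h => hiC (hDsub h)
  have hi'D : i' ∉ D := fun h => hi'C (hDsub h)
  -- the witness z
  set z : Fin n → Fin q := fun j =>
    if j = i then x i' else if j = i' then x i else if j ∈ C then other (x j) else x j
    with hz
  -- Hamming distance computation
  have hdiff : (Finset.univ.filter fun j => x j ≠ z j) = insert i (insert i' C) := by
    ext j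
    simp only [Finset.mem_filter, Finset.mem_univ, true_and, Finset.mem_insert]
    constructor
    · intro hj
      by_contra hc
      push_neg at hc
      obtain ⟨h1, h2, h3⟩ := hc
      simp only [hz, h1, h2, h3, if_neg, if_false] at hj
      exact hj rfl
    · rintro (rfl | rfl | hjC)
      · simp only [hz, if_pos rfl]; exact hne
      · simp only [hz, if_neg hii'.symm, if_pos rfl]; exact fun h => hne h.symm
      · have hj1 : j ≠ i := fun h => hiC (h ▸ hjC)
        have hj2 : j ≠ i' := fun h => hi'C (h ▸ hjC)
        simp only [hz, if_neg hj1, if_neg hj2, if_pos hjC]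
        exact fun h => hother_ne (x j) h.symm
  have hdist : hammingDist x z = t + p + 1 := by
    show (Finset.univ.filter fun j => x j ≠ z j).card = t + p + 1
    rw [hdiff, Finset.card_insert_of_notMem (by simp [hii', hiC]),
      Finset.card_insert_of_notMem hi'C, hCcard]
    omega
  -- membership of z in the ball
  have hmem : z ∈ (idsBall q t p x : Set (Fin n → Fin q)) := by
    set S1 : Finset (Fin n) := Finset.univ \ insert i D with hS1
    have hS1card : S1.card = n - t := by
      rw [hS1, Finset.card_sdiff_of_subset (Finset.subset_univ _),
        Finset.card_insert_of_notMem hiD, hDcard, Finset.card_univ, Fintype.card_fin]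
      omega
    have hswap_mono : StrictMonoOn (Equiv.swap i i') (S1 : Set (Fin n)) := by
      intro a ha b hb hab
      have ha' : a ∉ insert i D := by
        have := Finset.mem_coe.mp ha; rw [hS1, Finset.mem_sdiff] at this; exact this.2
      have hb' : b ∉ insert i D := by
        have := Finset.mem_coe.mp hb; rw [hS1, Finset.mem_sdiff] at this; exact this.2
      have hai : a ≠ i := fun h => ha' (by simp [h])
      have hbi : b ≠ i := fun h => hb' (by simp [h])
      rcases eq_or_ne a i' with rfl | hai'
      · rw [Equiv.swap_apply_right]
        have hbne : b ≠ i' := by intro h; rw [h] at hab; exact lt_irrefl _ hab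
        rw [Equiv.swap_apply_of_ne_of_ne hbi hbne]
        have : (i : Fin n) < i' := by simp [hi, hi', Fin.lt_def]
        exact this.trans hab
      · rw [Equiv.swap_apply_of_ne_of_ne hai hai']
        rcases eq_or_ne b i' with rfl | hbi'
        · rw [Equiv.swap_apply_right]
          have h1 : a.val < k + 1 := hab
          have h2 : a.val ≠ k := fun h => hai (Fin.ext h)
          exact Fin.lt_def.mpr (by simp [hi]; omega)
        · rw [Equiv.swap_apply_of_ne_of_ne hbi hbi']
          exact hab
    have hmatch : ∀ j ∈ S1, x j ≠ z (Equiv.swap i i' j) → j ∈ P := by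
      intro j hj hne'
      simp only [hS1, Finset.mem_sdiff, Finset.mem_univ, true_and,
        Finset.mem_insert, not_or] at hj
      obtain ⟨hji, hjD⟩ := hj
      rcases eq_or_ne j i' with rfl | hji'
      · exfalso
        apply hne'
        rw [Equiv.swap_apply_right]
        simp [hz, hii'.symm]
      · rw [Equiv.swap_apply_of_ne_of_ne hji hji'] at hne'
        by_cases hjC : j ∈ C
        · exact Finset.mem_sdiff.mpr ⟨hjC, hjD⟩
        · exfalso; apply hne'; simp [hz, hji, hji', hjC]
    obtain ⟨S2, h2, hd⟩ := subseq_dist_le_aux x z S1 hS1card (Equiv.swap i i')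
      hswap_mono P (le_of_eq hPcard) hmatch
    exact ⟨S1, S2, hS1card, h2, hd⟩
  refine ⟨⟨z, hmem, hdist⟩, ?_, ?_⟩
  · -- Hamming ball ⊆ idsBall
    intro w hw
    simp only [Set.mem_setOf_eq] at hw
    set Δ : Finset (Fin n) := Finset.univ.filter fun j => x j ≠ w j with hΔ
    have hΔcard : Δ.card ≤ t + p := hw
    obtain ⟨E, hEsub, hEcard⟩ : ∃ E ⊆ Δ, E.card = min t Δ.card :=
      Finset.exists_subset_card_eq (min_le_right _ _)
    obtain ⟨D', hED', hD'univ, hD'card⟩ :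
        ∃ D', E ⊆ D' ∧ D' ⊆ Finset.univ ∧ D'.card = t :=
      Finset.exists_subsuperset_card_eq (Finset.subset_univ E)
        (by omega) (by rw [Finset.card_univ, Fintype.card_fin]; omega)
    set S1 : Finset (Fin n) := Finset.univ \ D' with hS1
    have hS1card : S1.card = n - t := by
      rw [hS1, Finset.card_sdiff_of_subset (Finset.subset_univ _), hD'card,
        Finset.card_univ, Fintype.card_fin]
    have hP'card : (Δ \ E).card ≤ p := by
      rw [Finset.card_sdiff_of_subset hEsub, hEcard]
      omega
    have hmatch : ∀ j ∈ S1, x j ≠ w (id j) → j ∈ Δ \ E := by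
      intro j hj hne'
      simp only [hS1, Finset.mem_sdiff, Finset.mem_univ, true_and] at hj
      refine Finset.mem_sdiff.mpr ⟨?_, fun h => hj (hED' h)⟩
      simp only [hΔ, Finset.mem_filter, Finset.mem_univ, true_and]
      exact hne'
    obtain ⟨S2, h2, hd⟩ := subseq_dist_le_aux x w S1 hS1card id
      strictMonoOn_id (Δ \ E) hP'card hmatch
    exact ⟨S1, S2, hS1card, h2, hd⟩
  · -- not superset
    intro hsup
    have := hsup hmem
    simp only [Set.mem_setOf_eq, hdist] at this
    omega
end

section
/- For all non-negative integers n, q, s, p with q ≥ 1, s ≥ 1, s + p < n, and every sequence x ∈ A_q^n with more than one run, the strict inequality |B_{0,s,p}(x)| > Σ_{i=0}^{p} C(n-s, i) (q-1)^i holds. -/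
section Aux

lemma card_image_strictMono {n m : ℕ} (f : Fin m → Fin n) (hf : StrictMono f) :
    (Finset.image f Finset.univ).card = m := by
  rw [Finset.card_image_of_injective _ hf.injective, Finset.card_univ, Fintype.card_fin]

lemma other_ne {q : ℕ} (hq : 2 ≤ q) (a : Fin q) :
    (if a = ⟨0, by omega⟩ then (⟨1, by omega⟩ : Fin q) else ⟨0, by omega⟩) ≠ a := by
  by_cases h : a = ⟨0, by omega⟩
  · simp only [h, if_true]
    intro hc
    exact absurd (congrArg Fin.val hc) (by simp)
  · simp only [h, if_false]
    intro hc
    exact h hc.symm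

lemma subseq_comp {q n m : ℕ} (x : Fin n → Fin q) (f : Fin m → Fin n) (hf : StrictMono f)
    (h : (Finset.image f Finset.univ).card = m) :
    subseqOf x (Finset.image f Finset.univ) h = x ∘ f := by
  have : f = (Finset.image f Finset.univ).orderEmbOfFin h :=
    Finset.orderEmbOfFin_unique h (fun i => Finset.mem_image_of_mem f (Finset.mem_univ i)) hf
  funext j
  simp [subseqOf, Finset.coe_orderIsoOfFin_apply, ← this]

lemma subseq_univ {q m : ℕ} (z : Fin m → Fin q) (h : (Finset.univ : Finset (Fin m)).card = m) :
    subseqOf z Finset.univ h = z := by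
  have : (id : Fin m → Fin m) = Finset.univ.orderEmbOfFin h :=
    Finset.orderEmbOfFin_unique h (fun i => Finset.mem_univ i) strictMono_id
  funext j
  have h2 : (Finset.univ.orderEmbOfFin h) j = j := (congrFun this j).symm
  simp [subseqOf, Finset.coe_orderIsoOfFin_apply, h2]

lemma fiber_card {m q : ℕ} (y : Fin m → Fin q) (T : Finset (Fin m)) :
    (Finset.univ.filter
      (fun z : Fin m → Fin q => (Finset.univ.filter fun j => y j ≠ z j) = T)).card
      = (q-1)^T.card := by
  classical
  rw [← Fintype.card_subtype]
  have e1 : {z : Fin m → Fin q // (Finset.univ.filter fun j => y j ≠ z j) = T}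
      ≃ {z : Fin m → Fin q // ∀ j, (y j ≠ z j ↔ j ∈ T)} := by
    apply Equiv.subtypeEquivRight
    intro z
    constructor
    · intro h j; rw [← h]; simp
    · intro h; ext j; simp [h j]
  have e2 := Equiv.subtypePiEquivPi (p := fun (j : Fin m) (v : Fin q) => (y j ≠ v ↔ j ∈ T))
  rw [Fintype.card_congr (e1.trans e2), Fintype.card_pi]
  have hcard : ∀ j : Fin m, Fintype.card {v : Fin q // y j ≠ v ↔ j ∈ T}
      = if j ∈ T then q - 1 else 1 := by
    intro j
    by_cases hj : j ∈ T
    · simp only [hj, if_true, iff_true]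
      have : Fintype.card {v : Fin q // ¬ (y j = v)} = q - 1 := by
        rw [Fintype.card_subtype_compl, Fintype.card_subtype_eq', Fintype.card_fin]
      simp
    · simp only [hj, if_false, iff_false, not_not]
      exact Fintype.card_subtype_eq' (y j)
  rw [Finset.prod_congr rfl (fun j _ => hcard j), Finset.prod_ite_mem, Finset.univ_inter,
    Finset.prod_const]

lemma ball_card {m q : ℕ} (p : ℕ) (y : Fin m → Fin q) :
    (Finset.univ.filter (fun z : Fin m → Fin q => hammingDist y z ≤ p)).card
      = ∑ i ∈ Finset.range (p + 1), m.choose i * (q - 1) ^ i := by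
  classical
  set I := (Finset.range (p+1)).biUnion
      (fun i => Finset.powersetCard i (Finset.univ : Finset (Fin m))) with hI
  rw [Finset.card_eq_sum_card_fiberwise
    (f := fun z : Fin m → Fin q => Finset.univ.filter fun j => y j ≠ z j) (t := I) ?mem]
  case mem =>
    intro z hz
    simp only [Finset.mem_coe, Finset.mem_filter, Finset.mem_univ, true_and] at hz
    simp only [Finset.mem_coe, hI, Finset.mem_biUnion, Finset.mem_range, Finset.mem_powersetCard]
    exact ⟨_, Nat.lt_succ_of_le hz, Finset.subset_univ _, rfl⟩
  rw [hI, Finset.sum_biUnion ?disj]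
  case disj =>
    intro a ha b hb hab
    apply Finset.disjoint_left.2
    intro T hTa hTb
    rw [Finset.mem_powersetCard] at hTa hTb
    exact hab (hTa.2 ▸ hTb.2)
  refine Finset.sum_congr rfl (fun i hi => ?_)
  rw [Finset.mem_range] at hi
  have hfeq : ∀ T ∈ Finset.powersetCard i (Finset.univ : Finset (Fin m)),
      Finset.filter (fun z : Fin m → Fin q => (Finset.univ.filter fun j => y j ≠ z j) = T)
        (Finset.filter (fun z => hammingDist y z ≤ p) Finset.univ)
      = Finset.filter (fun z : Fin m → Fin q =>
          (Finset.univ.filter fun j => y j ≠ z j) = T) Finset.univ := by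
    intro T hT
    rw [Finset.filter_filter]
    apply Finset.filter_congr
    intro z _
    constructor
    · exact fun h => h.2
    · intro h
      refine ⟨?_, h⟩
      have : hammingDist y z = T.card := by rw [hammingDist, h]
      rw [this, (Finset.mem_powersetCard.1 hT).2]
      omega
  rw [Finset.sum_congr rfl (fun T hT => congrArg Finset.card (hfeq T hT))]
  have : ∀ T ∈ Finset.powersetCard i (Finset.univ : Finset (Fin m)),
      (Finset.univ.filter (fun z : Fin m → Fin q =>
        (Finset.univ.filter fun j => y j ≠ z j) = T)).card = (q-1)^i := by
    intro T hT
    rw [fiber_card, (Finset.mem_powersetCard.1 hT).2]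
  rw [Finset.sum_congr rfl this, Finset.sum_const, Finset.card_powersetCard, Finset.card_univ,
    Fintype.card_fin, smul_eq_mul]

end Aux


/-- strict inequality for `B_{0,s,p}(x)` when `x` has
more than one run. -/
theorem idsBall_del_strict (n q s p : ℕ) (hq : 1 ≤ q) (hs : 1 ≤ s) (hsp : s + p < n)
    (x : Fin n → Fin q) (hx : ∃ i j, x i ≠ x j) :
    (idsBall q s p x : Set (Fin (n - s) → Fin q)).ncard >
      ∑ i ∈ Finset.range (p + 1), (n - s).choose i * (q - 1) ^ i := by
  classical
  have hm1 : p + 1 ≤ n - s := by omega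
  have hn0 : 0 < n := by omega
  have hq2 : 2 ≤ q := by
    by_contra hq2
    obtain ⟨a, b, hab⟩ := hx
    have hq1 : q = 1 := by omega
    subst hq1
    exact hab (Subsingleton.elim _ _)
  set x0 : Fin q := x ⟨0, hn0⟩ with hx0
  have hex : ∃ k : ℕ, ∃ h : k < n, x ⟨k, h⟩ ≠ x0 := by
    obtain ⟨a, b, hab⟩ := hx
    by_cases ha : x a = x0
    · exact ⟨b.val, b.isLt, by simp only [Fin.eta]; intro h; exact hab (ha.trans h.symm)⟩
    · exact ⟨a.val, a.isLt, by simp only [Fin.eta]; exact ha⟩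
  set i := Nat.find hex with hidef
  obtain ⟨hin, hix⟩ := Nat.find_spec hex
  have hmin : ∀ k (hk : k < n), k < i → x ⟨k, hk⟩ = x0 := by
    intro k hk hki
    by_contra hc
    exact Nat.find_min hex hki ⟨hk, hc⟩
  have hi1 : 1 ≤ i := by
    by_contra h
    have h0 : i = 0 := by omega
    apply hix
    have he : (⟨i, hin⟩ : Fin n) = ⟨0, hn0⟩ := by simp [h0]
    rw [he]
  -- two strictly monotone maps whose pullbacks of x differ
  have key : ∃ y y' : Fin (n-s) → Fin q, y ≠ y' ∧
      (∃ f : Fin (n-s) → Fin n, StrictMono f ∧ x ∘ f = y) ∧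
      (∃ g : Fin (n-s) → Fin n, StrictMono g ∧ x ∘ g = y') := by
    by_cases hcase : i ≤ n - s
    · -- skip index i vs skip index i-1
      refine ⟨x ∘ (fun j : Fin (n-s) =>
          if (j : ℕ) < i then (⟨j, by have := j.isLt; omega⟩ : Fin n)
            else ⟨(j : ℕ) + 1, by have := j.isLt; omega⟩),
        x ∘ (fun j : Fin (n-s) =>
          if (j : ℕ) < i - 1 then (⟨j, by have := j.isLt; omega⟩ : Fin n)
            else ⟨(j : ℕ) + 1, by have := j.isLt; omega⟩), ?_, ⟨_, ?_, rfl⟩, ⟨_, ?_, rfl⟩⟩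
      · intro heq
        have hj0 : (i - 1 : ℕ) < n - s := by omega
        have := congrFun heq ⟨i - 1, hj0⟩
        simp only [Function.comp_apply] at this
        have hc1 : ((⟨i-1, hj0⟩ : Fin (n-s)) : ℕ) < i := by show i - 1 < i; omega
        have hc2 : ¬ ((⟨i-1, hj0⟩ : Fin (n-s)) : ℕ) < i - 1 := by
          show ¬ i - 1 < i - 1; omega
        rw [if_pos hc1, if_neg hc2] at this
        have he : (⟨(⟨i-1, hj0⟩ : Fin (n-s)).val + 1, by omega⟩ : Fin n) = ⟨i, hin⟩ := by
          simp only [Fin.mk.injEq]; omega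
        rw [he] at this
        exact hix ((hmin (i-1) (by omega) (by omega)).symm.trans this).symm
      · intro a b hab
        have hab' : (a : ℕ) < b := hab
        dsimp only
        split_ifs <;> simp only [Fin.mk_lt_mk] <;> omega
      · intro a b hab
        have hab' : (a : ℕ) < b := hab
        dsimp only
        split_ifs <;> simp only [Fin.mk_lt_mk] <;> omega
    · -- prefix vs shifted window ending at i
      refine ⟨x ∘ (fun j : Fin (n-s) => (⟨j, by have := j.isLt; omega⟩ : Fin n)),
        x ∘ (fun j : Fin (n-s) =>
          (⟨(j : ℕ) + (i - (n - s - 1)), by have := j.isLt; omega⟩ : Fin n)), ?_,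
        ⟨_, ?_, rfl⟩, ⟨_, ?_, rfl⟩⟩
      · intro heq
        have hj1 : (n - s - 1 : ℕ) < n - s := by omega
        have := congrFun heq ⟨n - s - 1, hj1⟩
        simp only [Function.comp_apply] at this
        have he : (⟨(⟨n-s-1, hj1⟩ : Fin (n-s)).val + (i - (n - s - 1)), by omega⟩ : Fin n)
            = ⟨i, hin⟩ := by
          simp only [Fin.mk.injEq]; omega
        rw [he] at this
        exact hix ((hmin (n-s-1) (by omega) (by omega)).symm.trans this).symm
      · intro a b hab
        have hab' : (a : ℕ) < b := hab
        simp only [Fin.mk_lt_mk]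
        omega
      · intro a b hab
        have hab' : (a : ℕ) < b := hab
        simp only [Fin.mk_lt_mk]
        omega
  obtain ⟨y, y', hyy', ⟨f, hf, hfy⟩, ⟨g, hg, hgy⟩⟩ := key
  -- membership criterion
  have hmem : ∀ (f' : Fin (n-s) → Fin n), StrictMono f' →
      ∀ z : Fin (n-s) → Fin q, hammingDist (x ∘ f') z ≤ p → z ∈ idsBall q s p x := by
    intro f' hf' z hz
    have h1 : (Finset.image f' Finset.univ).card = n - s := card_image_strictMono f' hf'
    have h2 : (Finset.univ : Finset (Fin (n-s))).card = n - s := by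
      rw [Finset.card_univ, Fintype.card_fin]
    exact ⟨_, _, h1, h2, by rw [subseq_comp x f' hf' h1, subseq_univ z h2]; exact hz⟩
  -- construct an element of the ball far from y
  have hzex : ∃ z : Fin (n-s) → Fin q, z ∈ idsBall q s p x ∧ ¬ hammingDist y z ≤ p := by
    by_cases hpd : hammingDist y y' ≤ p
    · set D := (Finset.univ.filter fun j : Fin (n-s) => y j ≠ y' j) with hD
      have hDd : D.card = hammingDist y y' := rfl
      have hd1 : 1 ≤ D.card := by
        rw [hDd]
        exact hammingDist_pos.2 hyy'
      obtain ⟨U, hUsub, hUcard⟩ := Finset.exists_subset_card_eq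
        (s := Dᶜ) (n := p + 1 - D.card)
        (by rw [Finset.card_compl, Fintype.card_fin]; omega)
      set z : Fin (n-s) → Fin q := fun j => if j ∈ U then
          (if y j = ⟨0, by omega⟩ then (⟨1, by omega⟩ : Fin q) else ⟨0, by omega⟩)
        else y' j with hzdef
      have hUne : ∀ j ∈ U, z j ≠ y j := by
        intro j hj
        simp only [hzdef, if_pos hj]
        exact other_ne hq2 (y j)
      have hUagree : ∀ j ∈ U, y j = y' j := by
        intro j hj
        have := Finset.mem_compl.1 (hUsub hj)
        simp only [hD, Finset.mem_filter, Finset.mem_univ, true_and, not_not] at this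
        exact this
      constructor
      constructor
      · -- z ∈ ball via g
        apply hmem g hg
        rw [hgy]
        have : hammingDist y' z = U.card := by
          rw [hammingDist]
          congr 1
          ext j
          simp only [Finset.mem_filter, Finset.mem_univ, true_and]
          by_cases hj : j ∈ U
          · simp only [hj, iff_true]
            rw [← hUagree j hj]
            exact fun hc => hUne j hj hc.symm
          · simp only [hj, iff_false, not_not, hzdef, if_neg hj]
        rw [this, hUcard]
        omega
      · -- far from y
        intro hle
        have hsub : D ∪ U ⊆ Finset.univ.filter fun j => y j ≠ z j := by
          intro j hj
          simp only [Finset.mem_filter, Finset.mem_univ, true_and]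
          rcases Finset.mem_union.1 hj with hjD | hjU
          · have hjU : j ∉ U := fun hjU =>
              (Finset.mem_compl.1 (hUsub hjU)) hjD
            simp only [hD, Finset.mem_filter, Finset.mem_univ, true_and] at hjD
            simpa only [hzdef, if_neg hjU] using hjD
          · exact fun hc => hUne j hjU hc.symm
        have hdisj : Disjoint D U :=
          Finset.disjoint_left.2 fun a haD haU => (Finset.mem_compl.1 (hUsub haU)) haD
        have hcards : D.card + U.card ≤ hammingDist y z := by
          rw [← Finset.card_union_of_disjoint hdisj]
          exact Finset.card_le_card hsub
        rw [hUcard] at hcards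
        omega
    · exact ⟨y', hmem g hg y' (by rw [hgy, hammingDist_self]; omega), hpd⟩
  obtain ⟨z, hzmem, hznot⟩ := hzex
  set B := Finset.univ.filter fun w : Fin (n-s) → Fin q => hammingDist y w ≤ p with hB
  have hzB : z ∉ B := by
    simp only [hB, Finset.mem_filter, Finset.mem_univ, true_and]
    exact hznot
  have hsub : ↑(insert z B) ⊆ (idsBall q s p x : Set (Fin (n - s) → Fin q)) := by
    intro w hw
    rw [Finset.coe_insert, Set.mem_insert_iff] at hw
    rcases hw with rfl | hw
    · exact hzmem
    · rw [Finset.mem_coe, hB, Finset.mem_filter] at hw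
      exact hmem f hf w (by rw [hfy]; exact hw.2)
  have hcard : (insert z B).card
      = (∑ i ∈ Finset.range (p + 1), (n - s).choose i * (q - 1) ^ i) + 1 := by
    rw [Finset.card_insert_of_notMem hzB, hB, ball_card]
  have hle : (insert z B).card ≤ (idsBall q s p x : Set (Fin (n - s) → Fin q)).ncard := by
    have h := Set.ncard_le_ncard hsub (Set.toFinite _)
    rwa [Set.ncard_coe_finset] at h
  omega
end

section
/- For all non-negative integers n, q, p with q ≥ 1 and any two distinct sequences u, v ∈ A_q^n, the intersection of their Hamming balls of radius p satisfies |B_{0,0,p}(u) ∩ B_{0,0,p}(v)| ≤ q · Σ_{i=0}^{p-1} C(n-1, i) (q-1)^i. -/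
open Finset

lemma ballCard {ι : Type*} [Fintype ι] [DecidableEq ι] (q r : ℕ) (c : ι → Fin q) :
    (univ.filter fun z : ι → Fin q => hammingDist c z ≤ r).card
      ≤ ∑ i ∈ range (r + 1), (Fintype.card ι).choose i * (q - 1) ^ i := by
  classical
  set supp : (ι → Fin q) → Finset ι := fun z => univ.filter fun i => z i ≠ c i with hsupp
  have hsuppcard : ∀ z : ι → Fin q, (supp z).card = hammingDist c z := by
    intro z
    simp only [hsupp, hammingDist]
    congr 1
    exact filter_congr fun i _ => by simp [ne_comm]
  set T : Finset (Finset ι) := univ.powerset.filter fun S => S.card ≤ r with hT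
  have hmaps : ∀ z ∈ (univ.filter fun z : ι → Fin q => hammingDist c z ≤ r), supp z ∈ T := by
    intro z hz
    simp only [mem_filter, mem_univ, true_and] at hz
    simp [hT, hsuppcard z, hz]
  rw [Finset.card_eq_sum_card_fiberwise hmaps]
  have hfiber : ∀ S ∈ T,
      ((univ.filter fun z : ι → Fin q => hammingDist c z ≤ r).filter
        fun z => supp z = S).card ≤ (q - 1) ^ S.card := by
    intro S _
    have hsub : ((univ.filter fun z : ι → Fin q => hammingDist c z ≤ r).filter
        fun z => supp z = S) ⊆ Fintype.piFinset fun i => if i ∈ S then univ.filter (· ≠ c i) else {c i} := by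
      intro z hz
      simp only [mem_filter] at hz
      rw [Fintype.mem_piFinset]
      intro i
      by_cases hi : i ∈ S
      · have hm : i ∈ supp z := hz.2.symm ▸ hi
        simp only [hsupp, mem_filter, mem_univ, true_and] at hm
        simp [hi, hm]
      · have hzi : z i = c i := by
          by_contra hne
          exact hi (hz.2 ▸ (by simp [hsupp, hne]))
        simp [hi, hzi]
    calc _ ≤ (Fintype.piFinset fun i => if i ∈ S then univ.filter (· ≠ c i) else {c i}).card :=
            Finset.card_le_card hsub
      _ = ∏ i : ι, (if i ∈ S then (univ.filter (· ≠ c i)).card else ({c i} : Finset (Fin q)).card) := by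
            rw [Fintype.card_piFinset]; exact Finset.prod_congr rfl fun i _ => apply_ite Finset.card _ _ _
      _ = ∏ i : ι, (if i ∈ S then q - 1 else 1) := by
            refine Finset.prod_congr rfl fun i _ => ?_
            split_ifs with h
            · rw [filter_ne', card_erase_of_mem (mem_univ _), card_univ, Fintype.card_fin]
            · exact card_singleton _
      _ = (q - 1) ^ S.card := by
            rw [Finset.prod_ite_mem, univ_inter, Finset.prod_const]
  calc ∑ S ∈ T, ((univ.filter fun z : ι → Fin q => hammingDist c z ≤ r).filter
        fun z => supp z = S).card
      ≤ ∑ S ∈ T, (q - 1) ^ S.card := Finset.sum_le_sum hfiber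
    _ = ∑ i ∈ range (r + 1), ∑ S ∈ T.filter (fun S => S.card = i), (q - 1) ^ S.card := by
        rw [Finset.sum_fiberwise_of_maps_to (fun S hS => by
          simp only [hT, mem_filter] at hS
          simpa using Nat.lt_succ_of_le hS.2)]
    _ ≤ ∑ i ∈ range (r + 1), (Fintype.card ι).choose i * (q - 1) ^ i := by
        refine Finset.sum_le_sum fun i hi => ?_
        have : T.filter (fun S => S.card = i) = powersetCard i univ := by
          ext S
          simp only [hT, mem_filter, mem_powerset, mem_powersetCard, mem_range] at *
          constructor
          · rintro ⟨⟨h1, h2⟩, h3⟩; exact ⟨h1, h3⟩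
          · rintro ⟨h1, h3⟩
            exact ⟨⟨h1, by omega⟩, h3⟩
        rw [this]
        refine le_of_eq ?_
        calc ∑ S ∈ powersetCard i univ, (q - 1) ^ S.card
            = ∑ _S ∈ powersetCard i univ, (q - 1) ^ i :=
              Finset.sum_congr rfl fun S hS => by rw [(mem_powersetCard.mp hS).2]
          _ = (Fintype.card ι).choose i * (q - 1) ^ i := by
              rw [Finset.sum_const, smul_eq_mul, card_powersetCard, card_univ]

lemma ballCardLt {ι : Type*} [Fintype ι] [DecidableEq ι] (q p : ℕ) (c : ι → Fin q) :
    (univ.filter fun z : ι → Fin q => hammingDist c z + 1 ≤ p).card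
      ≤ ∑ i ∈ range p, (Fintype.card ι).choose i * (q - 1) ^ i := by
  cases p with
  | zero => simp
  | succ r =>
      have h : (univ.filter fun z : ι → Fin q => hammingDist c z + 1 ≤ r + 1)
          = univ.filter fun z : ι → Fin q => hammingDist c z ≤ r := by
        apply filter_congr
        intro z _
        simp [Nat.succ_le_succ_iff]
      rw [h]
      exact ballCard q r c


/-- maximum intersection size of two distinct Hamming balls of
radius `p`. -/
theorem hammingBall_inter_le (n q p : ℕ) (hq : 1 ≤ q) (u v : Fin n → Fin q)
    (huv : u ≠ v) :
    (({ z | hammingDist u z ≤ p } ∩ { z | hammingDist v z ≤ p } :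
        Set (Fin n → Fin q))).ncard ≤
      q * ∑ i ∈ Finset.range p, (n - 1).choose i * (q - 1) ^ i := by
  classical
  obtain ⟨j, hj⟩ := Function.ne_iff.mp huv
  have hcard : Fintype.card {i : Fin n // i ≠ j} = n - 1 := by
    rw [Fintype.card_subtype_compl, Fintype.card_subtype_eq, Fintype.card_fin]
  set res : (Fin n → Fin q) → ({i : Fin n // i ≠ j} → Fin q) := fun z i => z i.1 with hres
  have key : ∀ a b : Fin n → Fin q, a j ≠ b j →
      hammingDist (res a) (res b) + 1 ≤ hammingDist a b := by
    intro a b hab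
    have hmem : j ∈ univ.filter fun i => a i ≠ b i := by simp [hab]
    have hd1 : hammingDist (res a) (res b)
        = (univ.filter fun i : {i : Fin n // i ≠ j} => a i.1 ≠ b i.1).card := rfl
    have hd2 : hammingDist a b = (univ.filter fun i => a i ≠ b i).card := rfl
    have hinj : (univ.filter fun i : {i : Fin n // i ≠ j} => a i.1 ≠ b i.1).card
        ≤ ((univ.filter fun i => a i ≠ b i).erase j).card := by
      apply Finset.card_le_card_of_injOn (fun i => i.1)
      · intro i hi
        simp only [mem_coe, mem_filter, mem_univ, true_and] at hi
        exact mem_erase.mpr ⟨i.2, by simp [hi]⟩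
      · intro x _ y _ h
        exact Subtype.ext h
    have h2 : ((univ.filter fun i => a i ≠ b i).erase j).card
        = (univ.filter fun i => a i ≠ b i).card - 1 := card_erase_of_mem hmem
    have h3 : 0 < (univ.filter fun i => a i ≠ b i).card := card_pos.mpr ⟨j, hmem⟩
    omega
  set B := ∑ i ∈ Finset.range p, (n - 1).choose i * (q - 1) ^ i with hB
  set Bu := univ.filter fun w : {i : Fin n // i ≠ j} → Fin q =>
    hammingDist (res u) w + 1 ≤ p with hBu
  set Bv := univ.filter fun w : {i : Fin n // i ≠ j} → Fin q =>
    hammingDist (res v) w + 1 ≤ p with hBv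
  set I : Finset (Fin n → Fin q) :=
    univ.filter fun z => hammingDist u z ≤ p ∧ hammingDist v z ≤ p with hI
  have hset : ({ z | hammingDist u z ≤ p } ∩ { z | hammingDist v z ≤ p } :
      Set (Fin n → Fin q)) = ↑I := by
    ext z
    simp [hI]
  rw [hset, Set.ncard_coe_finset]
  set T := (({u j} : Finset (Fin q)) ×ˢ Bv) ∪ ((({u j} : Finset (Fin q))ᶜ) ×ˢ Bu) with hTdef
  have hIT : I.card ≤ T.card := by
    apply Finset.card_le_card_of_injOn (fun z => (z j, res z))
    · intro z hz
      simp only [hI, mem_coe, mem_filter, mem_univ, true_and] at hz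
      by_cases h : z j = u j
      · have hvz : v j ≠ z j := by
          rw [h]
          exact fun e => hj e.symm
        have hk := key v z hvz
        apply mem_union_left
        refine mem_product.mpr ⟨by simp [h], ?_⟩
        simp only [hBv, mem_filter, mem_univ, true_and]
        omega
      · have huz : u j ≠ z j := fun e => h e.symm
        have hk := key u z huz
        apply mem_union_right
        refine mem_product.mpr ⟨by simp [h], ?_⟩
        simp only [hBu, mem_filter, mem_univ, true_and]
        omega
    · intro x _ y _ hxy
      have h1 : x j = y j := congrArg Prod.fst hxy
      have h2 : res x = res y := congrArg Prod.snd hxy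
      funext i
      by_cases hij : i = j
      · rw [hij]; exact h1
      · exact congrFun h2 ⟨i, hij⟩
  have hBuB : Bu.card ≤ B := by
    have := ballCardLt q p (res u)
    rwa [hcard] at this
  have hBvB : Bv.card ≤ B := by
    have := ballCardLt q p (res v)
    rwa [hcard] at this
  have hT : T.card ≤ q * B := by
    calc T.card ≤ (({u j} : Finset (Fin q)) ×ˢ Bv).card
          + (((({u j} : Finset (Fin q))ᶜ)) ×ˢ Bu).card := card_union_le _ _
      _ = 1 * Bv.card + (q - 1) * Bu.card := by
          rw [card_product, card_product, card_singleton, card_compl, card_singleton,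
            Fintype.card_fin]
      _ ≤ 1 * B + (q - 1) * B := by
          exact Nat.add_le_add (Nat.mul_le_mul_left 1 hBvB) (Nat.mul_le_mul_left (q - 1) hBuB)
      _ = (1 + (q - 1)) * B := by ring
      _ = q * B := by
          congr 1
          omega
  exact hIT.trans hT
end

section
/- For all integers q ≥ 2, p ≥ 0, and m ≥ p + 1, the strict inequality q · Σ_{i=0}^{p-1} C(m-1, i) (q-1)^i < Σ_{i=0}^{p} C(m, i) (q-1)^i holds. -/
/-- a binomial inequality. -/
theorem binom_sum_lt (q p m : ℕ) (hq : 2 ≤ q) (hm : p + 1 ≤ m) :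
    q * ∑ i ∈ Finset.range p, (m - 1).choose i * (q - 1) ^ i <
      ∑ i ∈ Finset.range (p + 1), m.choose i * (q - 1) ^ i := by
  have key : ∀ (r m p : ℕ), ∑ i ∈ Finset.range (p + 1), (m + 1).choose i * r ^ i
      = (r + 1) * ∑ i ∈ Finset.range p, m.choose i * r ^ i + m.choose p * r ^ p := by
    intro r m p
    induction p with
    | zero => simp
    | succ p ih =>
      rw [Finset.sum_range_succ, ih, Finset.sum_range_succ, Nat.choose_succ_succ]
      ring
  obtain ⟨m', rfl⟩ : ∃ m', m = m' + 1 := ⟨m - 1, by omega⟩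
  rw [key]
  simp only [Nat.add_sub_cancel]
  have h1 : q - 1 + 1 = q := by omega
  rw [h1]
  have h2 : 0 < m'.choose p := Nat.choose_pos (by omega)
  have h3 : 0 < (q - 1) ^ p := pow_pos (by omega) p
  nlinarith
end

section
/- For all non-negative integers n, q, t, p with q ≥ 1, t ≥ 1, p ≥ 1, p < n, and every sequence x ∈ A_q^n with more than one run, the strict inequality |B_{t,0,p}(x)| > Σ_{i=0}^{t+p} C(n+t, i) (q-1)^i holds; in particular, the size of the t-insertion p-substitution ball is not uniform over A_q^n in this regime. -/
namespace ISBAux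

open Finset


variable {q : ℕ}

/-- number of mismatches of the embedding `f`. -/
def mism {n m : ℕ} (x : Fin n → Fin q) (z : Fin m → Fin q) (f : Fin n → Fin m) : ℕ :=
  (univ.filter fun i => x i ≠ z (f i)).card

/-- `x` embeds into `z` with at most `p` mismatches. -/
def Emb (p : ℕ) {n m : ℕ} (x : Fin n → Fin q) (z : Fin m → Fin q) : Prop :=
  ∃ f : Fin n → Fin m, StrictMono f ∧ mism x z f ≤ p

open scoped Classical

/-- the ball as a finset -/
noncomputable def ballF (p : ℕ) {n : ℕ} (x : Fin n → Fin q) (m : ℕ) :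
    Finset (Fin m → Fin q) :=
  univ.filter fun z => Emb p x z

lemma mem_ballF {p n m : ℕ} {x : Fin n → Fin q} {z : Fin m → Fin q} :
    z ∈ ballF p x m ↔ Emb p x z := by
  classical
  simp [ballF]

/-- the count that is the exact ball size for a one-run word. -/
def Nval (Q len r : ℕ) : ℕ := ∑ i ∈ Finset.range (r + 1), len.choose i * Q ^ i

lemma Nval_pascal (Q L r : ℕ) :
    Nval Q (L + 1) (r + 1) = Nval Q L (r + 1) + Q * Nval Q L r := by
  unfold Nval
  rw [Finset.sum_range_succ' (fun i => (L + 1).choose i * Q ^ i),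
    Finset.sum_range_succ' (fun i => L.choose i * Q ^ i)]
  simp only [Nat.choose_succ_succ, Nat.succ_eq_add_one, Nat.choose_zero_right, pow_zero,
    mul_one, add_mul, Finset.sum_add_distrib, Finset.mul_sum, pow_succ]
  have h : ∀ x : ℕ, Q * (L.choose x * Q ^ x) = L.choose x * (Q ^ x * Q) := fun x => by ring
  simp only [h]
  omega

lemma Nval_full (Q len k : ℕ) (hk : len ≤ k) : Nval Q len k = (Q + 1) ^ len := by
  unfold Nval
  rw [← Finset.sum_subset (Finset.range_subset_range.2 (by omega) :
      Finset.range (len + 1) ⊆ Finset.range (k + 1))]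
  · rw [add_pow Q 1 len]
    refine Finset.sum_congr rfl fun i hi => ?_
    simp [mul_comm]
  · intro i hi hni
    simp only [Finset.mem_range] at hi hni
    rw [Nat.choose_eq_zero_of_lt (by omega), zero_mul]

lemma strictMono_le_apply {n m : ℕ} {f : Fin n → Fin m} (hf : StrictMono f) (i : Fin n) :
    (i : ℕ) ≤ (f i : ℕ) := by
  induction' hi : (i : ℕ) with k ih generalizing i
  · exact Nat.zero_le _
  · have hk : k < n := by omega
    have h1 : f ⟨k, hk⟩ < f i := hf (by simp [Fin.lt_def, hi])
    have h2 := ih ⟨k, hk⟩ rfl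
    simp only [Fin.lt_def] at h1
    omega

lemma strictMono_cons0 {n m : ℕ} {f : Fin n → Fin m} (hf : StrictMono f) :
    StrictMono (Fin.cons 0 (fun i => (f i).succ) : Fin (n + 1) → Fin (m + 1)) := by
  intro i j hij
  rcases Fin.eq_zero_or_eq_succ j with rfl | ⟨j', rfl⟩
  · exact absurd hij (Fin.not_lt_zero i)
  rcases Fin.eq_zero_or_eq_succ i with rfl | ⟨i', rfl⟩
  · simpa using Fin.succ_pos _
  · simp only [Fin.cons_succ]
    exact Fin.succ_lt_succ_iff.2 (hf (Fin.succ_lt_succ_iff.1 hij))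

lemma mism_cons {n m : ℕ} (a : Fin q) (x' : Fin n → Fin q) (b : Fin q)
    (z' : Fin m → Fin q) (f : Fin n → Fin m) :
    mism (Fin.cons a x') (Fin.cons b z') (Fin.cons 0 (fun i => (f i).succ)) =
      (if a ≠ b then 1 else 0) + mism x' z' f := by
  classical
  unfold mism
  rw [Finset.card_filter, Finset.card_filter, Fin.sum_univ_succ]
  simp [Fin.cons_succ, Fin.cons_zero]

lemma emb_cons_match {p n m : ℕ} {x' : Fin n → Fin q} {z' : Fin m → Fin q} (a : Fin q)
    (h : Emb p x' z') : Emb p (Fin.cons a x') (Fin.cons a z') := by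
  obtain ⟨f, hf, hm⟩ := h
  exact ⟨_, strictMono_cons0 hf, by rw [mism_cons]; simpa using hm⟩

lemma emb_cons_sub {p n m : ℕ} {x' : Fin n → Fin q} {z' : Fin m → Fin q} (a b : Fin q)
    (h : Emb p x' z') : Emb (p + 1) (Fin.cons a x') (Fin.cons b z') := by
  obtain ⟨f, hf, hm⟩ := h
  refine ⟨_, strictMono_cons0 hf, ?_⟩
  rw [mism_cons]
  have : (if a ≠ b then 1 else 0) ≤ 1 := by split <;> omega
  omega

lemma emb_skip {p n m : ℕ} {x : Fin n → Fin q} {z' : Fin m → Fin q} (b : Fin q)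
    (h : Emb p x z') : Emb p x (Fin.cons b z') := by
  obtain ⟨f, hf, hm⟩ := h
  refine ⟨fun i => (f i).succ, fun i j hij => Fin.succ_lt_succ_iff.2 (hf hij), ?_⟩
  unfold mism at hm ⊢
  simpa [Fin.cons_succ] using hm

lemma card_filter_cons {m : ℕ} (P : (Fin (m + 1) → Fin q) → Prop) [DecidablePred P] :
    (univ.filter P).card =
      ∑ b : Fin q, (univ.filter fun z' : Fin m → Fin q => P (Fin.cons b z')).card := by
  classical
  rw [Finset.card_eq_sum_card_fiberwise
    (f := fun z : Fin (m + 1) → Fin q => z 0) (t := univ) (fun z _ => mem_univ _)]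
  refine Finset.sum_congr rfl fun b _ => ?_
  refine Finset.card_bij' (fun z _ => Fin.tail z) (fun z' _ => Fin.cons b z') ?_ ?_ ?_ ?_
  · intro z hz
    simp only [Finset.mem_filter, mem_univ, true_and] at hz ⊢
    obtain ⟨hP, rfl⟩ := hz
    rw [Fin.cons_self_tail]; exact hP
  · intro z' hz'
    simp only [Finset.mem_filter, mem_univ, true_and] at hz' ⊢
    exact ⟨hz', by simp⟩
  · intro z hz
    simp only [Finset.mem_filter, mem_univ, true_and] at hz
    obtain ⟨hP, rfl⟩ := hz
    exact Fin.cons_self_tail z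
  · intro z' _
    simp


lemma Nval_zero (Q L : ℕ) : Nval Q L 0 = 1 := by simp [Nval]

lemma ballF_zero (p m : ℕ) (x : Fin 0 → Fin q) : ballF p x m = univ := by
  refine Finset.eq_univ_of_forall fun z => mem_ballF.2 ⟨fun i => i.elim0, fun i => i.elim0, ?_⟩
  simp [mism]

lemma lemA_zero (hq : 1 ≤ q) (m p : ℕ) (x : Fin 0 → Fin q) :
    Nval (q - 1) m (m + p) ≤ (ballF p x m).card := by
  rw [ballF_zero, Nval_full _ _ _ (by omega), Nat.sub_add_cancel hq, Finset.card_univ]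
  simp [Fintype.card_fun]

lemma lemA (hq : 1 ≤ q) :
    ∀ m n u p : ℕ, ∀ x : Fin n → Fin q, n + u = m →
      Nval (q - 1) m (u + p) ≤ (ballF p x m).card := by
  intro m
  induction m with
  | zero =>
    intro n u p x h
    have hn : n = 0 := by omega
    match n, x with
    | 0, x =>
      have hu : u = 0 := by omega
      subst hu
      simpa using lemA_zero hq 0 p x
  | succ m' ih =>
    intro n u p x h
    match n, x with
    | 0, x =>
      have hu : u = m' + 1 := by omega
      subst hu
      exact lemA_zero hq (m' + 1) p x
    | n' + 1, x =>
      have hx : Fin.cons (x 0) (Fin.tail x) = x := Fin.cons_self_tail x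
      have hcard : (ballF p x (m' + 1)).card =
          ∑ b : Fin q, (univ.filter fun z' : Fin m' → Fin q =>
            Emb p x (Fin.cons b z')).card := by
        unfold ballF
        exact card_filter_cons _
      have ha : (ballF p (Fin.tail x) m').card ≤
          (univ.filter fun z' : Fin m' → Fin q => Emb p x (Fin.cons (x 0) z')).card := by
        apply Finset.card_le_card
        intro z hz
        simp only [Finset.mem_filter, mem_univ, true_and]
        have := emb_cons_match (x 0) (mem_ballF.1 hz)
        rwa [hx] at this
      have hA : Nval (q - 1) m' (u + p) ≤
          (univ.filter fun z' : Fin m' → Fin q => Emb p x (Fin.cons (x 0) z')).card :=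
        le_trans (ih n' u p (Fin.tail x) (by omega)) ha
      have hsum : ∀ c : ℕ,
          (∀ b : Fin q, b ≠ x 0 →
            c ≤ (univ.filter fun z' : Fin m' → Fin q => Emb p x (Fin.cons b z')).card) →
          Nval (q - 1) m' (u + p) + (q - 1) * c ≤ (ballF p x (m' + 1)).card := by
        intro c hc
        rw [hcard, ← Finset.sum_erase_add _ _ (mem_univ (x 0))]
        have h1 : (univ.erase (x 0)).card • c ≤
            ∑ b ∈ univ.erase (x 0),
              (univ.filter fun z' : Fin m' → Fin q => Emb p x (Fin.cons b z')).card :=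
          Finset.card_nsmul_le_sum _ _ _ (fun b hb => hc b (Finset.mem_erase.1 hb).1)
        have h2 : (univ.erase (x 0)).card = q - 1 := by
          rw [Finset.card_erase_of_mem (mem_univ _), Finset.card_univ, Fintype.card_fin]
        rw [h2, smul_eq_mul] at h1
        omega
      rcases u with _ | u'
      · rcases p with _ | p''
        · have h3 := hsum 0 (fun b _ => Nat.zero_le _)
          have h4 : Nval (q - 1) (m' + 1) (0 + 0) = 1 := by
            simpa using Nval_zero (q - 1) (m' + 1)
          have h5 : Nval (q - 1) m' (0 + 0) = 1 := by
            simpa using Nval_zero (q - 1) m'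
          omega
        · have hb : ∀ b : Fin q, b ≠ x 0 →
              Nval (q - 1) m' (0 + p'') ≤
              (univ.filter fun z' : Fin m' → Fin q =>
                Emb (p'' + 1) x (Fin.cons b z')).card := by
            intro b _
            refine le_trans (ih n' 0 p'' (Fin.tail x) (by omega)) (Finset.card_le_card ?_)
            intro z hz
            simp only [Finset.mem_filter, mem_univ, true_and]
            have := emb_cons_sub (x 0) b (mem_ballF.1 hz)
            rwa [hx] at this
          have h3 := hsum _ hb
          have h4 : Nval (q - 1) (m' + 1) (0 + (p'' + 1)) =
              Nval (q - 1) m' (0 + (p'' + 1)) + (q - 1) * Nval (q - 1) m' (0 + p'') := by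
            simpa using Nval_pascal (q - 1) m' p''
          omega
      · have hb : ∀ b : Fin q, b ≠ x 0 →
            Nval (q - 1) m' (u' + p) ≤
            (univ.filter fun z' : Fin m' → Fin q => Emb p x (Fin.cons b z')).card := by
          intro b _
          refine le_trans (ih (n' + 1) u' p x (by omega)) (Finset.card_le_card ?_)
          intro z hz
          simp only [Finset.mem_filter, mem_univ, true_and]
          exact emb_skip b (mem_ballF.1 hz)
        have h3 := hsum _ hb
        have h4 : Nval (q - 1) (m' + 1) (u' + 1 + p) =
            Nval (q - 1) m' (u' + 1 + p) + (q - 1) * Nval (q - 1) m' (u' + p) := by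
          have e : u' + 1 + p = (u' + p) + 1 := by omega
          rw [e, Nval_pascal]
        omega

lemma two_le_q {a b : Fin q} (hab : a ≠ b) : 2 ≤ q := by
  have : Nontrivial (Fin q) := ⟨⟨a, b, hab⟩⟩
  have h := Fintype.one_lt_card (α := Fin q)
  rw [Fintype.card_fin] at h
  omega

lemma exists_adjacent {n : ℕ} {x : Fin (n + 1) → Fin q} (hx : ∃ i j, x i ≠ x j) :
    ∃ k : Fin n, x k.castSucc ≠ x k.succ := by
  by_contra hcon
  push_neg at hcon
  have hconst : ∀ i, x i = x 0 := by
    intro i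
    induction i using Fin.induction with
    | zero => rfl
    | succ k ih => rw [← hcon k]; exact ih
  obtain ⟨i, j, hij⟩ := hx
  exact hij (by rw [hconst i, hconst j])

lemma emb_of_single_match {n m : ℕ} (hnm : n ≤ m) (x : Fin n → Fin q) (z : Fin m → Fin q)
    (i : Fin n) (s : Fin m) (his : (i : ℕ) ≤ s) (h2 : (s : ℕ) + n ≤ m + i)
    (hmatch : x i = z s) : Emb (n - 1) x z := by
  have hin := i.isLt
  have hsm := s.isLt
  refine ⟨fun j => ⟨if (j : ℕ) < (i : ℕ) then (j : ℕ) else (j : ℕ) + s - i,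
    by have := j.isLt; split <;> omega⟩, ?_, ?_⟩
  · intro j1 j2 hj
    have hj' : (j1 : ℕ) < (j2 : ℕ) := hj
    simp only [Fin.lt_def]
    split <;> split <;> omega
  · unfold mism
    have hsub : (univ.filter fun j =>
        x j ≠ z ⟨if (j : ℕ) < (i : ℕ) then (j : ℕ) else (j : ℕ) + s - i,
          by have := j.isLt; split <;> omega⟩) ⊆ univ.erase i := by
      intro j hj
      rw [Finset.mem_filter] at hj
      rw [Finset.mem_erase]
      refine ⟨?_, mem_univ _⟩
      rintro rfl
      apply hj.2
      have hval : (⟨if (j : ℕ) < (j : ℕ) then (j : ℕ) else (j : ℕ) + s - j,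
          by have := j.isLt; split <;> omega⟩ : Fin m) = s := by
        apply Fin.ext
        simp only [lt_irrefl, if_false]
        omega
      rw [hval, ← hmatch]
    calc (univ.filter _).card ≤ (univ.erase i).card := Finset.card_le_card hsub
    _ = n - 1 := by rw [Finset.card_erase_of_mem (mem_univ _), Finset.card_univ,
        Fintype.card_fin]

lemma card_filter_val_bounds {n : ℕ} (P : Fin n → Prop) [DecidablePred P] (a b : ℕ)
    (h : ∀ i, P i → a ≤ (i : ℕ) ∧ (i : ℕ) < b) : (univ.filter P).card ≤ b - a := by
  have : (univ.filter P).card ≤ (Finset.Ico a b).card := by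
    refine Finset.card_le_card_of_injOn (fun i => (i : ℕ)) ?_ ?_
    · intro i hi
      rw [Finset.mem_coe] at hi
      rw [Finset.mem_coe, Finset.mem_Ico]
      exact h i (Finset.mem_filter.1 hi).2
    · intro i _ j _ hij
      exact Fin.val_injective hij
  simpa [Nat.card_Ico] using this

lemma card_ball_succ_ge {p n m' : ℕ} (x : Fin (n + 1) → Fin q) (ca cb : ℕ)
    (hca : ca ≤ (univ.filter fun z' : Fin m' → Fin q => Emb p x (Fin.cons (x 0) z')).card)
    (hcb : ∀ b : Fin q, b ≠ x 0 →
      cb ≤ (univ.filter fun z' : Fin m' → Fin q => Emb p x (Fin.cons b z')).card) :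
    ca + (q - 1) * cb ≤ (ballF p x (m' + 1)).card := by
  have hcard : (ballF p x (m' + 1)).card =
      ∑ b : Fin q, (univ.filter fun z' : Fin m' → Fin q => Emb p x (Fin.cons b z')).card := by
    unfold ballF
    exact card_filter_cons _
  rw [hcard, ← Finset.sum_erase_add _ _ (mem_univ (x 0))]
  have h1 := Finset.card_nsmul_le_sum (univ.erase (x 0)) _ cb
    (fun b hb => hcb b (Finset.mem_erase.1 hb).1)
  have h2 : (univ.erase (x 0)).card = q - 1 := by
    rw [Finset.card_erase_of_mem (mem_univ _), Finset.card_univ, Fintype.card_fin]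
  rw [h2, smul_eq_mul] at h1
  omega

lemma lemB_eq_case (hq2 : 2 ≤ q) {n' u : ℕ} (hu : 1 ≤ u) (x : Fin (n' + 1) → Fin q)
    (k : Fin n') (hk : x k.castSucc ≠ x k.succ) :
    Nval (q - 1) ((n' + u) + 1) (u + n') + 1 ≤ (ballF n' x ((n' + u) + 1)).card := by
  have hq : 1 ≤ q := by omega
  have hkval := k.isLt
  set s0 : Fin ((n' + u) + 1) := ⟨(k : ℕ) + 1, by omega⟩ with hs0
  have key1 : ∀ z : Fin ((n' + u) + 1) → Fin q, z ∉ ballF n' x ((n' + u) + 1) →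
      ∀ s : Fin ((n' + u) + 1), z s ≠ x ⟨min (s : ℕ) n', by omega⟩ := by
    intro z hz s h
    refine hz (mem_ballF.2 ?_)
    have hs := s.isLt
    have hemb := emb_of_single_match (by omega : n' + 1 ≤ (n' + u) + 1) x z
      ⟨min (s : ℕ) n', by omega⟩ s ?_ ?_ h.symm
    · exact hemb
    · show min (s : ℕ) n' ≤ (s : ℕ)
      omega
    · show (s : ℕ) + (n' + 1) ≤ ((n' + u) + 1) + min (s : ℕ) n'
      omega
  have key2 : ∀ z : Fin ((n' + u) + 1) → Fin q, z ∉ ballF n' x ((n' + u) + 1) →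
      z s0 ≠ x k.castSucc := by
    intro z hz h
    refine hz (mem_ballF.2 ?_)
    have hemb := emb_of_single_match (by omega : n' + 1 ≤ (n' + u) + 1) x z
      k.castSucc s0 ?_ ?_ h.symm
    · exact hemb
    · show (k : ℕ) ≤ (k : ℕ) + 1
      omega
    · show ((k : ℕ) + 1) + (n' + 1) ≤ ((n' + u) + 1) + (k : ℕ)
      omega
  set T : Fin ((n' + u) + 1) → Finset (Fin q) := fun s =>
    if s = s0 then (univ.erase (x ⟨min (s0 : ℕ) n', by omega⟩)).erase (x k.castSucc)
    else univ.erase (x ⟨min (s : ℕ) n', by omega⟩) with hT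
  have hsub : univ \ ballF n' x ((n' + u) + 1) ⊆ Fintype.piFinset T := by
    intro z hz
    have hz' : z ∉ ballF n' x ((n' + u) + 1) := (Finset.mem_sdiff.1 hz).2
    apply Fintype.mem_piFinset.2
    intro s
    by_cases hs : s = s0
    · subst hs
      simp only [hT]
      rw [if_true]
      exact Finset.mem_erase.2 ⟨key2 z hz',
        Finset.mem_erase.2 ⟨key1 z hz' s0, mem_univ _⟩⟩
    · simp only [hT]
      rw [if_neg hs]
      exact Finset.mem_erase.2 ⟨key1 z hz' s, mem_univ _⟩
  have hT0 : (T s0).card = q - 1 - 1 := by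
    simp only [hT]
    rw [if_true]
    have hclips0 : (⟨min (s0 : ℕ) n', by omega⟩ : Fin (n' + 1)) = k.succ := by
      apply Fin.ext
      show min ((k : ℕ) + 1) n' = (k : ℕ) + 1
      omega
    have hne : x k.castSucc ≠ x ⟨min (s0 : ℕ) n', by omega⟩ := by
      rw [hclips0]
      exact hk
    rw [Finset.card_erase_of_mem (Finset.mem_erase.2 ⟨hne, mem_univ _⟩),
      Finset.card_erase_of_mem (mem_univ _), Finset.card_univ, Fintype.card_fin]
  have hTs : ∀ s, s ≠ s0 → (T s).card = q - 1 := by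
    intro s hs
    simp only [hT]
    rw [if_neg hs, Finset.card_erase_of_mem (mem_univ _), Finset.card_univ,
      Fintype.card_fin]
  have hprod : (∏ s, (T s).card) = (q - 1 - 1) * (q - 1) ^ (n' + u) := by
    rw [← Finset.mul_prod_erase univ _ (mem_univ s0), hT0]
    congr 1
    rw [Finset.prod_congr rfl (fun s hs => hTs s (Finset.mem_erase.1 hs).1),
      Finset.prod_const, Finset.card_erase_of_mem (mem_univ _), Finset.card_univ,
      Fintype.card_fin]
    congr 1
  have hle : (univ \ ballF n' x ((n' + u) + 1)).card ≤ (q - 1 - 1) * (q - 1) ^ (n' + u) := by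
    calc (univ \ ballF n' x ((n' + u) + 1)).card ≤ (Fintype.piFinset T).card :=
          Finset.card_le_card hsub
      _ = ∏ s, (T s).card := Fintype.card_piFinset T
      _ = (q - 1 - 1) * (q - 1) ^ (n' + u) := hprod
  have hsdiff : (univ \ ballF n' x ((n' + u) + 1)).card + (ballF n' x ((n' + u) + 1)).card
      = q ^ ((n' + u) + 1) := by
    rw [Finset.card_sdiff_add_card_eq_card (Finset.subset_univ _), Finset.card_univ]
    simp [Fintype.card_fun]
  have hNval : Nval (q - 1) ((n' + u) + 1) (u + n') + (q - 1) ^ ((n' + u) + 1)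
      = q ^ ((n' + u) + 1) := by
    have e : u + n' = n' + u := by omega
    rw [e]
    have h1 : Nval (q - 1) ((n' + u) + 1) ((n' + u) + 1) = (q - 1 + 1) ^ ((n' + u) + 1) :=
      Nval_full _ _ _ le_rfl
    rw [Nat.sub_add_cancel hq] at h1
    have h2 : Nval (q - 1) ((n' + u) + 1) ((n' + u) + 1)
        = Nval (q - 1) ((n' + u) + 1) (n' + u) + (q - 1) ^ ((n' + u) + 1) := by
      unfold Nval
      rw [Finset.sum_range_succ]
      simp [Nat.choose_self]
    omega
  have hpow1 : 1 ≤ (q - 1) ^ (n' + u) := Nat.one_le_pow _ _ (by omega)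
  have hsplit : (q - 1) ^ ((n' + u) + 1)
      = (q - 1 - 1) * (q - 1) ^ (n' + u) + (q - 1) ^ (n' + u) := by
    have h : (q - 1 - 1) * (q - 1) ^ (n' + u) + (q - 1) ^ (n' + u)
        = (q - 1 - 1 + 1) * (q - 1) ^ (n' + u) := by ring
    have e2 : q - 1 - 1 + 1 = q - 1 := by omega
    rw [h, e2]
    exact pow_succ' _ _
  omega

lemma lemB (hq : 1 ≤ q) :
    ∀ n u p : ℕ, ∀ x : Fin n → Fin q, 1 ≤ p → p < n → 1 ≤ u → (∃ i j, x i ≠ x j) →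
      Nval (q - 1) (n + u) (u + p) + 1 ≤ (ballF p x (n + u)).card := by
  intro n
  induction n with
  | zero =>
    intro u p x hp hpn hu hx
    omega
  | succ n' ih =>
    intro u p x hp hpn hu hx
    have hm : n' + 1 + u = (n' + u) + 1 := by omega
    rw [hm]
    have hx0 : Fin.cons (x 0) (Fin.tail x) = x := Fin.cons_self_tail x
    have hsliceA : (ballF p (Fin.tail x) (n' + u)).card ≤
        (univ.filter fun z' : Fin (n' + u) → Fin q => Emb p x (Fin.cons (x 0) z')).card := by
      apply Finset.card_le_card
      intro z hz
      simp only [Finset.mem_filter, mem_univ, true_and]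
      have := emb_cons_match (x 0) (mem_ballF.1 hz)
      rwa [hx0] at this
    by_cases hP1 : p = n'
    · subst hP1
      obtain ⟨k, hk⟩ := exists_adjacent hx
      exact lemB_eq_case (two_le_q hk) hu x k hk
    · have hpn' : p < n' := by omega
      by_cases hC : ∃ i j, Fin.tail x i ≠ Fin.tail x j
      · -- tail is non-constant : induction hypothesis
        rcases u with _ | u'
        · omega
        have hA := ih (u' + 1) p (Fin.tail x) hp hpn' (by omega) hC
        have hcb : ∀ b : Fin q, b ≠ x 0 →
            Nval (q - 1) (n' + (u' + 1)) (u' + p) ≤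
            (univ.filter fun z' : Fin (n' + (u' + 1)) → Fin q =>
              Emb p x (Fin.cons b z')).card := by
          intro b _
          refine le_trans (lemA hq (n' + (u' + 1)) (n' + 1) u' p x (by omega))
            (Finset.card_le_card ?_)
          intro z hz
          simp only [Finset.mem_filter, mem_univ, true_and]
          exact emb_skip b (mem_ballF.1 hz)
        have htot := card_ball_succ_ge x _ _ (le_trans hA hsliceA) hcb
        have hpas : Nval (q - 1) ((n' + (u' + 1)) + 1) ((u' + 1) + p)
            = Nval (q - 1) (n' + (u' + 1)) ((u' + 1) + p)
              + (q - 1) * Nval (q - 1) (n' + (u' + 1)) (u' + p) := by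
          have e : (u' + 1) + p = (u' + p) + 1 := by omega
          rw [e, Nval_pascal]
        omega
      · -- tail is constant
        push_neg at hC
        rcases p with _ | p''
        · omega
        rcases u with _ | u'
        · omega
        have hone : ((1 : Fin (n' + 1)) : ℕ) = 1 := by
          rw [Fin.val_one']
          exact Nat.mod_eq_of_lt (by omega)
        have hconst : ∀ i : Fin (n' + 1), i ≠ 0 → x i = x 1 := by
          intro i hi
          rcases Fin.eq_zero_or_eq_succ i with rfl | ⟨j, rfl⟩
          · exact absurd rfl hi
          · have h1 := hC j ⟨0, by omega⟩
            simp only [Fin.tail] at h1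
            rw [h1]
            congr 1
            apply Fin.ext
            simp only [Fin.val_succ, hone]
        have hab : x 0 ≠ x 1 := by
          intro h0
          obtain ⟨i, j, hij⟩ := hx
          have hxi : ∀ i : Fin (n' + 1), x i = x 1 := by
            intro i
            by_cases hz : i = 0
            · rw [hz, h0]
            · exact hconst i hz
          exact hij (by rw [hxi i, hxi j])
        have hq2 : 2 ≤ q := two_le_q hab
        set z0 : Fin (n' + (u' + 1)) → Fin q :=
          fun s => if (s : ℕ) + (p'' + 1) < n' + 1 then x 1 else x 0 with hz0
        have hzEmb : Emb p'' (Fin.tail x) z0 := by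
          refine ⟨Fin.castLE (by omega), Fin.strictMono_castLE _, ?_⟩
          unfold mism
          have hb := card_filter_val_bounds
            (fun i : Fin n' => Fin.tail x i ≠ z0 (Fin.castLE (by omega) i))
            (n' - p'') n' ?_
          · omega
          · intro i hi
            refine ⟨?_, i.isLt⟩
            by_contra hlt
            apply hi
            have hcond : ((Fin.castLE (by omega : n' ≤ n' + (u' + 1)) i : Fin (n' + (u' + 1))) : ℕ)
                + (p'' + 1) < n' + 1 := by
              simp only [Fin.coe_castLE]
              omega
            have htail : Fin.tail x i = x 1 := hconst i.succ (Fin.succ_ne_zero i)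
            rw [htail]
            simp only [hz0]
            rw [if_pos hcond]
        have hznot : ¬ Emb (p'' + 1) x z0 := by
          rintro ⟨f, hf, hmis⟩
          classical
          have hmatch := Finset.card_filter_add_card_filter_not
            (s := univ) (p := fun i : Fin (n' + 1) => x i ≠ z0 (f i))
          rw [Finset.card_univ, Fintype.card_fin] at hmatch
          have hMC : (univ.filter fun i : Fin (n' + 1) => ¬ x i ≠ z0 (f i)).card
              ≤ n' - p'' - 1 := by
            have key : ∀ i : Fin (n' + 1), x i = z0 (f i) →
                ((f 0 : ℕ) + (p'' + 1) < n' + 1 → 1 ≤ (i : ℕ) ∧ (i : ℕ) < n' + 1 - (p'' + 1))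
                ∧ (¬ ((f 0 : ℕ) + (p'' + 1) < n' + 1) → (i : ℕ) < 1) := by
              intro i hi
              constructor
              · intro hcase
                have hi0 : i ≠ 0 := by
                  rintro rfl
                  apply hab
                  rw [hi]
                  simp only [hz0]
                  rw [if_pos hcase]
                have hival : 1 ≤ (i : ℕ) := by
                  by_contra hv
                  exact hi0 (Fin.ext (by simp only [Fin.val_zero]; omega))
                have hxi : x i = x 1 := hconst i hi0
                have hz1 : z0 (f i) = x 1 := by rw [← hi]; exact hxi
                have hcond : (f i : ℕ) + (p'' + 1) < n' + 1 := by
                  by_contra hc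
                  simp only [hz0] at hz1
                  rw [if_neg hc] at hz1
                  exact hab hz1
                have hfi := strictMono_le_apply hf i
                omega
              · intro hcase
                by_contra hv
                have hi0 : i ≠ 0 := by
                  rintro rfl
                  simp at hv
                have h0i : (0 : Fin (n' + 1)) < i := by
                  rw [Fin.lt_def]
                  simp only [Fin.val_zero]
                  omega
                have hf0 : f 0 < f i := hf h0i
                rw [Fin.lt_def] at hf0
                have hcond : ¬ ((f i : ℕ) + (p'' + 1) < n' + 1) := by omega
                have hxi : x i = x 1 := hconst i hi0
                apply hab
                rw [← hxi, hi]
                simp only [hz0]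
                rw [if_neg hcond]
            by_cases hcase : (f 0 : ℕ) + (p'' + 1) < n' + 1
            · have hbd := card_filter_val_bounds
                (fun i : Fin (n' + 1) => ¬ x i ≠ z0 (f i)) 1 (n' + 1 - (p'' + 1))
                (fun i hi => (key i (not_not.1 hi)).1 hcase)
              omega
            · have hbd := card_filter_val_bounds
                (fun i : Fin (n' + 1) => ¬ x i ≠ z0 (f i)) 0 1
                (fun i hi => ⟨Nat.zero_le _, (key i (not_not.1 hi)).2 hcase⟩)
              omega
          unfold mism at hmis
          omega
        have hcb : ∀ b : Fin q, b ≠ x 0 →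
            Nval (q - 1) (n' + (u' + 1)) (u' + (p'' + 1)) + 1 ≤
            (univ.filter fun z' : Fin (n' + (u' + 1)) → Fin q =>
              Emb (p'' + 1) x (Fin.cons b z')).card := by
          intro b hb
          have hsub : insert z0 (ballF (p'' + 1) x (n' + (u' + 1))) ⊆
              (univ.filter fun z' : Fin (n' + (u' + 1)) → Fin q =>
                Emb (p'' + 1) x (Fin.cons b z')) := by
            intro z hz
            simp only [Finset.mem_filter, mem_univ, true_and]
            rcases Finset.mem_insert.1 hz with rfl | hz'
            · have := emb_cons_sub (x 0) b hzEmb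
              rwa [hx0] at this
            · exact emb_skip b (mem_ballF.1 hz')
          have hcardins : (insert z0 (ballF (p'' + 1) x (n' + (u' + 1)))).card
              = (ballF (p'' + 1) x (n' + (u' + 1))).card + 1 :=
            Finset.card_insert_of_notMem (fun hmem => hznot (mem_ballF.1 hmem))
          have hA2 := lemA hq (n' + (u' + 1)) (n' + 1) u' (p'' + 1) x (by omega)
          calc Nval (q - 1) (n' + (u' + 1)) (u' + (p'' + 1)) + 1
              ≤ (ballF (p'' + 1) x (n' + (u' + 1))).card + 1 := by omega
            _ = (insert z0 (ballF (p'' + 1) x (n' + (u' + 1)))).card := hcardins.symm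
            _ ≤ _ := Finset.card_le_card hsub
        have hca : Nval (q - 1) (n' + (u' + 1)) ((u' + 1) + (p'' + 1)) ≤
            (univ.filter fun z' : Fin (n' + (u' + 1)) → Fin q =>
              Emb (p'' + 1) x (Fin.cons (x 0) z')).card :=
          le_trans (lemA hq (n' + (u' + 1)) n' (u' + 1) (p'' + 1) (Fin.tail x) (by omega))
            hsliceA
        have htot := card_ball_succ_ge x _ _ hca hcb
        have hpas : Nval (q - 1) ((n' + (u' + 1)) + 1) ((u' + 1) + (p'' + 1))
            = Nval (q - 1) (n' + (u' + 1)) ((u' + 1) + (p'' + 1))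
              + (q - 1) * Nval (q - 1) (n' + (u' + 1)) (u' + (p'' + 1)) := by
          have e : (u' + 1) + (p'' + 1) = (u' + (p'' + 1)) + 1 := by omega
          rw [e, Nval_pascal]
        have hmul : (q - 1) * (Nval (q - 1) (n' + (u' + 1)) (u' + (p'' + 1)) + 1)
            = (q - 1) * Nval (q - 1) (n' + (u' + 1)) (u' + (p'' + 1)) + (q - 1) := by
          ring
        omega

end ISBAux

/-- strict inequality for `B_{t,0,p}(x)` when `x` has
more than one run. -/
theorem idsBall_ins_sub_strict (n q t p : ℕ) (hq : 1 ≤ q) (ht : 1 ≤ t) (hp : 1 ≤ p)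
    (hpn : p < n) (x : Fin n → Fin q) (hx : ∃ i j, x i ≠ x j) :
    (idsBall q 0 p x : Set (Fin (n + t) → Fin q)).ncard >
      ∑ i ∈ Finset.range (t + p + 1), (n + t).choose i * (q - 1) ^ i := by
  classical
  have hlemB := ISBAux.lemB (q := q) hq n t p x hp hpn ht hx
  have hsub : (↑(ISBAux.ballF p x (n + t)) : Set (Fin (n + t) → Fin q)) ⊆
      idsBall q 0 p x := by
    intro z hz
    rw [Finset.mem_coe] at hz
    obtain ⟨f, hf, hm⟩ := ISBAux.mem_ballF.1 hz
    have h1 : (Finset.univ : Finset (Fin n)).card = n - 0 := by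
      rw [Finset.card_univ, Fintype.card_fin, Nat.sub_zero]
    have h2 : (Finset.univ.map ⟨f, hf.injective⟩ : Finset (Fin (n + t))).card = n - 0 := by
      rw [Finset.card_map, Finset.card_univ, Fintype.card_fin, Nat.sub_zero]
    refine ⟨Finset.univ, Finset.univ.map ⟨f, hf.injective⟩, h1, h2, ?_⟩
    have e1 : (fun i : Fin (n - 0) => (⟨(i : ℕ), i.isLt⟩ : Fin n)) =
        ⇑(Finset.univ.orderEmbOfFin h1) :=
      Finset.orderEmbOfFin_unique h1 (fun i => Finset.mem_univ _)
        (fun a b hab => by rw [Fin.mk_lt_mk]; exact hab)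
    have e2 : (fun i : Fin (n - 0) => f ⟨(i : ℕ), i.isLt⟩) =
        ⇑((Finset.univ.map ⟨f, hf.injective⟩).orderEmbOfFin h2) :=
      Finset.orderEmbOfFin_unique h2
        (fun i => Finset.mem_map_of_mem _ (Finset.mem_univ _))
        (fun a b hab => hf (by rw [Fin.mk_lt_mk]; exact hab))
    have hxp : ∀ i : Fin (n - 0), subseqOf x Finset.univ h1 i = x ⟨(i : ℕ), i.isLt⟩ := by
      intro i
      unfold subseqOf
      rw [Finset.coe_orderIsoOfFin_apply, ← congrFun e1 i]
    have hzp : ∀ i : Fin (n - 0),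
        subseqOf z (Finset.univ.map ⟨f, hf.injective⟩) h2 i = z (f ⟨(i : ℕ), i.isLt⟩) := by
      intro i
      unfold subseqOf
      rw [Finset.coe_orderIsoOfFin_apply, ← congrFun e2 i]
    unfold hammingDist
    refine le_trans (le_trans (Finset.card_le_card_of_injOn
      (fun i : Fin (n - 0) => (⟨(i : ℕ), i.isLt⟩ : Fin n)) ?_ ?_) le_rfl) hm
    · intro i hi
      rw [Finset.mem_coe, Finset.mem_filter] at hi ⊢
      refine ⟨Finset.mem_univ _, ?_⟩
      rw [← hxp i, ← hzp i]
      exact hi.2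
    · intro a _ b _ hab
      have : (a : ℕ) = (b : ℕ) := congrArg Fin.val hab
      exact Fin.ext this
  have hcard : (ISBAux.ballF p x (n + t)).card ≤ (idsBall q 0 p x :
      Set (Fin (n + t) → Fin q)).ncard := by
    have := Set.ncard_le_ncard hsub (Set.toFinite _)
    rwa [Set.ncard_coe_finset] at this
  have hN : (∑ i ∈ Finset.range (t + p + 1), (n + t).choose i * (q - 1) ^ i) =
      ISBAux.Nval (q - 1) (n + t) (t + p) := rfl
  omega
end

section
/- For all non-negative integers n, q, t, p with q ≥ 1 and p < n, and every sequence x ∈ A_q^n, there exists an injection from B_{t,0,p}(0^n) into B_{t,0,p}(x); consequently |B_{t,0,p}(x)| ≥ Σ_{i=0}^{t+p} C(n+t, i) (q-1)^i. -/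
open Finset

/-- Membership in the insertion-substitution ball, phrased with strictly
monotone maps. -/
def BallP (q p : ℕ) {n m : ℕ} (x : Fin n → Fin q) (y : Fin m → Fin q) : Prop :=
  ∃ g : Fin n → Fin m, StrictMono g ∧ hammingDist x (y ∘ g) ≤ p

instance ballP_decidable (q p n m : ℕ) (x : Fin n → Fin q) :
    DecidablePred (BallP q p (n := n) (m := m) x) := fun y =>
  decidable_of_iff
    (∃ g : Fin n → Fin m, (∀ a b : Fin n, a < b → g a < g b) ∧
      hammingDist x (y ∘ g) ≤ p)
    ⟨fun ⟨g, h1, h2⟩ => ⟨g, fun a b hab => h1 a b hab, h2⟩,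
     fun ⟨g, h1, h2⟩ => ⟨g, fun a b hab => h1 hab, h2⟩⟩

lemma hammingDist_cons {q n : ℕ} (a b : Fin q) (u v : Fin n → Fin q) :
    hammingDist (Fin.cons a u : Fin (n+1) → Fin q) (Fin.cons b v : Fin (n+1) → Fin q)
      = (if a = b then 0 else 1) + hammingDist u v := by
  simp only [hammingDist, Finset.card_filter, Fin.sum_univ_succ, Fin.cons_zero, Fin.cons_succ]
  by_cases h : a = b <;> simp [h]

lemma strictMono_gcons {n m : ℕ} {g : Fin n → Fin m} (hg : StrictMono g) :
    StrictMono (Fin.cons 0 (Fin.succ ∘ g) : Fin (n+1) → Fin (m+1)) := by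
  intro i j hij
  induction j using Fin.cases with
  | zero => exact absurd hij (by simp)
  | succ j =>
    induction i using Fin.cases with
    | zero =>
      simp only [Fin.cons_zero, Fin.cons_succ, Function.comp_apply]
      exact Fin.succ_pos _
    | succ i =>
      simp only [Fin.cons_succ, Function.comp_apply]
      exact Fin.succ_lt_succ_iff.mpr (hg (Fin.succ_lt_succ_iff.mp hij))

lemma cons_comp_gcons {q n m : ℕ} (a : Fin q) (y : Fin m → Fin q) (g : Fin n → Fin m) :
    (Fin.cons a y) ∘ (Fin.cons 0 (Fin.succ ∘ g) : Fin (n+1) → Fin (m+1))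
      = Fin.cons a (y ∘ g) := by
  funext i
  induction i using Fin.cases with
  | zero => simp
  | succ i => simp

lemma ballP_cons_match {q p n m : ℕ} {x : Fin (n+1) → Fin q} {y : Fin m → Fin q}
    (h : BallP q p (Fin.tail x) y) : BallP q p x (Fin.cons (x 0) y) := by
  obtain ⟨g, hg, hd⟩ := h
  refine ⟨Fin.cons 0 (Fin.succ ∘ g), strictMono_gcons hg, ?_⟩
  rw [cons_comp_gcons]
  nth_rewrite 1 [← Fin.cons_self_tail x]
  rw [hammingDist_cons, if_pos rfl]
  omega

lemma ballP_cons_sub {q p n m : ℕ} {x : Fin (n+1) → Fin q} {y : Fin m → Fin q} (a : Fin q)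
    (h : BallP q p (Fin.tail x) y) : BallP q (p+1) x (Fin.cons a y) := by
  obtain ⟨g, hg, hd⟩ := h
  refine ⟨Fin.cons 0 (Fin.succ ∘ g), strictMono_gcons hg, ?_⟩
  rw [cons_comp_gcons]
  nth_rewrite 1 [← Fin.cons_self_tail x]
  rw [hammingDist_cons]
  split_ifs <;> omega

lemma ballP_cons_ins {q p n m : ℕ} {x : Fin n → Fin q} {y : Fin m → Fin q} (a : Fin q)
    (h : BallP q p x y) : BallP q p x (Fin.cons a y) := by
  obtain ⟨g, hg, hd⟩ := h
  refine ⟨Fin.succ ∘ g, fun i j hij => Fin.succ_lt_succ_iff.mpr (hg hij), ?_⟩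
  have : (Fin.cons a y) ∘ (Fin.succ ∘ g) = y ∘ g := by
    funext i; simp
  rw [this]
  exact hd

/-- decomposition of a filter-card over a `Fin (m+1)`-indexed function space
according to the value at `0`. -/
lemma card_filter_cons {q : ℕ} (m : ℕ) (P : (Fin (m+1) → Fin q) → Prop) [DecidablePred P] :
    (univ.filter P).card
      = ∑ a : Fin q, (univ.filter fun y : Fin m → Fin q => P (Fin.cons a y)).card := by
  classical
  rw [← Fintype.card_subtype]
  have e : {y : Fin (m+1) → Fin q // P y}
      ≃ Σ a : Fin q, {y : Fin m → Fin q // P (Fin.cons a y)} :=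
    { toFun := fun y => ⟨y.1 0, Fin.tail y.1, by rw [Fin.cons_self_tail]; exact y.2⟩
      invFun := fun s => ⟨Fin.cons s.1 s.2.1, s.2.2⟩
      left_inv := fun y => Subtype.ext (Fin.cons_self_tail y.1)
      right_inv := fun s => rfl }
  rw [Fintype.card_congr e, Fintype.card_sigma]
  refine Finset.sum_congr rfl fun a _ => ?_
  rw [Fintype.card_subtype]

lemma filter_sub_filter {α : Type*} [Fintype α] {p q : α → Prop}
    [DecidablePred p] [DecidablePred q] (h : ∀ a, p a → q a) :
    (univ.filter p) ⊆ (univ.filter q) := by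
  intro a ha
  rw [Finset.mem_filter] at ha ⊢
  exact ⟨ha.1, h a ha.2⟩

lemma pascal_sum (M R k : ℕ) :
    ∑ i ∈ Finset.range (R+2), (M+1).choose i * k^i
      = ∑ i ∈ Finset.range (R+2), M.choose i * k^i
        + k * ∑ i ∈ Finset.range (R+1), M.choose i * k^i := by
  rw [Finset.sum_range_succ' (fun i => (M+1).choose i * k^i) (R+1),
      Finset.sum_range_succ' (fun i => M.choose i * k^i) (R+1),
      Finset.mul_sum]
  rw [show ∑ i ∈ Finset.range (R+1), (M+1).choose (i+1) * k^(i+1)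
      = ∑ i ∈ Finset.range (R+1), (M.choose (i+1) * k^(i+1) + M.choose i * k^(i+1)) from
    Finset.sum_congr rfl fun i _ => by rw [Nat.choose_succ_succ]; ring]
  rw [Finset.sum_add_distrib]
  rw [show ∑ i ∈ Finset.range (R+1), k * (M.choose i * k^i)
      = ∑ i ∈ Finset.range (R+1), M.choose i * k^(i+1) from
    Finset.sum_congr rfl fun i _ => by ring]
  simp only [Nat.choose_zero_right, pow_zero, mul_one, one_mul]
  omega

lemma sum_choose_le (M R k : ℕ) :
    ∑ i ∈ Finset.range (R+1), M.choose i * k^i ≤ (k+1)^M := by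
  have h1 : ∑ i ∈ Finset.range (R+1), M.choose i * k^i
      ≤ ∑ i ∈ Finset.range (M+R+1), M.choose i * k^i := by
    apply Finset.sum_le_sum_of_subset
    exact Finset.range_subset_range.mpr (by omega)
  have h2 : ∑ i ∈ Finset.range (M+R+1), M.choose i * k^i
      = ∑ i ∈ Finset.range (M+1), M.choose i * k^i := by
    symm
    apply Finset.sum_subset (Finset.range_subset_range.mpr (by omega))
    intro i hi hni
    rw [Finset.mem_range] at hi hni
    rw [Nat.choose_eq_zero_of_lt (by omega)]
    ring
  have h3 : (k+1)^M = ∑ i ∈ Finset.range (M+1), M.choose i * k^i := by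
    rw [add_pow]
    refine Finset.sum_congr rfl fun i _ => by push_cast; ring
  rw [h3]
  omega

/-- cardinality of a Hamming ball. -/
lemma card_hammingBall (q : ℕ) :
    ∀ (N R : ℕ) (c : Fin N → Fin q),
      (univ.filter fun e : Fin N → Fin q => hammingDist c e ≤ R).card
        = ∑ i ∈ Finset.range (R+1), N.choose i * (q-1)^i := by
  intro N
  induction N with
  | zero =>
    intro R c
    have h1 : (univ.filter fun e : Fin 0 → Fin q => hammingDist c e ≤ R) = univ := by
      apply Finset.filter_true_of_mem
      intro e _
      have : hammingDist c e = 0 := by simp [hammingDist]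
      omega
    have h2 : ∑ i ∈ Finset.range (R+1), (0:ℕ).choose i * (q-1)^i = 1 := by
      rw [Finset.sum_eq_single 0]
      · simp
      · intro i _ h0
        rw [Nat.choose_eq_zero_of_lt (by omega)]; ring
      · intro h; exact absurd (Finset.mem_range.mpr (by omega)) h
    rw [h1, h2, Finset.card_univ]
    exact Fintype.card_unique
  | succ N ihN =>
    intro R c
    rw [card_filter_cons N (fun e => hammingDist c e ≤ R)]
    have hterm : ∀ a : Fin q,
        (univ.filter fun e : Fin N → Fin q => hammingDist c (Fin.cons a e) ≤ R)
          = (univ.filter fun e : Fin N → Fin q =>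
              (if c 0 = a then 0 else 1) + hammingDist (Fin.tail c) e ≤ R) := by
      intro a
      have hda : ∀ e : Fin N → Fin q, hammingDist c (Fin.cons a e)
          = (if c 0 = a then 0 else 1) + hammingDist (Fin.tail c) e := by
        intro e
        nth_rewrite 1 [← Fin.cons_self_tail c]
        rw [hammingDist_cons]
      apply Finset.filter_congr
      intro e _
      rw [hda e]
    match R with
    | 0 =>
      -- radius zero: ball is a singleton
      have hsingle : ∀ a : Fin q,
          (univ.filter fun e : Fin N → Fin q => hammingDist c (Fin.cons a e) ≤ 0).card
            = if c 0 = a then 1 else 0 := by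
        intro a
        rw [hterm a]
        by_cases h : c 0 = a
        · have heq : (univ.filter fun e : Fin N → Fin q =>
              (if c 0 = a then 0 else 1) + hammingDist (Fin.tail c) e ≤ 0)
              = {Fin.tail c} := by
            ext e
            simp only [Finset.mem_filter, Finset.mem_univ, true_and, Finset.mem_singleton,
              h, if_pos, Nat.zero_add, Nat.le_zero, hammingDist_eq_zero]
            exact ⟨fun hh => hh.symm, fun hh => hh.symm⟩
          rw [heq, Finset.card_singleton, if_pos h]
        · rw [if_neg h, if_neg h]
          convert Finset.card_empty
          apply Finset.filter_false_of_mem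
          intro e _
          omega
      rw [Finset.sum_congr rfl (fun a _ => hsingle a)]
      simp
    | (r+1) =>
      rw [← Finset.sum_erase_add _ _ (Finset.mem_univ (c 0))]
      have hc0 : (univ.filter fun e : Fin N → Fin q =>
          hammingDist c (Fin.cons (c 0) e) ≤ r+1).card
          = ∑ i ∈ Finset.range (r+2), N.choose i * (q-1)^i := by
        rw [hterm (c 0), if_pos rfl]
        have : (univ.filter fun e : Fin N → Fin q =>
            0 + hammingDist (Fin.tail c) e ≤ r+1)
            = (univ.filter fun e : Fin N → Fin q => hammingDist (Fin.tail c) e ≤ r+1) := by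
          apply Finset.filter_congr
          intro e _
          constructor <;> omega
        rw [this]
        exact ihN (r+1) (Fin.tail c)
      have herase : ∀ a ∈ (univ : Finset (Fin q)).erase (c 0),
          (univ.filter fun e : Fin N → Fin q => hammingDist c (Fin.cons a e) ≤ r+1).card
            = ∑ i ∈ Finset.range (r+1), N.choose i * (q-1)^i := by
        intro a ha
        have hne : ¬ (c 0 = a) := fun h => (Finset.mem_erase.mp ha).1 h.symm
        rw [hterm a, if_neg hne]
        have : (univ.filter fun e : Fin N → Fin q =>
            1 + hammingDist (Fin.tail c) e ≤ r+1)
            = (univ.filter fun e : Fin N → Fin q => hammingDist (Fin.tail c) e ≤ r) := by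
          apply Finset.filter_congr
          intro e _
          constructor <;> omega
        rw [this]
        exact ihN r (Fin.tail c)
      rw [Finset.sum_congr rfl herase, Finset.sum_const, hc0,
        Finset.card_erase_of_mem (Finset.mem_univ _), Finset.card_univ, Fintype.card_fin,
        smul_eq_mul]
      rw [pascal_sum N r (q-1)]
      ring

/-- Main lower bound on the size of the insertion-substitution ball. -/
lemma main_lb (q : ℕ) (hq : 1 ≤ q) :
    ∀ (m : ℕ), ∀ (n t p : ℕ), m = n + t → ∀ x : Fin n → Fin q,
      ∑ i ∈ Finset.range (t+p+1), m.choose i * (q-1)^i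
        ≤ (univ.filter (BallP q p (m := m) x)).card := by
  intro m
  induction m using Nat.strong_induction_on with
  | _ m ih =>
    intro n t p hm x
    rcases n with _ | n'
    · -- n = 0 : the ball is everything
      subst hm
      have hall : (univ : Finset (Fin (0+t) → Fin q)).filter (BallP q p x) = univ := by
        apply Finset.filter_true_of_mem
        intro y _
        refine ⟨fun i => i.elim0, fun a => a.elim0, ?_⟩
        have : hammingDist x (y ∘ fun i : Fin 0 => i.elim0) = 0 := by
          simp [hammingDist]
        omega
      rw [hall, Finset.card_univ, Fintype.card_fun, Fintype.card_fin, Fintype.card_fin]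
      have h := sum_choose_le (0+t) (t+p) (q-1)
      rwa [show q - 1 + 1 = q from by omega] at h
    · rcases t with _ | t'
      · -- t = 0 : the ball contains the Hamming ball of radius p
        subst hm
        have hsub : (univ.filter fun y : Fin (n'+1+0) → Fin q => hammingDist x y ≤ p)
            ⊆ (univ.filter (BallP q p x)) := by
          apply filter_sub_filter
          intro y hy
          exact ⟨fun i => i, fun a b h => h, hy⟩
        refine le_trans (le_of_eq ?_) (Finset.card_le_card hsub)
        have h0 : (0:ℕ)+p+1 = p+1 := by omega
        rw [h0]
        exact (card_hammingBall q (n'+1+0) p x).symm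
      · -- n and t both positive: decompose by the first symbol
        obtain ⟨M, rfl⟩ : ∃ M, m = M + 1 := ⟨n' + 1 + t', by omega⟩
        have hM1 : M = n' + (t' + 1) := by omega
        have hM2 : M = (n' + 1) + t' := by omega
        rw [card_filter_cons M (BallP q p x)]
        rw [← Finset.sum_erase_add _ _ (Finset.mem_univ (x 0))]
        have hx0 : ∑ i ∈ Finset.range ((t'+1) + p + 1), M.choose i * (q-1)^i
            ≤ (univ.filter fun y : Fin M → Fin q => BallP q p x (Fin.cons (x 0) y)).card := by
          refine le_trans (ih M (by omega) n' (t'+1) p hM1 (Fin.tail x)) ?_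
          exact Finset.card_le_card
            (filter_sub_filter (fun y hy => ballP_cons_match hy))
        rcases p with _ | p''
        · -- p = 0 : other classes via insertion
          have hN2 : ∀ a ∈ (univ : Finset (Fin q)).erase (x 0),
              ∑ i ∈ Finset.range (t' + 0 + 1), M.choose i * (q-1)^i
                ≤ (univ.filter fun y : Fin M → Fin q => BallP q 0 x (Fin.cons a y)).card := by
            intro a _
            refine le_trans (ih M (by omega) (n'+1) t' 0 hM2 x) ?_
            exact Finset.card_le_card
              (filter_sub_filter (fun y hy => ballP_cons_ins a hy))
          have herase : (q-1) * ∑ i ∈ Finset.range (t' + 0 + 1), M.choose i * (q-1)^i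
              ≤ ∑ a ∈ (univ : Finset (Fin q)).erase (x 0),
                  (univ.filter fun y : Fin M → Fin q => BallP q 0 x (Fin.cons a y)).card := by
            have h := Finset.sum_le_sum hN2
            rwa [Finset.sum_const, Finset.card_erase_of_mem (Finset.mem_univ _),
              Finset.card_univ, Fintype.card_fin, smul_eq_mul] at h
          have hident : ∑ i ∈ Finset.range ((t'+1) + 0 + 1), (M+1).choose i * (q-1)^i
              = ∑ i ∈ Finset.range (t'+2), M.choose i * (q-1)^i
                + (q-1) * ∑ i ∈ Finset.range (t'+1), M.choose i * (q-1)^i :=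
            pascal_sum M t' (q-1)
          refine le_trans (le_of_eq hident) ?_
          rw [add_comm]
          exact add_le_add herase hx0
        · -- p = p'' + 1 : other classes via substitution
          have hN2 : ∀ a ∈ (univ : Finset (Fin q)).erase (x 0),
              ∑ i ∈ Finset.range ((t'+1) + p'' + 1), M.choose i * (q-1)^i
                ≤ (univ.filter fun y : Fin M → Fin q =>
                    BallP q (p''+1) x (Fin.cons a y)).card := by
            intro a _
            refine le_trans (ih M (by omega) n' (t'+1) p'' hM1 (Fin.tail x)) ?_
            exact Finset.card_le_card
              (filter_sub_filter (fun y hy => ballP_cons_sub a hy))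
          have herase : (q-1) * ∑ i ∈ Finset.range ((t'+1) + p'' + 1), M.choose i * (q-1)^i
              ≤ ∑ a ∈ (univ : Finset (Fin q)).erase (x 0),
                  (univ.filter fun y : Fin M → Fin q =>
                    BallP q (p''+1) x (Fin.cons a y)).card := by
            have h := Finset.sum_le_sum hN2
            rwa [Finset.sum_const, Finset.card_erase_of_mem (Finset.mem_univ _),
              Finset.card_univ, Fintype.card_fin, smul_eq_mul] at h
          have hident : ∑ i ∈ Finset.range ((t'+1) + (p''+1) + 1), (M+1).choose i * (q-1)^i
              = ∑ i ∈ Finset.range ((t'+1+p'') + 2), M.choose i * (q-1)^i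
                + (q-1) * ∑ i ∈ Finset.range ((t'+1+p'') + 1), M.choose i * (q-1)^i :=
            pascal_sum M (t'+1+p'') (q-1)
          refine le_trans (le_of_eq hident) ?_
          rw [add_comm]
          exact add_le_add herase hx0

lemma idsBall_eq (q p : ℕ) {n m : ℕ} (x : Fin n → Fin q) :
    (idsBall q 0 p x : Set (Fin m → Fin q)) = {y | BallP q p x y} := by
  ext z
  simp only [idsBall, Set.mem_setOf_eq]
  constructor
  · rintro ⟨S1, S2, h1, h2, hd⟩
    have hS1 : S1 = univ := Finset.eq_univ_of_card _ (by simpa using h1)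
    subst hS1
    have hu : (fun j : Fin n => j) = ⇑(Finset.univ.orderEmbOfFin h1) :=
      Finset.orderEmbOfFin_unique h1 (fun j => Finset.mem_univ j) strictMono_id
    have e1 : subseqOf x univ h1 = x := by
      funext i
      show x _ = x i
      rw [Finset.coe_orderIsoOfFin_apply, ← congrFun hu i]
    have e2 : subseqOf z S2 h2 = z ∘ fun k => (S2.orderEmbOfFin h2) k := by
      funext i
      show z _ = z _
      rw [Finset.coe_orderIsoOfFin_apply]
    rw [e1, e2] at hd
    exact ⟨fun k => S2.orderEmbOfFin h2 k,
      fun a b hab => (S2.orderEmbOfFin h2).strictMono hab, hd⟩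
  · rintro ⟨g, hg, hd⟩
    have h1u : (univ : Finset (Fin n)).card = n - 0 := by simp
    have h2 : (univ.map ⟨g, hg.injective⟩ : Finset (Fin m)).card = n - 0 := by simp
    refine ⟨univ, univ.map ⟨g, hg.injective⟩, h1u, h2, ?_⟩
    have hu : (fun j : Fin n => j) = ⇑(Finset.univ.orderEmbOfFin h1u) :=
      Finset.orderEmbOfFin_unique _ (fun j => Finset.mem_univ j) strictMono_id
    have e1 : subseqOf x univ h1u = x := by
      funext i
      show x _ = x i
      rw [Finset.coe_orderIsoOfFin_apply, ← congrFun hu i]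
    have hg2 : g = ⇑((univ.map ⟨g, hg.injective⟩).orderEmbOfFin h2) :=
      Finset.orderEmbOfFin_unique h2
        (fun i => Finset.mem_map.mpr ⟨i, Finset.mem_univ i, rfl⟩) hg
    have e2 : subseqOf z (univ.map ⟨g, hg.injective⟩) h2 = z ∘ g := by
      funext i
      show z _ = z _
      rw [Finset.coe_orderIsoOfFin_apply, ← congrFun hg2 i]
    rw [e1, e2]
    exact hd

lemma ballP_const_wt {q p n m t : ℕ} (c : Fin q) (hm : m = n + t) {z : Fin m → Fin q}
    (h : BallP q p (fun _ : Fin n => c) z) :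
    hammingDist (fun _ : Fin m => c) z ≤ t + p := by
  classical
  obtain ⟨g, hg, hd⟩ := h
  set S : Finset (Fin m) := univ.map ⟨g, hg.injective⟩ with hS
  have hcard : S.card = n := by simp [hS]
  have hsplit : (univ.filter fun j : Fin m => ¬ c = z j)
      ⊆ (S.filter fun j => ¬ c = z j) ∪ Sᶜ := by
    intro j hj
    by_cases hjS : j ∈ S
    · exact Finset.mem_union_left _
        (Finset.mem_filter.mpr ⟨hjS, (Finset.mem_filter.mp hj).2⟩)
    · exact Finset.mem_union_right _ (Finset.mem_compl.mpr hjS)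
  have h1 : (S.filter fun j => ¬ c = z j).card ≤ p := by
    have hmap : (S.filter fun j => ¬ c = z j)
        = (univ.filter fun k : Fin n => ¬ c = z (g k)).map ⟨g, hg.injective⟩ := by
      rw [hS, Finset.filter_map]
      rfl
    rw [hmap, Finset.card_map]
    exact le_trans (le_of_eq rfl) hd
  have h2 : Sᶜ.card = t := by
    rw [Finset.card_compl, hcard, Fintype.card_fin]
    omega
  have hle : hammingDist (fun _ : Fin m => c) z
      ≤ (S.filter fun j => ¬ c = z j).card + Sᶜ.card :=
    le_trans (Finset.card_le_card hsplit) (Finset.card_union_le _ _)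
  omega

/-- an injection from `B_{t,0,p}(0^n)` into `B_{t,0,p}(x)`,
and the resulting lower bound on the ball size. -/
theorem idsBall_ins_sub_injection (n q t p : ℕ) (hq : 1 ≤ q) (hpn : p < n)
    (x : Fin n → Fin q) :
    (∃ f : (idsBall q 0 p (fun _ : Fin n => (⟨0, hq⟩ : Fin q)) :
              Set (Fin (n + t) → Fin q)) →
            (idsBall q 0 p x : Set (Fin (n + t) → Fin q)),
        Function.Injective f) ∧
      (idsBall q 0 p x : Set (Fin (n + t) → Fin q)).ncard ≥
        ∑ i ∈ Finset.range (t + p + 1), (n + t).choose i * (q - 1) ^ i := by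
  classical
  set c0 : Fin q := ⟨0, hq⟩ with hc0
  have hx := main_lb q hq (n+t) n t p rfl x
  have h0 : ((univ : Finset (Fin (n+t) → Fin q)).filter (BallP q p (fun _ : Fin n => c0))).card
      ≤ ∑ i ∈ Finset.range (t+p+1), (n+t).choose i * (q-1)^i := by
    have hsub : ((univ : Finset (Fin (n+t) → Fin q)).filter (BallP q p (fun _ : Fin n => c0)))
        ⊆ (univ.filter fun z : Fin (n+t) → Fin q =>
            hammingDist (fun _ : Fin (n+t) => c0) z ≤ t + p) :=
      filter_sub_filter (fun z hz => ballP_const_wt c0 rfl hz)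
    refine le_trans (Finset.card_le_card hsub) (le_of_eq ?_)
    exact card_hammingBall q (n+t) (t+p) _
  have hsx : (idsBall q 0 p x : Set (Fin (n+t) → Fin q)) = {y | BallP q p x y} :=
    idsBall_eq q p x
  have hs0 : (idsBall q 0 p (fun _ : Fin n => c0) : Set (Fin (n+t) → Fin q))
      = {y | BallP q p (fun _ : Fin n => c0) y} := idsBall_eq q p (fun _ : Fin n => c0)
  have hcard0 : Fintype.card {y : Fin (n+t) → Fin q // BallP q p (fun _ : Fin n => c0) y}
      = ((univ : Finset (Fin (n+t) → Fin q)).filter (BallP q p (fun _ : Fin n => c0))).card :=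
    Fintype.card_subtype _
  have hcardx : Fintype.card {y : Fin (n+t) → Fin q // BallP q p x y}
      = ((univ : Finset (Fin (n+t) → Fin q)).filter (BallP q p x)).card :=
    Fintype.card_subtype _
  constructor
  · have hle : Fintype.card {y : Fin (n+t) → Fin q // BallP q p (fun _ : Fin n => c0) y}
        ≤ Fintype.card {y : Fin (n+t) → Fin q // BallP q p x y} := by
      rw [hcard0, hcardx]
      exact le_trans h0 hx
    obtain ⟨f⟩ := Function.Embedding.nonempty_of_card_le hle
    have e0 : (idsBall q 0 p (fun _ : Fin n => c0) : Set (Fin (n+t) → Fin q))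
        ≃ {y : Fin (n+t) → Fin q // BallP q p (fun _ : Fin n => c0) y} := by
      rw [hs0]
      exact Equiv.refl _
    have ex : {y : Fin (n+t) → Fin q // BallP q p x y}
        ≃ (idsBall q 0 p x : Set (Fin (n+t) → Fin q)) := by
      rw [hsx]
      exact Equiv.refl _
    exact ⟨fun z => ex (f (e0 z)),
      fun a b hab => e0.injective (f.injective (ex.injective hab))⟩
  · have hn : (idsBall q 0 p x : Set (Fin (n+t) → Fin q)).ncard
        = ((univ : Finset (Fin (n+t) → Fin q)).filter (BallP q p x)).card := by
      rw [hsx, ← Nat.card_coe_set_eq, Nat.card_eq_fintype_card]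
      exact hcardx
    rw [hn]
    exact hx
end

section
/- For all non-negative integers n, q, t, p with q ≥ 1, t ≥ 1, 1 ≤ p < n, and every sequence x ∈ A_q^n with more than one run, there exists z ∈ B_{t,0,p}(x) such that z_i ≠ x_i for every i ∈ {1,...,p} and the suffix x_{p+1} x_{p+2} ⋯ x_n is not a subsequence of z_{p+1} z_{p+2} ⋯ z_{n+t}. -/
def finFlip {q : ℕ} (hq : 1 ≤ q) (a : Fin q) : Fin q :=
  ⟨(a.val + 1) % q, Nat.mod_lt _ hq⟩

lemma finFlip_ne {q : ℕ} (hq : 2 ≤ q) {h1 : 1 ≤ q} (a : Fin q) : finFlip h1 a ≠ a := by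
  intro h
  have := congrArg Fin.val h
  simp only [finFlip] at this
  have ha := a.isLt
  rcases Nat.lt_or_ge (a.val + 1) q with h2 | h2
  · rw [Nat.mod_eq_of_lt h2] at this; omega
  · have h3 : a.val + 1 = q := by omega
    rw [h3, Nat.mod_self] at this; omega

lemma strictMono_val_le {a b : ℕ} {f : Fin a → Fin b} (hf : StrictMono f) :
    ∀ j : Fin a, j.val ≤ (f j).val := by
  intro j
  induction' hm : j.val with m ih generalizing j
  · omega
  · have hma : m < a := by omega
    have h1 := ih ⟨m, hma⟩ rfl
    have h2 : f ⟨m, hma⟩ < f j := hf (by simp [Fin.lt_def, hm])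
    rw [Fin.lt_def] at h2
    omega

def gmap {n t : ℕ} (ht : 1 ≤ t) (k : ℕ) : Fin n → Fin (n + t) :=
  fun i => if i.val < k then ⟨i.val, by have := i.isLt; omega⟩
           else ⟨i.val + 1, by have := i.isLt; omega⟩

lemma gmap_val {n t : ℕ} (ht : 1 ≤ t) (k : ℕ) (i : Fin n) :
    (gmap ht k i).val = if i.val < k then i.val else i.val + 1 := by
  unfold gmap; split_ifs <;> rfl

lemma gmap_strictMono {n t : ℕ} (ht : 1 ≤ t) (k : ℕ) : StrictMono (gmap (n := n) ht k) := by
  intro a b hab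
  have hab' : a.val < b.val := hab
  rw [Fin.lt_def, gmap_val, gmap_val]
  split_ifs <;> omega

lemma card_filter_val_lt {n : ℕ} (m : ℕ) (hm : m ≤ n) :
    (Finset.univ.filter (fun i : Fin n => i.val < m)).card = m := by
  have : Finset.univ.filter (fun i : Fin n => i.val < m)
      = Finset.map (Fin.castLEEmb hm) Finset.univ := by
    ext i
    simp only [Finset.mem_filter, Finset.mem_univ, true_and, Finset.mem_map]
    constructor
    · intro hlt
      exact ⟨⟨i.val, hlt⟩, Fin.ext rfl⟩
    · rintro ⟨a, rfl⟩
      exact a.isLt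
  rw [this, Finset.card_map, Finset.card_univ, Fintype.card_fin]

lemma mem_idsBall_of {q p n t : ℕ} (x : Fin n → Fin q) (z : Fin (n + t) → Fin q)
    (g : Fin n → Fin (n + t)) (hg : StrictMono g)
    (hcard : (Finset.univ.filter (fun i : Fin n => x i ≠ z (g i))).card ≤ p) :
    z ∈ (idsBall q 0 p x : Set (Fin (n + t) → Fin q)) := by
  show ∃ (S1 : Finset (Fin n)) (S2 : Finset (Fin (n + t)))
      (h1 : S1.card = n - 0) (h2 : S2.card = n - 0),
      hammingDist (subseqOf x S1 h1) (subseqOf z S2 h2) ≤ p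
  simp only [Nat.sub_zero]
  have h1 : (Finset.univ : Finset (Fin n)).card = n := by simp
  have h2 : (Finset.univ.image g).card = n := by
    rw [Finset.card_image_of_injective _ hg.injective]; simp
  refine ⟨Finset.univ, Finset.univ.image g, h1, h2, ?_⟩
  have e1 : subseqOf x Finset.univ h1 = x := by
    funext i
    show x _ = _
    congr 1
    have huniq : (fun j : Fin n => j) = Finset.univ.orderEmbOfFin h1 :=
      Finset.orderEmbOfFin_unique h1 (fun _ => Finset.mem_univ _) (fun a b hab => hab)
    rw [Finset.coe_orderIsoOfFin_apply, ← huniq]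
  have e2 : subseqOf z (Finset.univ.image g) h2 = fun i => z (g i) := by
    funext i
    show z _ = _
    congr 1
    have huniq : g = (Finset.univ.image g).orderEmbOfFin h2 :=
      Finset.orderEmbOfFin_unique h2 (fun a => Finset.mem_image_of_mem _ (Finset.mem_univ _))
        (fun a b hab => hg hab)
    rw [Finset.coe_orderIsoOfFin_apply, ← huniq]
  rw [e1, e2]
  exact le_trans (le_of_eq rfl) hcard

def zfA {q : ℕ} (hq : 1 ≤ q) (n p : ℕ) (X : ℕ → Fin q) : ℕ → Fin q := fun m =>
  if m < p then finFlip hq (X m)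
  else if m ≤ n - 1 then X (m - 1)
  else finFlip hq (X (n - 1))

lemma zfA_1 {q : ℕ} (hq : 1 ≤ q) (n p : ℕ) (X : ℕ → Fin q) {m : ℕ} (hm : m < p) :
    zfA hq n p X m = finFlip hq (X m) := if_pos hm

lemma zfA_2 {q : ℕ} (hq : 1 ≤ q) (n p : ℕ) (X : ℕ → Fin q) {m : ℕ}
    (hm1 : ¬ m < p) (hm2 : m ≤ n - 1) : zfA hq n p X m = X (m - 1) := by
  unfold zfA; rw [if_neg hm1, if_pos hm2]

lemma zfA_3 {q : ℕ} (hq : 1 ≤ q) (n p : ℕ) (X : ℕ → Fin q) {m : ℕ}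
    (hm1 : ¬ m < p) (hm2 : ¬ m ≤ n - 1) : zfA hq n p X m = finFlip hq (X (n - 1)) := by
  unfold zfA; rw [if_neg hm1, if_neg hm2]


def zfB {q : ℕ} (hq : 1 ≤ q) (n p k : ℕ) (X : ℕ → Fin q) : ℕ → Fin q := fun m =>
  if m < k then finFlip hq (X m)
  else if m = k then X (n - 1)
  else if m = k + 1 then X k
  else if m ≤ p - 1 then finFlip hq (X (n - 1))
  else if m ≤ n - 2 then X (n - 1)
  else finFlip hq (X (n - 1))

lemma zfB_1 {q : ℕ} (hq : 1 ≤ q) (n p k : ℕ) (X : ℕ → Fin q) {m : ℕ} (h1 : m < k) :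
    zfB hq n p k X m = finFlip hq (X m) := if_pos h1

lemma zfB_2 {q : ℕ} (hq : 1 ≤ q) (n p k : ℕ) (X : ℕ → Fin q) :
    zfB hq n p k X k = X (n - 1) := by
  unfold zfB; rw [if_neg (by omega), if_pos rfl]

lemma zfB_3 {q : ℕ} (hq : 1 ≤ q) (n p k : ℕ) (X : ℕ → Fin q) :
    zfB hq n p k X (k + 1) = X k := by
  unfold zfB; rw [if_neg (by omega), if_neg (by omega), if_pos rfl]

lemma zfB_4 {q : ℕ} (hq : 1 ≤ q) (n p k : ℕ) (X : ℕ → Fin q) {m : ℕ}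
    (h1 : k + 2 ≤ m) (h2 : m ≤ p - 1) :
    zfB hq n p k X m = finFlip hq (X (n - 1)) := by
  unfold zfB; rw [if_neg (by omega), if_neg (by omega), if_neg (by omega), if_pos h2]

lemma zfB_5 {q : ℕ} (hq : 1 ≤ q) (n p k : ℕ) (X : ℕ → Fin q) {m : ℕ}
    (h1 : k + 2 ≤ m) (h2 : ¬ m ≤ p - 1) (h3 : m ≤ n - 2) :
    zfB hq n p k X m = X (n - 1) := by
  unfold zfB; rw [if_neg (by omega), if_neg (by omega), if_neg (by omega), if_neg h2, if_pos h3]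

lemma zfB_6 {q : ℕ} (hq : 1 ≤ q) (n p k : ℕ) (X : ℕ → Fin q) {m : ℕ}
    (h1 : k + 2 ≤ m) (h2 : ¬ m ≤ p - 1) (h3 : ¬ m ≤ n - 2) :
    zfB hq n p k X m = finFlip hq (X (n - 1)) := by
  unfold zfB; rw [if_neg (by omega), if_neg (by omega), if_neg (by omega), if_neg h2, if_neg h3]

/-- there is `z ∈ B_{t,0,p}(x)` differing from `x` on the first
`p` positions such that `x_{[p+1,n]}` is not a subsequence of
`z_{[p+1,n+t]}`. -/
theorem exists_no_preimage_elem (n q t p : ℕ) (hq : 1 ≤ q) (ht : 1 ≤ t) (hp : 1 ≤ p)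
    (hpn : p < n) (x : Fin n → Fin q) (hx : ∃ i j, x i ≠ x j) :
    ∃ z ∈ (idsBall q 0 p x : Set (Fin (n + t) → Fin q)),
      (∀ i : ℕ, ∀ hi : i < p, z ⟨i, by omega⟩ ≠ x ⟨i, by omega⟩) ∧
      ¬ ∃ (S : Finset (Fin (n + t - p))) (h : S.card = n - p),
          subseqOf (fun j : Fin (n + t - p) =>
              z ⟨p + j.val, by have := j.isLt; omega⟩) S h =
            (fun j : Fin (n - p) => x ⟨p + j.val, by have := j.isLt; omega⟩) := by
  have hq2 : 2 ≤ q := by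
    obtain ⟨i, j, hij⟩ := hx
    have h1 := (x i).isLt
    have h2 := (x j).isLt
    by_contra hcon
    exact hij (Fin.ext (by omega))
  set X : ℕ → Fin q := fun m => if h : m < n then x ⟨m, h⟩ else x ⟨n - 1, by omega⟩ with hXdef
  have hX : ∀ (m : ℕ) (hm : m < n), X m = x ⟨m, hm⟩ := fun m hm => dif_pos hm
  by_cases hconst : ∀ i : Fin n, p - 1 ≤ i.val → x i = X (n - 1)
  · -- Case B : the region x_{p-1..n-1} is constant equal to X (n-1)
    obtain ⟨i1, j1, hne⟩ := hx
    have hex : ∃ i : Fin n, x i ≠ X (n - 1) := by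
      by_cases h : x i1 = X (n - 1)
      · exact ⟨j1, fun hh => hne (by rw [h, hh])⟩
      · exact ⟨i1, h⟩
    have hSS : (Finset.univ.filter (fun i : Fin n => x i ≠ X (n - 1))).Nonempty := by
      obtain ⟨i, hi⟩ := hex
      exact ⟨i, by simp [hi]⟩
    set kF : Fin n := (Finset.univ.filter (fun i : Fin n => x i ≠ X (n - 1))).max' hSS
      with hkFdef
    have hk1 : x kF ≠ X (n - 1) :=
      (Finset.mem_filter.1 (Finset.max'_mem _ hSS)).2
    have hkmax : ∀ j : Fin n, kF.val < j.val → x j = X (n - 1) := by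
      intro j hj
      by_contra hcon
      have hmem : j ∈ Finset.univ.filter (fun i : Fin n => x i ≠ X (n - 1)) := by
        simp [hcon]
      have := Finset.le_max' _ j hmem
      rw [Fin.le_def, ← hkFdef] at this
      omega
    set k := kF.val with hkdef
    have hkn := kF.isLt
    have hkp : k + 2 ≤ p := by
      by_contra hcon
      exact hk1 (hconst kF (by omega))
    have hXk : X k = x kF := by rw [hX k hkn]
    have hXc : ∀ m, k < m → m < n → X m = X (n - 1) := by
      intro m h1 h2
      rw [hX m h2]
      exact hkmax ⟨m, h2⟩ h1
    set zf := zfB hq n p k X with hzfdef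
    set z : Fin (n + t) → Fin q := fun j => zf j.val with hzdef
    set g : Fin n → Fin (n + t) := gmap ht k with hgdef
    have hmatch1 : ∀ i : Fin n, i.val = k → x i = z (g i) := by
      intro i hik
      show x i = zf (g i).val
      rw [hgdef, gmap_val, if_neg (by omega), hik]
      rw [hzfdef, zfB_3 hq n p k X, hXk]
      congr 1
      exact Fin.ext hik
    have hmatch2 : ∀ i : Fin n, p - 1 ≤ i.val → i.val ≤ n - 3 → x i = z (g i) := by
      intro i h1 h2
      have hin := i.isLt
      show x i = zf (g i).val
      rw [hgdef, gmap_val, if_neg (by omega)]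
      rw [hzfdef, zfB_5 hq n p k X (by omega) (by omega) (by omega)]
      rw [← hXc i.val (by omega) hin, hX i.val hin]
    refine ⟨z, mem_idsBall_of x z g (by rw [hgdef]; exact gmap_strictMono ht _) ?_, ?_, ?_⟩
    · -- cardinality bound
      have hk_mem : (⟨k, hkn⟩ : Fin n) ∈ Finset.univ.filter (fun i : Fin n => i.val < p - 1) := by
        simp only [Finset.mem_filter, Finset.mem_univ, true_and]
        omega
      have hsub : Finset.univ.filter (fun i : Fin n => x i ≠ z (g i)) ⊆
          insert ⟨n - 2, by omega⟩ (insert ⟨n - 1, by omega⟩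
            ((Finset.univ.filter (fun i : Fin n => i.val < p - 1)).erase ⟨k, hkn⟩)) := by
        intro i hi
        simp only [Finset.mem_filter, Finset.mem_univ, true_and] at hi
        simp only [Finset.mem_insert, Finset.mem_erase, Finset.mem_filter, Finset.mem_univ,
          true_and]
        by_contra hcon
        push_neg at hcon
        obtain ⟨hne2, hne1, herase⟩ := hcon
        have hv2 : i.val ≠ n - 2 := fun h => hne2 (Fin.ext h)
        have hv1 : i.val ≠ n - 1 := fun h => hne1 (Fin.ext h)
        by_cases hik : i.val = k
        · exact hi (hmatch1 i hik)
        · have hge : p - 1 ≤ i.val :=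
            herase (fun hh => hik (congrArg Fin.val hh))
          have hin := i.isLt
          exact hi (hmatch2 i hge (by omega))
      calc (Finset.univ.filter (fun i : Fin n => x i ≠ z (g i))).card
          ≤ _ := Finset.card_le_card hsub
        _ ≤ (insert (⟨n - 1, by omega⟩ : Fin n)
              ((Finset.univ.filter (fun i : Fin n => i.val < p - 1)).erase ⟨k, hkn⟩)).card + 1 :=
            Finset.card_insert_le _ _
        _ ≤ ((Finset.univ.filter (fun i : Fin n => i.val < p - 1)).erase ⟨k, hkn⟩).card + 1 + 1 :=
            by have := Finset.card_insert_le (⟨n - 1, by omega⟩ : Fin n)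
                 ((Finset.univ.filter (fun i : Fin n => i.val < p - 1)).erase ⟨k, hkn⟩)
               omega
        _ ≤ p := by
            rw [Finset.card_erase_of_mem hk_mem, card_filter_val_lt (p - 1) (by omega)]
            omega
    · -- prefix differs
      intro i hi
      have hin : i < n := by omega
      show zf i ≠ x ⟨i, by omega⟩
      intro hh
      have hh' : zf i = X i := hh.trans (hX i hin).symm
      rcases Nat.lt_or_ge i k with h1 | h1
      · have hz1 : zf i = finFlip hq (X i) := by
          rw [hzfdef]; exact zfB_1 hq n p k X h1
        exact finFlip_ne hq2 _ (hz1.symm.trans hh')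
      rcases Nat.eq_or_lt_of_le h1 with h2 | h2
      · have hz2 : zf i = X (n - 1) := by
          rw [hzfdef, ← h2]
          exact zfB_2 hq n p k X
        have hxi : X i = x kF := by
          rw [hX i hin]
          exact congrArg x (Fin.ext (show i = kF.val by omega))
        exact hk1 ((hxi.symm.trans hh'.symm).trans hz2)
      rcases Nat.eq_or_lt_of_le h2 with h3 | h3
      · have e : i = k + 1 := by omega
        have hz3 : zf i = X k := by
          rw [hzfdef, e]; exact zfB_3 hq n p k X
        have hxi : X i = X (n - 1) := hXc i (by omega) hin
        exact hk1 ((hXk.symm.trans hz3.symm).trans (hh'.trans hxi))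
      · have hz4 : zf i = finFlip hq (X (n - 1)) := by
          rw [hzfdef]; exact zfB_4 hq n p k X (by omega) (by omega)
        have hxi : X i = X (n - 1) := hXc i (by omega) hin
        exact finFlip_ne hq2 _ (hz4.symm.trans (hh'.trans hxi))
    · -- suffix not a subsequence
      rintro ⟨S, h, heq⟩
      set f := S.orderEmbOfFin h with hfdef
      have hval : ∀ j : Fin (n - p), zf (p + (f j).val) = X (p + j.val) := by
        intro j
        have hc := congrFun heq j
        simp only [subseqOf, Finset.coe_orderIsoOfFin_apply] at hc
        rw [hX (p + j.val) (by have := j.isLt; omega)]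
        exact hc
      have hj0lt : n - p - 1 < n - p := by omega
      have hv := hval ⟨n - p - 1, hj0lt⟩
      have hle := strictMono_val_le f.strictMono ⟨n - p - 1, hj0lt⟩
      simp only at hle
      rw [hzfdef, zfB_6 hq n p k X (by omega) (by omega) (by omega)] at hv
      rw [hXc (p + (n - p - 1)) (by omega) (by omega)] at hv
      exact finFlip_ne hq2 _ hv
  · -- Case A : the region x_{p-1..n-1} is not constant
    push_neg at hconst
    obtain ⟨iw, hiw1, hiw2⟩ := hconst
    set zf := zfA hq n p X with hzfdef
    set z : Fin (n + t) → Fin q := fun j => zf j.val with hzdef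
    set g : Fin n → Fin (n + t) := gmap ht (p - 1) with hgdef
    have hmatch : ∀ i : Fin n, p - 1 ≤ i.val → i.val ≠ n - 1 → x i = z (g i) := by
      intro i h1 h2
      have hin := i.isLt
      show x i = zf (g i).val
      rw [hgdef, gmap_val, if_neg (by omega)]
      rw [hzfdef, zfA_2 hq n p X (by omega) (by omega)]
      have e : i.val + 1 - 1 = i.val := by omega
      rw [e, hX i.val i.isLt]
    refine ⟨z, mem_idsBall_of x z g (by rw [hgdef]; exact gmap_strictMono ht _) ?_, ?_, ?_⟩
    · -- cardinality bound
      have hsub : Finset.univ.filter (fun i : Fin n => x i ≠ z (g i)) ⊆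
          insert ⟨n - 1, by omega⟩ (Finset.univ.filter (fun i : Fin n => i.val < p - 1)) := by
        intro i hi
        simp only [Finset.mem_filter, Finset.mem_univ, true_and] at hi
        simp only [Finset.mem_insert, Finset.mem_filter, Finset.mem_univ, true_and]
        by_contra hcon
        push_neg at hcon
        obtain ⟨hne, hlt⟩ := hcon
        exact hi (hmatch i hlt (fun h => hne (Fin.ext h)))
      calc (Finset.univ.filter (fun i : Fin n => x i ≠ z (g i))).card
          ≤ _ := Finset.card_le_card hsub
        _ ≤ (Finset.univ.filter (fun i : Fin n => i.val < p - 1)).card + 1 :=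
            Finset.card_insert_le _ _
        _ ≤ p := by rw [card_filter_val_lt (p - 1) (by omega)]; omega
    · -- prefix differs
      intro i hi
      show zf i ≠ x ⟨i, by omega⟩
      rw [hzfdef, zfA_1 hq n p X hi, ← hX i (by omega)]
      exact finFlip_ne hq2 _
    · -- suffix not a subsequence
      rintro ⟨S, h, heq⟩
      set f := S.orderEmbOfFin h with hfdef
      have hval : ∀ j : Fin (n - p), zf (p + (f j).val) = X (p + j.val) := by
        intro j
        have hc := congrFun heq j
        simp only [subseqOf, Finset.coe_orderIsoOfFin_apply] at hc
        rw [hX (p + j.val) (by have := j.isLt; omega)]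
        exact hc
      have hnp : 1 ≤ n - p := by omega
      have hj0lt : n - p - 1 < n - p := by omega
      set j0 : Fin (n - p) := ⟨n - p - 1, hj0lt⟩ with hj0def
      have hfj0 : (f j0).val = n - p - 1 := by
        have hle := strictMono_val_le f.strictMono j0
        have hv := hval j0
        by_contra hcon
        have hgt : ¬ p + (f j0).val ≤ n - 1 := by
          simp only [hj0def] at hle hcon ⊢
          omega
        rw [hzfdef, zfA_3 hq n p X (by omega) hgt] at hv
        have : p + j0.val = n - 1 := by simp only [hj0def]; omega
        rw [this] at hv
        exact finFlip_ne hq2 _ hv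
      have hbound : ∀ j : Fin (n - p), (f j).val ≤ n - p - 1 := by
        intro j
        have : f j ≤ f j0 := f.monotone (by rw [Fin.le_def]; simp only [hj0def]; omega)
        rw [Fin.le_def, hfj0] at this
        exact this
      set f' : Fin (n - p) → Fin (n - p) := fun j => ⟨(f j).val, by have := hbound j; omega⟩
        with hf'def
      have hf'mono : StrictMono f' := by
        intro a b hab
        have := f.strictMono hab
        rw [Fin.lt_def] at this ⊢
        exact this
      have hf'surj : Function.Surjective f' :=
        Finite.surjective_of_injective hf'mono.injective
      haveI : WellFoundedLT (Fin (n - p)) := inferInstance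
      have hf'id : f' = id := by
        apply (hf'mono.range_inj strictMono_id).1
        rw [Set.range_id, Set.range_eq_univ]
        exact hf'surj
      have hfval : ∀ j : Fin (n - p), (f j).val = j.val := by
        intro j
        have := congrFun hf'id j
        have := congrArg Fin.val this
        exact this
      have hstep : ∀ m, p ≤ m → m ≤ n - 1 → X (m - 1) = X m := by
        intro m h1 h2
        have hjlt : m - p < n - p := by omega
        have hv := hval ⟨m - p, hjlt⟩
        rw [hfval ⟨m - p, hjlt⟩] at hv
        have e : p + (m - p) = m := by omega
        simp only [e] at hv
        rw [hzfdef, zfA_2 hq n p X (by omega) h2] at hv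
        exact hv
      have hall : ∀ d, d ≤ n - p → X (n - 1 - d) = X (n - 1) := by
        intro d
        induction d with
        | zero => intro _; rfl
        | succ d ih =>
          intro hd
          have h1 := ih (by omega)
          have h2 := hstep (n - 1 - d) (by omega) (by omega)
          have e : n - 1 - (d + 1) = n - 1 - d - 1 := by omega
          rw [e, h2, h1]
      have hiwn := iw.isLt
      have hfin := hall (n - 1 - iw.val) (by omega)
      have e : n - 1 - (n - 1 - iw.val) = iw.val := by omega
      rw [e, hX iw.val iw.isLt] at hfin
      exact hiw2 hfin
end
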